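/- arXiv:1804.07896 — 8 statements merged into one kernel-verified Lean document; each statement's English description precedes it below -/
import Mathlib

section
/- Fix 0 < α < 1. Let C be a standard Cauchy random variable and set C_α := -cos(απ) + sin(απ)·C. Then P(C_α > 0) = α, and the conditional distribution of log(C_α) given the event {C_α > 0} is absolutely continuous with respect to Lebesgue measure on ℝ, with density f_α(s) = sin(απ) / (2πα·(cos(απ) + cosh(s))) for s ∈ ℝ. -/
open MeasureTheory ProbabilityTheory Real Set

/-- The standard Cauchy distribution on `ℝ`: the probability measure with density
`c ↦ 1 / (π * (1 + c²))` with respect to Lebesgue measure. -/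
noncomputable def cauchyMeasure : Measure ℝ :=
  MeasureTheory.volume.withDensity fun c => ENNReal.ofReal (1 / (Real.pi * (1 + c ^ 2)))

lemma cauchy_Ioi (a : ℝ) :
    _root_.cauchyMeasure (Set.Ioi a) = ENNReal.ofReal (π⁻¹ * (π / 2 - Real.arctan a)) := by
  have hrw : ∀ x : ℝ, 1 / (π * (1 + x ^ 2)) = π⁻¹ * (1 + x ^ 2)⁻¹ := by
    intro x
    rw [one_div, mul_inv]
  rw [_root_.cauchyMeasure, withDensity_apply _ measurableSet_Ioi,
    ← ofReal_integral_eq_lintegral_ofReal]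
  · simp_rw [hrw, integral_const_mul, integral_Ioi_inv_one_add_sq]
  · simp_rw [hrw]
    exact (integrable_inv_one_add_sq.const_mul _).integrableOn
  · filter_upwards with x
    positivity

theorem lintegral_image_eq_lintegral_abs_deriv_mul {s : Set ℝ} {f f' : ℝ → ℝ}
    (hs : MeasurableSet s) (hf' : ∀ x ∈ s, HasDerivWithinAt f (f' x) s x)
    (hf : Set.InjOn f s) (g : ℝ → ENNReal) :
    ∫⁻ x in f '' s, g x = ∫⁻ x in s, ENNReal.ofReal |f' x| * g (f x) := by
  simpa only [ContinuousLinearMap.det_toSpanSingleton] using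
    lintegral_image_eq_lintegral_abs_det_fderiv_mul volume hs
      (fun x hx => (hf' x hx).hasFDerivWithinAt) hf g

/-- Talacko–Zolotarev: for `0 < α < 1` and `C_α := -cos(απ) + sin(απ)·C` with `C` standard
Cauchy, `P(C_α > 0) = α` and the conditional law of `log C_α` given `{C_α > 0}` has density
`s ↦ sin(απ) / (2πα (cos(απ) + cosh s))`. -/
theorem stmt0 {Ω : Type*} [MeasurableSpace Ω] (μ : Measure Ω) [IsProbabilityMeasure μ]
    (α : ℝ) (hα0 : 0 < α) (hα1 : α < 1)
    (C : Ω → ℝ) (hCmeas : Measurable C) (hClaw : Measure.map C μ = _root_.cauchyMeasure)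
    (Cα : Ω → ℝ)
    (hCα : ∀ ω, Cα ω = -Real.cos (α * Real.pi) + Real.sin (α * Real.pi) * C ω) :
    μ {ω | 0 < Cα ω} = ENNReal.ofReal α ∧
      ∀ B : Set ℝ, MeasurableSet B →
        μ ({ω | Real.log (Cα ω) ∈ B} ∩ {ω | 0 < Cα ω}) / μ {ω | 0 < Cα ω} =
          ∫⁻ s in B, ENNReal.ofReal
            (Real.sin (α * Real.pi) /
              (2 * Real.pi * α * (Real.cos (α * Real.pi) + Real.cosh s))) := by
  set θ := α * Real.pi with hθdef
  have hπ : (0:ℝ) < π := Real.pi_pos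
  have hθ0 : 0 < θ := by positivity
  have hθπ : θ < π := by
    rw [hθdef]
    nlinarith
  have hsθ : 0 < Real.sin θ := Real.sin_pos_of_pos_of_lt_pi hθ0 hθπ
  have hcθ : -1 < Real.cos θ := by
    have := Real.cos_lt_cos_of_nonneg_of_le_pi hθ0.le le_rfl hθπ
    simpa [Real.cos_pi] using this
  set sθ := Real.sin θ
  set cθ := Real.cos θ
  -- Part 1
  have hset1 : {ω | 0 < Cα ω} = C ⁻¹' (Set.Ioi (cθ / sθ)) := by
    ext ω
    simp only [Set.mem_setOf_eq, Set.mem_preimage, Set.mem_Ioi, hCα ω]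
    rw [div_lt_iff₀ hsθ]
    constructor <;> intro h <;> nlinarith
  have harctan : Real.arctan (cθ / sθ) = π / 2 - θ := by
    have h1 : cθ / sθ = Real.tan (π / 2 - θ) := by
      rw [Real.tan_pi_div_two_sub]
      rw [Real.tan_eq_sin_div_cos, inv_div]
    rw [h1, Real.arctan_tan] <;> linarith
  have hpart1 : μ {ω | 0 < Cα ω} = ENNReal.ofReal α := by
    rw [hset1, ← Measure.map_apply hCmeas measurableSet_Ioi, hClaw, cauchy_Ioi, harctan]
    congr 1
    field_simp [hθdef]
    rw [hθdef]
    ring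
  refine ⟨hpart1, fun B hB => ?_⟩
  -- Part 2
  set φ : ℝ → ℝ := fun s => (Real.exp s + cθ) / sθ with hφdef
  have hφinj : Function.Injective φ := by
    intro x y h
    simp only [hφdef] at h
    field_simp at h
    exact Real.exp_injective (add_right_cancel h)
  have hφderiv : ∀ x ∈ B, HasDerivWithinAt φ (Real.exp x / sθ) B x := by
    intro x _
    exact (((Real.hasDerivAt_exp x).add_const cθ).div_const sθ).hasDerivWithinAt
  have hφcont : Continuous φ := by
    continuity
  have hT : MeasurableSet (φ '' B) :=
    hB.image_of_continuousOn_injOn hφcont.continuousOn (hφinj.injOn)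
  have hset2 : {ω | Real.log (Cα ω) ∈ B} ∩ {ω | 0 < Cα ω} = C ⁻¹' (φ '' B) := by
    ext ω
    simp only [Set.mem_inter_iff, Set.mem_setOf_eq, Set.mem_preimage, Set.mem_image, hCα ω]
    constructor
    · rintro ⟨hlog, hpos⟩
      refine ⟨Real.log (-cθ + sθ * C ω), hlog, ?_⟩
      simp only [hφdef]
      rw [Real.exp_log hpos]
      field_simp
      ring
    · rintro ⟨s, hsB, hs⟩
      have hval : -cθ + sθ * C ω = Real.exp s := by
        rw [← hs]
        simp only [hφdef]
        field_simp
        ring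
      rw [hval, Real.log_exp]
      exact ⟨hsB, Real.exp_pos s⟩
  have hchθ : ∀ s : ℝ, 0 < cθ + Real.cosh s := by
    intro s
    have := Real.one_le_cosh s
    linarith
  have hpoint : ∀ s : ℝ,
      ENNReal.ofReal |Real.exp s / sθ| * ENNReal.ofReal (1 / (π * (1 + (φ s) ^ 2))) =
        ENNReal.ofReal α * ENNReal.ofReal (sθ / (2 * π * α * (cθ + Real.cosh s))) := by
    intro s
    rw [← ENNReal.ofReal_mul (abs_nonneg _), ← ENNReal.ofReal_mul hα0.le]
    congr 1
    have hes : (0:ℝ) < Real.exp s := Real.exp_pos s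
    have hch := hchθ s
    rw [abs_of_pos (by positivity)]
    have hkey : 1 + (φ s) ^ 2 = 2 * Real.exp s * (cθ + Real.cosh s) / sθ ^ 2 := by
      have h1 : sθ ^ 2 + cθ ^ 2 = 1 := Real.sin_sq_add_cos_sq θ
      simp only [hφdef]
      rw [Real.cosh_eq, Real.exp_neg]
      field_simp
      linear_combination h1
    rw [hkey]
    field_simp
  have hmeas_f : Measurable fun s => ENNReal.ofReal (sθ / (2 * π * α * (cθ + Real.cosh s))) := by
    apply Measurable.ennreal_ofReal
    fun_prop
  calc μ ({ω | Real.log (Cα ω) ∈ B} ∩ {ω | 0 < Cα ω}) / μ {ω | 0 < Cα ω}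
      = _root_.cauchyMeasure (φ '' B) / ENNReal.ofReal α := by
        rw [hset2, hpart1, ← Measure.map_apply hCmeas hT, hClaw]
    _ = (∫⁻ x in φ '' B, ENNReal.ofReal (1 / (π * (1 + x ^ 2)))) / ENNReal.ofReal α := by
        rw [_root_.cauchyMeasure, withDensity_apply _ hT]
    _ = (∫⁻ s in B, ENNReal.ofReal α *
          ENNReal.ofReal (sθ / (2 * π * α * (cθ + Real.cosh s)))) / ENNReal.ofReal α := by
        rw [_root_.lintegral_image_eq_lintegral_abs_deriv_mul hB hφderiv hφinj.injOn]
        congr 1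
        exact lintegral_congr fun s => hpoint s
    _ = ∫⁻ s in B, ENNReal.ofReal (sθ / (2 * π * α * (cθ + Real.cosh s))) := by
        rw [lintegral_const_mul _ hmeas_f,
          mul_div_assoc,
          ENNReal.mul_div_cancel (by simp [hα0]) ENNReal.ofReal_ne_top]
end

section
/- Let θ > 0, a ∈ ℝ, d ≥ 1, and let X and Y be random vectors with values in ℝ^d. Let γ be a Gamma(θ)-distributed random variable independent of X, and let γ' be a Gamma(θ)-distributed random variable independent of Y. Then γ^a·X and γ'^a·Y have the same distribution if and only if X and Y have the same distribution. -/
open MeasureTheory ProbabilityTheory Real Set Filter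
open scoped ENNReal NNReal

namespace GammaCancel


/-- integrability of a.e.-bounded functions on a finite measure -/
lemma integrable_of_bdd {α : Type*} [MeasurableSpace α] {μ : Measure α} [IsFiniteMeasure μ]
    {h : α → ℝ} (hm : AEStronglyMeasurable h μ) {C : ℝ} (hb : ∀ᵐ s ∂μ, |h s| ≤ C) :
    Integrable h μ :=
  Integrable.mono' (integrable_const C) hm (by simpa [Real.norm_eq_abs] using hb)

lemma measurable_gammaPDF (θ r : ℝ) : Measurable (gammaPDF θ r) :=
  (measurable_gammaPDFReal θ r).ennreal_ofReal

/-- a.e. positivity under the gamma measure -/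
lemma ae_gamma_pos (θ : ℝ) : ∀ᵐ s ∂(gammaMeasure θ 1), 0 < s := by
  rw [ae_iff]
  have : {s : ℝ | ¬ 0 < s} = Iic 0 := by ext s; simp
  rw [this, gammaMeasure, withDensity_apply _ measurableSet_Iic,
    ← restrict_Iio_eq_restrict_Iic]
  exact lintegral_gammaPDF_of_nonpos le_rfl

/-- intervals around positive points have positive gamma measure -/
lemma gamma_pos_Ioo {θ : ℝ} (hθ : 0 < θ) {u v : ℝ} (hu : 0 < u) (huv : u < v) :
    0 < gammaMeasure θ 1 (Ioo u v) := by
  rw [gammaMeasure, withDensity_apply _ measurableSet_Ioo, pos_iff_ne_zero]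
  intro h0
  rw [lintegral_eq_zero_iff (measurable_gammaPDF θ 1)] at h0
  rw [Filter.EventuallyEq, ae_restrict_iff' measurableSet_Ioo] at h0
  rw [ae_iff] at h0
  have hsub : Ioo u v ⊆ {x | ¬ (x ∈ Ioo u v → gammaPDF θ 1 x = (0 : ℝ → ℝ≥0∞) x)} := by
    intro x hx
    simp only [mem_setOf_eq, Pi.zero_apply]
    intro hcon
    have := hcon hx
    rw [gammaPDF, ENNReal.ofReal_eq_zero] at this
    exact absurd this (not_le.mpr (gammaPDFReal_pos hθ one_pos (hu.trans hx.1)))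
  have := measure_mono_null hsub h0
  rw [Real.volume_Ioo] at this
  exact absurd this (by simp [huv, sub_pos])

/-- expressing a gamma integral as a Lebesgue integral on `(0,∞)` -/
lemma gamma_integral_eq {θ : ℝ} (hθ : 0 < θ) (h : ℝ → ℝ) :
    ∫ s, h s ∂(gammaMeasure θ 1) = ∫ s in Ioi 0, h s * gammaPDFReal θ 1 s := by
  have hpdf : gammaPDF θ 1 = fun x => ((gammaPDFReal θ 1 x).toNNReal : ℝ≥0∞) := by
    funext x; rw [gammaPDF, ENNReal.ofReal]
  have hmeas : Measurable fun x => (gammaPDFReal θ 1 x).toNNReal :=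
    (measurable_gammaPDFReal θ 1).real_toNNReal
  rw [gammaMeasure, hpdf, integral_withDensity_eq_integral_smul hmeas h]
  have h1 : ∀ x : ℝ, (gammaPDFReal θ 1 x).toNNReal • h x = h x * gammaPDFReal θ 1 x := by
    intro x
    rw [NNReal.smul_def, smul_eq_mul, Real.coe_toNNReal _ (gammaPDFReal_nonneg hθ one_pos x),
      mul_comm]
  simp_rw [h1]
  rw [← integral_indicator measurableSet_Ioi]
  apply integral_congr_ae
  filter_upwards [compl_mem_ae_iff.mpr (Real.volume_singleton (a := 0))] with x hx
  rcases lt_trichotomy x 0 with h|h|h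
  · have : gammaPDFReal θ 1 x = 0 := by simp [gammaPDFReal, not_le.mpr h]
    simp [this, indicator, not_lt.mpr h.le, mem_Ioi]
  · exact absurd h hx
  · simp [indicator, mem_Ioi, h]

lemma laplace_eq_zero {θ : ℝ} {g : ℝ → ℝ}
    (hscale : ∀ ρ : ℝ, 0 < ρ → ∫ s, g (ρ * s) ∂(gammaMeasure θ 1) = 0) (hθ : 0 < θ)
    {c : ℝ} (hc : 0 < c) :
    ∫ u in Ioi (0:ℝ), g u * gammaPDFReal θ 1 (c * u) = 0 := by
  have h1 := hscale c⁻¹ (inv_pos.mpr hc)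
  rw [gamma_integral_eq hθ] at h1
  have h2 := integral_comp_mul_left_Ioi (fun u => g u * gammaPDFReal θ 1 (c * u)) 0
    (inv_pos.mpr hc)
  simp only [mul_zero] at h2
  have h3 : (fun s => g (c⁻¹ * s) * gammaPDFReal θ 1 (c * (c⁻¹ * s)))
      = fun s => g (c⁻¹ * s) * gammaPDFReal θ 1 s := by
    funext s; rw [← mul_assoc, mul_inv_cancel₀ hc.ne', one_mul]
  rw [h3, h1] at h2
  have h4 : (c⁻¹)⁻¹ ≠ 0 := by simp [hc.ne']
  rcases smul_eq_zero.mp h2.symm with h | h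
  · exact absurd h h4
  · exact h

lemma moment_eq {θ : ℝ} (hθ : 0 < θ) {g : ℝ → ℝ}
    (hscale : ∀ ρ : ℝ, 0 < ρ → ∫ s, g (ρ * s) ∂(gammaMeasure θ 1) = 0) (n : ℕ) :
    ∫ s, g s * Real.exp (-s) ^ n ∂(gammaMeasure θ 1) = 0 := by
  rw [gamma_integral_eq hθ]
  have key : ∀ s ∈ Ioi (0:ℝ), (fun s => g s * Real.exp (-s) ^ n * gammaPDFReal θ 1 s) s
      = (fun s => ((n:ℝ)+1) ^ (1-θ) * (g s * gammaPDFReal θ 1 (((n:ℝ)+1) * s))) s := by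
    intro s hs
    have hs' : (0:ℝ) < s := hs
    have hn : (0:ℝ) < (n:ℝ) + 1 := by positivity
    simp only [gammaPDFReal, if_pos hs'.le, if_pos (by positivity : (0:ℝ) ≤ ((n:ℝ)+1) * s)]
    have e1 : (((n:ℝ)+1) * s) ^ (θ-1) = ((n:ℝ)+1) ^ (θ-1) * s ^ (θ-1) :=
      Real.mul_rpow hn.le hs'.le
    have e2 : Real.exp (-(1 * (((n:ℝ)+1) * s))) = Real.exp (-s) ^ n * Real.exp (-(1 * s)) := by
      rw [← Real.exp_nat_mul, ← Real.exp_add]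
      ring_nf
    have e3 : ((n:ℝ)+1) ^ (1-θ) * (((n:ℝ)+1) ^ (θ-1)) = 1 := by
      rw [← Real.rpow_add hn]; norm_num
    rw [e1, e2]
    linear_combination (-(g s) * ((1:ℝ) ^ θ / Real.Gamma θ * s ^ (θ - 1) *
      (Real.exp (-s) ^ n * Real.exp (-(1 * s))))) * e3
  rw [setIntegral_congr_fun measurableSet_Ioi key, integral_const_mul,
    laplace_eq_zero hscale hθ (by positivity : (0:ℝ) < (n:ℝ)+1), mul_zero]

lemma exists_poly_near (f : ℝ → ℝ) (hf : Continuous f) {ε : ℝ} (hε : 0 < ε) :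
    ∃ q : Polynomial ℝ, ∀ t ∈ Icc (0:ℝ) 1, |f t - q.eval t| < ε := by
  let fc : C(Icc (0:ℝ) 1, ℝ) := ⟨fun t => f t, hf.comp continuous_subtype_val⟩
  have h1 : fc ∈ (polynomialFunctions (Icc (0:ℝ) 1)).topologicalClosure := by
    rw [polynomialFunctions_closure_eq_top]; trivial
  have h2 : fc ∈ closure ((polynomialFunctions (Icc (0:ℝ) 1)) : Set C(Icc (0:ℝ) 1, ℝ)) := h1
  rw [Metric.mem_closure_iff] at h2
  obtain ⟨p, hp, hd⟩ := h2 ε hε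
  rw [polynomialFunctions_coe] at hp
  obtain ⟨q, rfl⟩ := hp
  refine ⟨q, fun t ht => ?_⟩
  rw [ContinuousMap.dist_lt_iff hε] at hd
  have := hd ⟨t, ht⟩
  simpa [fc, Real.dist_eq, Polynomial.toContinuousMapOnAlgHom_apply,
    Polynomial.toContinuousMapOn, Polynomial.toContinuousMap] using this



lemma cont_int_eq_zero (hθ : 0 < θ)
    (hgm : AEStronglyMeasurable g (gammaMeasure θ 1)) (hgb : ∀ s, |g s| ≤ M)
    (hmom : ∀ n : ℕ, ∫ s, g s * Real.exp (-s) ^ n ∂(gammaMeasure θ 1) = 0)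
    (f : ℝ → ℝ) (hf : Continuous f) :
    ∫ s, g s * f (Real.exp (-s)) ∂(gammaMeasure θ 1) = 0 := by
  haveI : IsProbabilityMeasure (gammaMeasure θ 1) := isProbabilityMeasure_gammaMeasure hθ one_pos
  have hM0 : 0 ≤ M := (abs_nonneg _).trans (hgb 1)
  have hae : ∀ᵐ s ∂(gammaMeasure θ 1), Real.exp (-s) ∈ Icc (0:ℝ) 1 := by
    filter_upwards [ae_gamma_pos θ] with s hs
    exact ⟨(Real.exp_pos _).le, Real.exp_le_one_iff.mpr (by linarith)⟩
  -- integrability of g * h(exp(-·)) for h continuous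
  have hint : ∀ h : ℝ → ℝ, Continuous h →
      Integrable (fun s => g s * h (Real.exp (-s))) (gammaMeasure θ 1) := by
    intro h hh
    obtain ⟨K, hK⟩ := isCompact_Icc.exists_bound_of_continuousOn (hh.continuousOn (s := Icc 0 1))
    apply integrable_of_bdd (hgm.mul
      ((hh.comp (Real.continuous_exp.comp continuous_neg)).aestronglyMeasurable))
    filter_upwards [hae] with s hs
    calc |g s * h (Real.exp (-s))| = |g s| * |h (Real.exp (-s))| := abs_mul _ _
      _ ≤ M * K := by
          apply mul_le_mul (hgb s) _ (abs_nonneg _) hM0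
          simpa [Real.norm_eq_abs] using hK _ hs
  -- polynomial case
  have hpoly : ∀ q : Polynomial ℝ,
      ∫ s, g s * q.eval (Real.exp (-s)) ∂(gammaMeasure θ 1) = 0 := by
    intro q
    have hev : ∀ x : ℝ, q.eval x = ∑ i ∈ Finset.range (q.natDegree + 1), q.coeff i * x ^ i :=
      fun x => q.eval_eq_sum_range x
    simp_rw [hev, Finset.mul_sum]
    rw [integral_finset_sum]
    · apply Finset.sum_eq_zero
      intro i _
      have hcomm : (fun s => g s * (q.coeff i * Real.exp (-s) ^ i))
          = fun s => q.coeff i * (g s * Real.exp (-s) ^ i) := by funext s; ring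
      rw [hcomm, integral_const_mul, hmom i, mul_zero]
    · intro i _
      apply integrable_of_bdd (hgm.mul (((continuous_const.mul ((continuous_pow i).comp
        (Real.continuous_exp.comp continuous_neg)))).aestronglyMeasurable))
      filter_upwards [hae] with s hs
      simp only [Pi.mul_apply, Function.comp_apply]
      rw [abs_mul, abs_mul]
      have h1 : |Real.exp (-s) ^ i| ≤ 1 := by
        rw [abs_pow]
        apply pow_le_one₀ (abs_nonneg _)
        rw [abs_of_nonneg hs.1]; exact hs.2
      calc |g s| * (|q.coeff i| * |Real.exp (-s) ^ i|) ≤ M * (|q.coeff i| * 1) := by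
            apply mul_le_mul (hgb s) _ (by positivity) hM0
            exact mul_le_mul_of_nonneg_left h1 (abs_nonneg _)
        _ = M * |q.coeff i| := by ring
  -- approximation
  set A := ∫ s, g s * f (Real.exp (-s)) ∂(gammaMeasure θ 1) with hA
  have hbound : ∀ ε : ℝ, 0 < ε → |A| ≤ M * ε := by
    intro ε hε
    obtain ⟨q, hq⟩ := exists_poly_near f hf hε
    have hqc : Continuous fun t : ℝ => q.eval t := q.continuous
    have hsplit : A = (∫ s, g s * (f (Real.exp (-s)) - q.eval (Real.exp (-s)))
        ∂(gammaMeasure θ 1)) + ∫ s, g s * q.eval (Real.exp (-s)) ∂(gammaMeasure θ 1) := by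
      rw [← integral_add (show Integrable (fun s => g s * (f (Real.exp (-s)) - q.eval (Real.exp (-s)))) _ from hint _ (hf.sub hqc)) (hint _ hqc)]
      apply integral_congr_ae
      filter_upwards with s
      ring
    rw [hsplit, hpoly q, add_zero]
    calc |∫ s, g s * (f (Real.exp (-s)) - Polynomial.eval (Real.exp (-s)) q)
          ∂(gammaMeasure θ 1)|
        ≤ ∫ _s, M * ε ∂(gammaMeasure θ 1) := by
          rw [← Real.norm_eq_abs]
          apply norm_integral_le_of_norm_le (integrable_const (M * ε))
          filter_upwards [hae] with s hs
          rw [Real.norm_eq_abs, abs_mul]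
          apply mul_le_mul (hgb s) _ (abs_nonneg _) hM0
          exact le_of_lt (hq _ hs)
      _ = M * ε := by simp
  by_contra hA0
  have h1 : 0 < |A| := abs_pos.mpr hA0
  have h2 := hbound (|A| / (2 * (M + 1))) (by positivity)
  have hD : (0:ℝ) < 2 * (M + 1) := by positivity
  rw [show M * (|A| / (2 * (M + 1))) = M * |A| / (2 * (M + 1)) from
    (mul_div_assoc _ _ _).symm, le_div_iff₀ hD] at h2
  nlinarith [mul_nonneg hM0 (abs_nonneg A)]



lemma val_le_zero (hθ : 0 < θ)
    (hgm : AEStronglyMeasurable g (gammaMeasure θ 1)) (hgb : ∀ s, |g s| ≤ M)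
    (hgc : ContinuousAt g 1)
    (hcont : ∀ f : ℝ → ℝ, Continuous f →
      ∫ s, g s * f (Real.exp (-s)) ∂(gammaMeasure θ 1) = 0) :
    g 1 ≤ 0 := by
  haveI : IsProbabilityMeasure (gammaMeasure θ 1) := isProbabilityMeasure_gammaMeasure hθ one_pos
  by_contra hb
  push_neg at hb
  -- a neighborhood where g > g 1 / 2
  have hev : ∀ᶠ s in nhds 1, g s ∈ Ioi (g 1 / 2) :=
    hgc (Ioi_mem_nhds (half_lt_self hb))
  rw [Metric.eventually_nhds_iff] at hev
  obtain ⟨δ₀, hδ₀, hδ⟩ := hev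
  set δ : ℝ := min δ₀ (1/2) with hδdef
  have hδpos : 0 < δ := lt_min hδ₀ (by norm_num)
  have hδhalf : δ ≤ 1/2 := min_le_right _ _
  have hglarge : ∀ s : ℝ, |s - 1| < δ → g 1 / 2 < g s := by
    intro s hs
    exact hδ (by simpa [Real.dist_eq] using lt_of_lt_of_le hs (min_le_left _ _))
  -- the bump width
  set w : ℝ := min (Real.exp (-(1-δ)) - Real.exp (-1)) (Real.exp (-1) - Real.exp (-(1+δ)))
    with hwdef
  have hw : 0 < w := by
    apply lt_min <;> rw [sub_pos] <;> apply Real.exp_lt_exp.mpr <;> linarith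
  set f : ℝ → ℝ := fun t => max 0 (1 - |t - Real.exp (-1)| / w) with hfdef
  have hfc : Continuous f := by
    apply continuous_const.max
    exact continuous_const.sub (((continuous_id.sub continuous_const).abs).div_const w)
  have hf0 : ∀ t, 0 ≤ f t := fun t => le_max_left _ _
  have hf1 : ∀ t, f t ≤ 1 := by
    intro t
    apply max_le (by norm_num)
    have : 0 ≤ |t - Real.exp (-1)| / w := by positivity
    linarith
  -- if far, bump vanishes
  have hfar : ∀ s : ℝ, w ≤ |Real.exp (-s) - Real.exp (-1)| → f (Real.exp (-s)) = 0 := by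
    intro s hs
    apply max_eq_left
    rw [sub_nonpos]
    rw [le_div_iff₀ hw]
    linarith
  -- if bump positive then s close to 1
  have hclose : ∀ s : ℝ, |Real.exp (-s) - Real.exp (-1)| < w → 1 - δ < s ∧ s < 1 + δ := by
    intro s hs
    rw [abs_lt] at hs
    constructor
    · have h1 : Real.exp (-s) < Real.exp (-1) + w := by linarith [hs.2]
      have h2 : Real.exp (-1) + w ≤ Real.exp (-(1-δ)) := by
        have := min_le_left (Real.exp (-(1-δ)) - Real.exp (-1))
          (Real.exp (-1) - Real.exp (-(1+δ)))
        rw [← hwdef] at this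
        linarith
      have := Real.exp_lt_exp.mp (lt_of_lt_of_le h1 h2)
      linarith
    · have h1 : Real.exp (-1) - w < Real.exp (-s) := by linarith [hs.1]
      have h2 : Real.exp (-(1+δ)) ≤ Real.exp (-1) - w := by
        have := min_le_right (Real.exp (-(1-δ)) - Real.exp (-1))
          (Real.exp (-1) - Real.exp (-(1+δ)))
        rw [← hwdef] at this
        linarith
      have := Real.exp_lt_exp.mp (lt_of_le_of_lt h2 h1)
      linarith
  -- pointwise inequality
  have hpt : ∀ s : ℝ, g 1 / 2 * f (Real.exp (-s)) ≤ g s * f (Real.exp (-s)) := by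
    intro s
    rcases lt_or_ge |Real.exp (-s) - Real.exp (-1)| w with h | h
    · obtain ⟨h1, h2⟩ := hclose s h
      have : |s - 1| < δ := by rw [abs_lt]; constructor <;> linarith
      exact mul_le_mul_of_nonneg_right (le_of_lt (hglarge s this)) (hf0 _)
    · rw [hfar s h, mul_zero, mul_zero]
  -- integrability
  have hfm : AEStronglyMeasurable (fun s : ℝ => f (Real.exp (-s))) (gammaMeasure θ 1) :=
    (hfc.comp (Real.continuous_exp.comp continuous_neg)).aestronglyMeasurable
  have hint1 : Integrable (fun s => f (Real.exp (-s))) (gammaMeasure θ 1) := by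
    apply integrable_of_bdd hfm (C := 1)
    filter_upwards with s
    rw [abs_of_nonneg (hf0 _)]
    exact hf1 _
  have hint2 : Integrable (fun s => g s * f (Real.exp (-s))) (gammaMeasure θ 1) := by
    apply integrable_of_bdd (hgm.mul hfm) (C := M)
    filter_upwards with s
    simp only [Pi.mul_apply]
    rw [abs_mul]
    calc |g s| * |f (Real.exp (-s))| ≤ |g s| * 1 := by
          apply mul_le_mul_of_nonneg_left _ (abs_nonneg _)
          rw [abs_of_nonneg (hf0 _)]; exact hf1 _
      _ = |g s| := mul_one _
      _ ≤ M := hgb s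
  -- positivity of the bump integral
  have hsupp : 0 < ∫ s, f (Real.exp (-s)) ∂(gammaMeasure θ 1) := by
    rw [integral_pos_iff_support_of_nonneg (fun s => hf0 _) hint1]
    -- find an interval around 1 inside the support
    have hc : ContinuousAt (fun s : ℝ => |Real.exp (-s) - Real.exp (-1)|) 1 := by
      apply ContinuousAt.abs
      exact ((Real.continuous_exp.comp continuous_neg).continuousAt).sub continuousAt_const
    have hval : |Real.exp (-(1:ℝ)) - Real.exp (-1)| = 0 := by simp
    have hev2 : ∀ᶠ s in nhds (1:ℝ), |Real.exp (-s) - Real.exp (-1)| < w := by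
      have := hc (Iio_mem_nhds (show |Real.exp (-(1:ℝ)) - Real.exp (-1)| < w by rw [hval]; exact hw))
      exact this
    rw [Metric.eventually_nhds_iff] at hev2
    obtain ⟨δ₂, hδ₂, hball⟩ := hev2
    set r : ℝ := min δ₂ (1/2) with hrdef
    have hrpos : 0 < r := lt_min hδ₂ (by norm_num)
    have hsub : Ioo (1 - r) (1 + r) ⊆ Function.support fun s => f (Real.exp (-s)) := by
      intro s hs
      have hdist : dist s 1 < δ₂ := by
        rw [Real.dist_eq, abs_lt]
        obtain ⟨h1, h2⟩ := hs
        have := min_le_left δ₂ (1/2)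
        constructor <;> simp only [← hrdef] at * <;> linarith
      have hlt := hball hdist
      have hfpos : 0 < f (Real.exp (-s)) := by
        apply lt_of_lt_of_le _ (le_max_right _ _)
        rw [sub_pos, div_lt_one hw]
        exact hlt
      exact ne_of_gt hfpos
    calc (0:ℝ≥0∞) < gammaMeasure θ 1 (Ioo (1 - r) (1 + r)) := by
          apply gamma_pos_Ioo hθ
          · have := min_le_right δ₂ (1/2); simp only [← hrdef] at *; linarith
          · linarith
      _ ≤ gammaMeasure θ 1 (Function.support fun s => f (Real.exp (-s))) :=
          measure_mono hsub
  -- contradiction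
  have hzero := hcont f hfc
  have hmono : g 1 / 2 * ∫ s, f (Real.exp (-s)) ∂(gammaMeasure θ 1)
      ≤ ∫ s, g s * f (Real.exp (-s)) ∂(gammaMeasure θ 1) := by
    rw [← integral_const_mul]
    exact integral_mono (hint1.const_mul _) hint2 hpt
  have : 0 < g 1 / 2 * ∫ s, f (Real.exp (-s)) ∂(gammaMeasure θ 1) :=
    mul_pos (half_pos hb) hsupp
  linarith [hmono, hzero ▸ hmono]


lemma key {θ M : ℝ} {g : ℝ → ℝ} (hθ : 0 < θ)
    (hgm : AEStronglyMeasurable g (gammaMeasure θ 1)) (hgb : ∀ s, |g s| ≤ M)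
    (hgc : ContinuousAt g 1)
    (hscale : ∀ ρ : ℝ, 0 < ρ → ∫ s, g (ρ * s) ∂(gammaMeasure θ 1) = 0) :
    g 1 = 0 := by
  have h1 := val_le_zero hθ hgm hgb hgc (cont_int_eq_zero hθ hgm hgb (moment_eq hθ hscale))
  have hscale' : ∀ ρ : ℝ, 0 < ρ → ∫ s, -g (ρ * s) ∂(gammaMeasure θ 1) = 0 := by
    intro ρ hρ
    rw [integral_neg, hscale ρ hρ, neg_zero]
  have hgb' : ∀ s, |-g s| ≤ M := fun s => by rw [abs_neg]; exact hgb s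
  have h2 := val_le_zero hθ hgm.neg hgb' hgc.neg
    (cont_int_eq_zero hθ hgm.neg hgb' (moment_eq hθ hscale'))
  simp only [Pi.neg_apply, neg_le, neg_zero] at h2
  linarith

lemma map_smul_eq (θ a : ℝ) {Ω : Type*} [MeasurableSpace Ω] (μ : Measure Ω)
    [IsProbabilityMeasure μ]
    {d : ℕ} (X : Ω → Fin d → ℝ) (hX : Measurable X) (γ : Ω → ℝ) (hγ : Measurable γ)
    (hγlaw : Measure.map γ μ = gammaMeasure θ 1) (hindep : IndepFun γ X μ) :
    Measure.map (fun ω => γ ω ^ a • X ω) μ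
      = Measure.map (fun p : ℝ × (Fin d → ℝ) => p.1 ^ a • p.2)
          ((gammaMeasure θ 1).prod (Measure.map X μ)) := by
  have hT : Measurable (fun p : ℝ × (Fin d → ℝ) => p.1 ^ a • p.2) := by
    apply measurable_pi_lambda
    intro i
    exact ((measurable_fst.pow measurable_const)).mul ((measurable_pi_apply i).comp measurable_snd)
  have hpair : Measurable fun ω => (γ ω, X ω) := hγ.prodMk hX
  rw [← hγlaw,
    ← (indepFun_iff_map_prod_eq_prod_map_map hγ.aemeasurable hX.aemeasurable).mp hindep,
    Measure.map_map hT hpair]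
  rfl

end GammaCancel

/-- Cancellation of independent gamma variables: for `θ > 0`, `a ∈ ℝ`, random vectors
`X, Y` in `ℝ^d` and `Gamma(θ)` variables `γ ⫫ X`, `γ' ⫫ Y`, the laws of `γ^a • X` and
`γ'^a • Y` coincide iff the laws of `X` and `Y` coincide. -/
theorem stmt3 {Ω : Type*} [MeasurableSpace Ω] (μ : Measure Ω) [IsProbabilityMeasure μ]
    (θ : ℝ) (hθ : 0 < θ) (a : ℝ) (d : ℕ) (hd : 1 ≤ d)
    (X Y : Ω → Fin d → ℝ) (hX : Measurable X) (hY : Measurable Y)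
    (γ γ' : Ω → ℝ) (hγ : Measurable γ) (hγ' : Measurable γ')
    (hγlaw : Measure.map γ μ = gammaMeasure θ 1)
    (hγ'law : Measure.map γ' μ = gammaMeasure θ 1)
    (hindepX : IndepFun γ X μ) (hindepY : IndepFun γ' Y μ) :
    Measure.map (fun ω => γ ω ^ a • X ω) μ = Measure.map (fun ω => γ' ω ^ a • Y ω) μ ↔
      Measure.map X μ = Measure.map Y μ := by
  classical
  have hmapX := GammaCancel.map_smul_eq θ a μ X hX γ hγ hγlaw hindepX
  have hmapY := GammaCancel.map_smul_eq θ a μ Y hY γ' hγ' hγ'law hindepY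
  rw [hmapX, hmapY]
  haveI hκP : IsProbabilityMeasure (gammaMeasure θ 1) :=
    isProbabilityMeasure_gammaMeasure hθ one_pos
  haveI : IsProbabilityMeasure (Measure.map X μ) := Measure.isProbabilityMeasure_map hX.aemeasurable
  haveI : IsProbabilityMeasure (Measure.map Y μ) := Measure.isProbabilityMeasure_map hY.aemeasurable
  constructor
  swap
  · intro h
    rw [h]
  intro hMap
  set κ : Measure ℝ := gammaMeasure θ 1 with hκ
  set ν : Measure (Fin d → ℝ) := Measure.map X μ with hν
  set ν' : Measure (Fin d → ℝ) := Measure.map Y μ with hν'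
  have hT : Measurable (fun p : ℝ × (Fin d → ℝ) => p.1 ^ a • p.2) := by
    apply measurable_pi_lambda
    intro i
    exact ((measurable_fst.pow measurable_const)).mul
      ((measurable_pi_apply i).comp measurable_snd)
  rcases eq_or_ne a 0 with rfl | ha
  · have hsnd : (fun p : ℝ × (Fin d → ℝ) => p.1 ^ (0:ℝ) • p.2)
        = Prod.snd := by
      funext p
      rw [Real.rpow_zero, one_smul]
    rw [hsnd, Measure.map_snd_prod, Measure.map_snd_prod] at hMap
    simpa [measure_univ] using hMap
  · apply ext_of_forall_lintegral_eq_of_IsFiniteMeasure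
    intro f
    have hlip : LipschitzWith 1 ((↑) : ℝ≥0 → ℝ) :=
      LipschitzWith.of_dist_le_mul fun x y => by
        rw [NNReal.coe_one, one_mul, Real.dist_eq, NNReal.dist_eq]
    set fr : BoundedContinuousFunction (Fin d → ℝ) ℝ := f.comp _ hlip with hfr
    set F : (Fin d → ℝ) → ℝ := fun x => ((f x : ℝ)) with hF
    have hFc : Continuous F := NNReal.continuous_coe.comp f.continuous
    set C : ℝ := ‖fr‖ with hC
    have hFb : ∀ x, |F x| ≤ C := fun x => by
      have := fr.norm_coe_le_norm x; rw [Real.norm_eq_abs] at this; exact this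
    have hC0 : 0 ≤ C := norm_nonneg _
    suffices hgoal : ∫ x, F x ∂ν = ∫ x, F x ∂ν' by
      calc ∫⁻ x, (f x : ℝ≥0∞) ∂ν = ENNReal.ofReal (∫ x, F x ∂ν) :=
            lintegral_coe_eq_integral _ (fr.integrable ν)
        _ = ENNReal.ofReal (∫ x, F x ∂ν') := by rw [hgoal]
        _ = ∫⁻ x, (f x : ℝ≥0∞) ∂ν' := (lintegral_coe_eq_integral _ (fr.integrable ν')).symm
    -- set up the function g
    set g : ℝ → ℝ := fun s => (∫ x, F (s ^ a • x) ∂ν) - ∫ x, F (s ^ a • x) ∂ν' with hg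
    have hg1 : g 1 = (∫ x, F x ∂ν) - ∫ x, F x ∂ν' := by
      simp only [hg, Real.one_rpow, one_smul]
    -- strong measurability
    have hsmT : StronglyMeasurable (fun p : ℝ × (Fin d → ℝ) => F (p.1 ^ a • p.2)) :=
      (hFc.measurable.comp hT).stronglyMeasurable
    have hsm : ∀ m : Measure (Fin d → ℝ), [IsProbabilityMeasure m] →
        StronglyMeasurable (fun s : ℝ => ∫ x, F (s ^ a • x) ∂m) := by
      intro m _
      exact hsmT.integral_prod_right'
    -- bound
    have hIb : ∀ (m : Measure (Fin d → ℝ)) [IsProbabilityMeasure m], ∀ s : ℝ,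
        |∫ x, F (s ^ a • x) ∂m| ≤ C := by
      intro m _ s
      rw [← Real.norm_eq_abs]
      calc ‖∫ x, F (s ^ a • x) ∂m‖ ≤ ∫ _x, C ∂m := by
            apply norm_integral_le_of_norm_le (integrable_const C)
            filter_upwards with x
            rw [Real.norm_eq_abs]
            exact hFb _
        _ = C := by simp
    -- the fundamental identity
    have hkey : ∀ (m : Measure (Fin d → ℝ)) [IsProbabilityMeasure m], ∀ ρ : ℝ, 0 < ρ →
        ∫ s, (∫ x, F ((ρ * s) ^ a • x) ∂m) ∂κ
          = ∫ z, F (ρ ^ a • z)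
              ∂(Measure.map (fun p : ℝ × (Fin d → ℝ) => p.1 ^ a • p.2) (κ.prod m)) := by
      intro m _ ρ hρ
      have hasm : AEStronglyMeasurable (fun z : Fin d → ℝ => F (ρ ^ a • z))
          (Measure.map (fun p : ℝ × (Fin d → ℝ) => p.1 ^ a • p.2) (κ.prod m)) :=
        (hFc.comp (continuous_const_smul _)).aestronglyMeasurable
      rw [integral_map hT.aemeasurable hasm]
      have hint : Integrable
          (fun p : ℝ × (Fin d → ℝ) => F (ρ ^ a • (p.1 ^ a • p.2))) (κ.prod m) := by
        apply GammaCancel.integrable_of_bdd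
          ((hFc.comp (continuous_const_smul _)).measurable.comp hT).aestronglyMeasurable
          (C := C)
        filter_upwards with p
        exact hFb _
      rw [integral_prod _ hint]
      apply integral_congr_ae
      filter_upwards [GammaCancel.ae_gamma_pos θ] with s hs
      apply integral_congr_ae
      filter_upwards with x
      rw [smul_smul, ← Real.mul_rpow hρ.le hs.le]
    -- scaling hypothesis for g
    have hscale : ∀ ρ : ℝ, 0 < ρ → ∫ s, g (ρ * s) ∂κ = 0 := by
      intro ρ hρ
      have hi : ∀ (m : Measure (Fin d → ℝ)) [IsProbabilityMeasure m],
          Integrable (fun s => ∫ x, F ((ρ * s) ^ a • x) ∂m) κ := by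
        intro m _
        apply GammaCancel.integrable_of_bdd
          (((hsm m).comp_measurable (measurable_const_mul ρ)).aestronglyMeasurable) (C := C)
        filter_upwards with s
        exact hIb m _
      have : (fun s => g (ρ * s))
          = fun s => (∫ x, F ((ρ * s) ^ a • x) ∂ν) - ∫ x, F ((ρ * s) ^ a • x) ∂ν' := rfl
      rw [this, integral_sub (hi ν) (hi ν'), hkey ν ρ hρ, hkey ν' ρ hρ, hMap, sub_self]
    -- continuity of g at 1
    have hcont : ∀ (m : Measure (Fin d → ℝ)) [IsProbabilityMeasure m],
        ContinuousAt (fun s : ℝ => ∫ x, F (s ^ a • x) ∂m) 1 := by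
      intro m _
      apply continuousAt_of_dominated (bound := fun _ => C)
      · filter_upwards with s
        exact (hFc.comp (continuous_const_smul _)).aestronglyMeasurable
      · filter_upwards with s
        filter_upwards with x
        rw [Real.norm_eq_abs]
        exact hFb _
      · exact integrable_const C
      · filter_upwards with x
        apply hFc.continuousAt.comp
        exact (Real.continuousAt_rpow_const 1 a (Or.inl one_ne_zero)).smul continuousAt_const
    have hgz : g 1 = 0 := by
      apply GammaCancel.key hθ (M := 2 * C)
      · exact ((hsm ν).sub (hsm ν')).aestronglyMeasurable
      · intro s
        calc |(∫ x, F (s ^ a • x) ∂ν) - ∫ x, F (s ^ a • x) ∂ν'|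
            ≤ |∫ x, F (s ^ a • x) ∂ν| + |∫ x, F (s ^ a • x) ∂ν'| := abs_sub _ _
          _ ≤ C + C := add_le_add (hIb ν s) (hIb ν' s)
          _ = 2 * C := by ring
      · exact (hcont ν).sub (hcont ν')
      · exact hscale
    rw [hg1] at hgz
    linarith
end

section
/- Fix 0 < α < 1. Let T be a standard stable(α) random variable and let ε be a standard exponential random variable independent of T. Then the random variable (ε/T)^α has the standard exponential distribution. -/
open MeasureTheory ProbabilityTheory

open Set Filter in
lemma expMeasure_one_Iic (t : ℝ) :
    expMeasure 1 (Iic t) = ENNReal.ofReal (if 0 ≤ t then 1 - Real.exp (-t) else 0) := by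
  rw [expMeasure, gammaMeasure, withDensity_apply _ measurableSet_Iic]
  have h := lintegral_exponentialPDF_eq_antiDeriv one_pos t
  simp only [one_mul] at h
  exact h

/-- If `T` is standard stable(α), `0 < α < 1`, and `ε` is standard exponential independent
of `T`, then `(ε/T)^α` is standard exponential. -/
theorem stmt4 {Ω : Type*} [MeasurableSpace Ω] (μ : Measure Ω) [IsProbabilityMeasure μ]
    (α : ℝ) (hα0 : 0 < α) (hα1 : α < 1)
    (T : Ω → ℝ) (hTmeas : Measurable T) (hTnonneg : ∀ᵐ ω ∂μ, 0 ≤ T ω)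
    (hTlap : ∀ l : ℝ, 0 ≤ l → ∫ ω, Real.exp (-(l * T ω)) ∂μ = Real.exp (-(l ^ α)))
    (ε : Ω → ℝ) (hεmeas : Measurable ε) (hεlaw : Measure.map ε μ = expMeasure 1)
    (hindep : IndepFun ε T μ) :
    Measure.map (fun ω => (ε ω / T ω) ^ α) μ = expMeasure 1 := by
  have hαne : α ≠ 0 := hα0.ne'
  -- integrability of the Laplace integrand
  have hint : ∀ l : ℝ, 0 ≤ l → Integrable (fun ω => Real.exp (-(l * T ω))) μ := by
    intro l hl
    refine Integrable.mono' (integrable_const 1)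
      ((hTmeas.const_mul l).neg.exp.aestronglyMeasurable) ?_
    filter_upwards [hTnonneg] with ω hω
    rw [Real.norm_eq_abs, abs_of_pos (Real.exp_pos _)]
    exact Real.exp_le_one_iff.mpr (neg_nonpos.mpr (mul_nonneg hl hω))
  -- T > 0 a.e.
  have hT0 : ∀ᵐ ω ∂μ, 0 < T ω := by
    set A : Set Ω := {ω | T ω ≤ 0} with hAdef
    have hA : MeasurableSet A := hTmeas measurableSet_Iic
    have hle : ∀ n : ℕ, (μ A).toReal ≤ Real.exp (-((n : ℝ) ^ α)) := by
      intro n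
      have h1 : ∫ ω, A.indicator (fun _ => (1 : ℝ)) ω ∂μ = (μ A).toReal := by
        rw [integral_indicator_const _ hA]; simp [Measure.real]
      have h2 : ∫ ω, A.indicator (fun _ => (1 : ℝ)) ω ∂μ
          ≤ ∫ ω, Real.exp (-((n : ℝ) * T ω)) ∂μ := by
        refine integral_mono_ae ((integrable_const (1:ℝ)).indicator hA)
          (hint _ (Nat.cast_nonneg n)) ?_
        filter_upwards [hTnonneg] with ω hω
        by_cases hmem : ω ∈ A
        · have hT0' : T ω = 0 := le_antisymm hmem hω
          rw [Set.indicator_of_mem hmem, hT0', mul_zero, neg_zero, Real.exp_zero]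
        · rw [Set.indicator_of_notMem hmem]
          exact (Real.exp_pos _).le
      rw [← hTlap _ (Nat.cast_nonneg n), ← h1]
      exact h2
    have htend : Filter.Tendsto (fun n : ℕ => Real.exp (-((n : ℝ) ^ α))) Filter.atTop (nhds 0) := by
      refine Real.tendsto_exp_atBot.comp (Filter.tendsto_neg_atTop_atBot.comp ?_)
      exact (tendsto_rpow_atTop hα0).comp tendsto_natCast_atTop_atTop
    have h0 : (μ A).toReal ≤ 0 := ge_of_tendsto' htend hle
    have hA0 : μ A = 0 := by
      have := le_antisymm h0 ENNReal.toReal_nonneg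
      rcases ENNReal.toReal_eq_zero_iff _ |>.mp this with h | h
      · exact h
      · exact absurd h (measure_ne_top μ A)
    filter_upwards [measure_eq_zero_iff_ae_notMem.mp hA0] with ω hω
    exact lt_of_not_ge hω
  -- ε > 0 a.e.
  have hε0 : ∀ᵐ ω ∂μ, 0 < ε ω := by
    rw [ae_iff]
    have hset : {ω | ¬ 0 < ε ω} = ε ⁻¹' Set.Iic 0 := by ext ω; simp [not_lt]
    rw [hset, ← Measure.map_apply hεmeas measurableSet_Iic, hεlaw, expMeasure_one_Iic]
    simp
  -- key survival computation
  have hkey : ∀ s : ℝ, 0 ≤ s →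
      μ {ω | ε ω ≤ s * T ω} = ENNReal.ofReal (1 - Real.exp (-(s ^ α))) := by
    intro s hs
    have hmap : Measure.map (fun ω => (T ω, ε ω)) μ
        = (Measure.map T μ).prod (Measure.map ε μ) :=
      (indepFun_iff_map_prod_eq_prod_map_map hTmeas.aemeasurable
        hεmeas.aemeasurable).mp hindep.symm
    have hsetm : MeasurableSet {p : ℝ × ℝ | p.2 ≤ s * p.1} :=
      measurableSet_le measurable_snd (measurable_fst.const_mul s)
    have h1 : {ω | ε ω ≤ s * T ω}
        = (fun ω => (T ω, ε ω)) ⁻¹' {p : ℝ × ℝ | p.2 ≤ s * p.1} := rfl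
    rw [h1, ← Measure.map_apply (hTmeas.prodMk hεmeas) hsetm, hmap,
      Measure.prod_apply hsetm]
    have h2 : ∀ t : ℝ, (Measure.map ε μ) (Prod.mk t ⁻¹' {p : ℝ × ℝ | p.2 ≤ s * p.1})
        = ENNReal.ofReal (if 0 ≤ s * t then 1 - Real.exp (-(s * t)) else 0) := by
      intro t
      have : Prod.mk t ⁻¹' {p : ℝ × ℝ | p.2 ≤ s * p.1} = Set.Iic (s * t) := rfl
      rw [this, hεlaw, expMeasure_one_Iic]
    simp_rw [h2]
    have hg : Measurable fun t : ℝ =>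
        ENNReal.ofReal (if 0 ≤ s * t then 1 - Real.exp (-(s * t)) else 0) := by
      apply Measurable.ennreal_ofReal
      refine Measurable.ite (measurableSet_le measurable_const
        (measurable_id.const_mul s)) ?_ measurable_const
      exact measurable_const.sub ((measurable_id.const_mul s).neg.exp)
    rw [lintegral_map hg hTmeas]
    have hcong : (fun ω => ENNReal.ofReal
          (if 0 ≤ s * T ω then 1 - Real.exp (-(s * T ω)) else 0))
        =ᵐ[μ] fun ω => ENNReal.ofReal (1 - Real.exp (-(s * T ω))) := by
      filter_upwards [hTnonneg] with ω hω
      rw [if_pos (mul_nonneg hs hω)]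
    rw [lintegral_congr_ae hcong]
    have hint1 : Integrable (fun ω => 1 - Real.exp (-(s * T ω))) μ :=
      (integrable_const 1).sub (hint s hs)
    have hpos : 0 ≤ᵐ[μ] fun ω => 1 - Real.exp (-(s * T ω)) := by
      filter_upwards [hTnonneg] with ω hω
      exact sub_nonneg.mpr (Real.exp_le_one_iff.mpr (neg_nonpos.mpr (mul_nonneg hs hω)))
    rw [← ofReal_integral_eq_lintegral_ofReal hint1 hpos]
    congr 1
    rw [integral_sub (integrable_const 1) (hint s hs), hTlap s hs, integral_const]
    simp
  -- measurability of the target function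
  have hfmeas : Measurable fun ω => (ε ω / T ω) ^ α :=
    (Real.continuous_rpow_const hα0.le).measurable.comp (hεmeas.div hTmeas)
  haveI : IsProbabilityMeasure (expMeasure 1) := isProbabilityMeasure_expMeasure one_pos
  haveI : IsProbabilityMeasure (Measure.map (fun ω => (ε ω / T ω) ^ α) μ) :=
    Measure.isProbabilityMeasure_map hfmeas.aemeasurable
  refine Measure.ext_of_Iic _ _ fun t => ?_
  rw [Measure.map_apply hfmeas measurableSet_Iic, expMeasure_one_Iic]
  by_cases ht : 0 ≤ t
  · rw [if_pos ht]
    have hsetae : ((fun ω => (ε ω / T ω) ^ α) ⁻¹' Set.Iic t : Set Ω)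
        =ᵐ[μ] {ω | ε ω ≤ t ^ α⁻¹ * T ω} := by
      rw [Filter.eventuallyEq_set]
      filter_upwards [hT0, hε0] with ω hT hε
      simp only [Set.mem_preimage, Set.mem_Iic, Set.mem_setOf_eq]
      rw [← Real.le_rpow_inv_iff_of_pos (div_nonneg hε.le hT.le) ht hα0, div_le_iff₀ hT,
        mul_comm]
    rw [measure_congr hsetae, hkey _ (Real.rpow_nonneg ht _), Real.rpow_inv_rpow ht hαne]
  · rw [if_neg ht]
    rw [show ENNReal.ofReal 0 = 0 by simp]
    refine measure_eq_zero_iff_ae_notMem.mpr ?_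
    filter_upwards [hT0, hε0] with ω hT hε
    simp only [Set.mem_preimage, Set.mem_Iic, not_le]
    calc t < 0 := lt_of_not_ge ht
      _ ≤ (ε ω / T ω) ^ α := Real.rpow_nonneg (div_nonneg hε.le hT.le) _
end

section
/- Fix 0 < α < 1 and let T and T' be independent standard stable(α) random variables. Then for every λ ≥ 0, the Cauchy–Stieltjes transform of the ratio T/T' is E[(1 + λ·T/T')^{-1}] = (1 + λ^α)^{-1}. -/
open MeasureTheory ProbabilityTheory Real Set Filter

lemma aux_mul_exp_neg_le_one {u : ℝ} (hu : 0 ≤ u) : u * Real.exp (-u) ≤ 1 := by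
  rw [Real.exp_neg, mul_inv_le_iff₀ (Real.exp_pos u), one_mul]
  linarith [Real.add_one_le_exp u]

lemma aux_exp_integral {c b : ℝ} (hc : 0 ≤ c) (hb : 0 < b) :
    ∫⁻ t in Set.Ioi (0:ℝ), ENNReal.ofReal (c * Real.exp (-(t * b))) = ENNReal.ofReal (c / b) := by
  have hint : IntegrableOn (fun t : ℝ => c * Real.exp (-(t * b))) (Set.Ioi 0) := by
    have := (exp_neg_integrableOn_Ioi 0 hb).const_mul c
    simp [mul_comm, neg_mul] at this ⊢
    exact this
  rw [← ofReal_integral_eq_lintegral_ofReal hint]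
  · congr 1
    have h1 : ∫ t in Set.Ioi (0:ℝ), c * Real.exp (-(t * b))
        = c * ∫ t in Set.Ioi (0:ℝ), Real.exp (-(b * t)) := by
      rw [← integral_const_mul]
      congr 1; ext t; ring_nf
    rw [h1]
    have h2 := integral_comp_mul_left_Ioi (fun x => Real.exp (-x)) 0 hb
    simp only [mul_zero, integral_exp_neg_Ioi, neg_zero, Real.exp_zero, smul_eq_mul, mul_one] at h2
    rw [h2]
    ring
  · filter_upwards with t
    positivity

lemma aux_deriv {Ω : Type*} [MeasurableSpace Ω] (μ : Measure Ω) [IsProbabilityMeasure μ]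
    (α : ℝ) (hα0 : 0 < α) (T' : Ω → ℝ) (hT'meas : Measurable T')
    (hT'nonneg : ∀ᵐ ω ∂μ, 0 ≤ T' ω)
    (hT'lap : ∀ l : ℝ, 0 ≤ l → ∫ ω, Real.exp (-(l * T' ω)) ∂μ = Real.exp (-(l ^ α)))
    {t : ℝ} (ht : 0 < t) :
    Integrable (fun ω => T' ω * Real.exp (-(t * T' ω))) μ ∧
      ∫ ω, T' ω * Real.exp (-(t * T' ω)) ∂μ = α * t ^ (α - 1) * Real.exp (-(t ^ α)) := by
  have key := hasDerivAt_integral_of_dominated_loc_of_deriv_le (μ := μ)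
      (F := fun x ω => Real.exp (-(x * T' ω)))
      (F' := fun x ω => -(T' ω * Real.exp (-(x * T' ω))))
      (x₀ := t) (bound := fun _ => 2 / t) (Metric.ball_mem_nhds t (half_pos ht))
      (Filter.Eventually.of_forall fun x =>
        ((hT'meas.const_mul x).neg.exp).aestronglyMeasurable)
      ?_ ((hT'meas.mul (hT'meas.const_mul t).neg.exp).neg).aestronglyMeasurable ?_
      (integrable_const _) ?_
  · obtain ⟨hint, hD⟩ := key
    have heq : (fun x => Real.exp (-(x ^ α))) =ᶠ[nhds t]
        (fun x => ∫ ω, Real.exp (-(x * T' ω)) ∂μ) := by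
      filter_upwards [isOpen_Ioi.mem_nhds ht] with x hx
      exact (hT'lap x (le_of_lt hx)).symm
    have hψ : HasDerivAt (fun x => Real.exp (-(x ^ α)))
        (Real.exp (-(t ^ α)) * -(α * t ^ (α - 1))) t :=
      (Real.hasDerivAt_rpow_const (Or.inl ht.ne')).neg.exp
    have hD' : HasDerivAt (fun x => Real.exp (-(x ^ α)))
        (∫ ω, -(T' ω * Real.exp (-(t * T' ω))) ∂μ) t := hD.congr_of_eventuallyEq heq
    have huniq := hD'.unique hψ
    rw [integral_neg] at huniq
    constructor
    · have h2 : (fun ω => T' ω * Real.exp (-(t * T' ω)))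
          = -(fun ω => -(T' ω * Real.exp (-(t * T' ω)))) := by ext ω; simp
      rw [h2]; exact hint.neg
    · have : ∫ ω, T' ω * Real.exp (-(t * T' ω)) ∂μ
          = -(Real.exp (-(t ^ α)) * -(α * t ^ (α - 1))) := by linarith
      rw [this]; ring
  · -- Integrable (F t)
    refine (integrable_const (1:ℝ)).mono'
      ((hT'meas.const_mul t).neg.exp).aestronglyMeasurable ?_
    filter_upwards [hT'nonneg] with ω hω
    rw [Real.norm_eq_abs, abs_of_pos (Real.exp_pos _)]
    exact Real.exp_le_one_iff.mpr (by nlinarith)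
  · -- bound
    filter_upwards [hT'nonneg] with ω hω x hx
    rw [Metric.mem_ball, Real.dist_eq, abs_lt] at hx
    have hx2 : t / 2 < x := by linarith
    have h1 : T' ω * Real.exp (-(x * T' ω)) ≤ T' ω * Real.exp (-((t/2) * T' ω)) := by
      apply mul_le_mul_of_nonneg_left _ hω
      apply Real.exp_le_exp.mpr
      nlinarith
    have h2 : T' ω * Real.exp (-((t/2) * T' ω)) ≤ 2 / t := by
      have := aux_mul_exp_neg_le_one (u := (t/2) * T' ω) (by positivity)
      rw [le_div_iff₀ ht]
      nlinarith [Real.exp_pos (-((t/2) * T' ω))]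
    rw [norm_neg, Real.norm_eq_abs, abs_of_nonneg (by positivity)]
    linarith
  · -- differentiability
    filter_upwards with ω x _
    have h := ((hasDerivAt_mul_const (T' ω)).neg.exp (x := x))
    refine h.congr_deriv ?_; simp only [Pi.neg_apply]
    ring

open MeasureTheory ProbabilityTheory Real Set Filter

section
variable {Ω : Type*} [MeasurableSpace Ω] (μ : Measure Ω) [IsProbabilityMeasure μ]

lemma aux_int_exp (f : Ω → ℝ) (hf : Measurable f) (hnn : ∀ᵐ ω ∂μ, 0 ≤ f ω) (x : ℝ)
    (hx : 0 ≤ x) : Integrable (fun ω => Real.exp (-(x * f ω))) μ := by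
  refine (integrable_const (1:ℝ)).mono' ((hf.const_mul x).neg.exp).aestronglyMeasurable ?_
  filter_upwards [hnn] with ω hω
  rw [Real.norm_eq_abs, abs_of_pos (Real.exp_pos _)]
  exact Real.exp_le_one_iff.mpr (by nlinarith)

lemma aux_pos (α : ℝ) (hα0 : 0 < α) (T' : Ω → ℝ) (hT'meas : Measurable T')
    (hT'nonneg : ∀ᵐ ω ∂μ, 0 ≤ T' ω)
    (hT'lap : ∀ l : ℝ, 0 ≤ l → ∫ ω, Real.exp (-(l * T' ω)) ∂μ = Real.exp (-(l ^ α))) :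
    ∀ᵐ ω ∂μ, 0 < T' ω := by
  have hs : MeasurableSet {ω | T' ω = 0} := hT'meas (measurableSet_singleton 0)
  have hb : ∀ x : ℝ, 0 ≤ x → (μ {ω | T' ω = 0}).toReal ≤ Real.exp (-(x ^ α)) := by
    intro x hx
    rw [← measureReal_def, ← integral_indicator_one hs, ← hT'lap x hx]
    refine integral_mono_ae ((integrable_const 1).indicator hs)
      (aux_int_exp μ T' hT'meas hT'nonneg x hx) ?_
    filter_upwards [hT'nonneg] with ω hω
    by_cases h : T' ω = 0
    · simp [Set.indicator_of_mem, h]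
    · rw [Set.indicator_of_notMem (by simpa using h)]
      positivity
  have hlim : Tendsto (fun n : ℕ => Real.exp (-((n : ℝ) ^ α))) atTop (nhds 0) := by
    apply Real.tendsto_exp_atBot.comp
    apply tendsto_neg_atTop_atBot.comp
    exact (tendsto_rpow_atTop hα0).comp tendsto_natCast_atTop_atTop
  have h0 : (μ {ω | T' ω = 0}).toReal ≤ 0 :=
    ge_of_tendsto hlim (Filter.Eventually.of_forall fun n => hb n (Nat.cast_nonneg n))
  have hz : μ {ω | T' ω = 0} = 0 := by
    have := ENNReal.toReal_nonneg (a := μ {ω | T' ω = 0})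
    have h1 : (μ {ω | T' ω = 0}).toReal = 0 := le_antisymm h0 this
    exact (ENNReal.toReal_eq_zero_iff _).mp h1 |>.resolve_right (measure_ne_top μ _)
  have hne : ∀ᵐ ω ∂μ, T' ω ≠ 0 := by
    rw [ae_iff]
    convert hz using 2
    simp
  filter_upwards [hT'nonneg, hne] with ω h1 h2
  exact lt_of_le_of_ne h1 (Ne.symm h2)

end

/-- Cauchy–Stieltjes transform of the ratio of two independent standard stable(α)
variables: `E[(1 + λ T/T')⁻¹] = (1 + λ^α)⁻¹` for all `λ ≥ 0`. -/
theorem stmt7 {Ω : Type*} [MeasurableSpace Ω] (μ : Measure Ω) [IsProbabilityMeasure μ]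
    (α : ℝ) (hα0 : 0 < α) (hα1 : α < 1)
    (T T' : Ω → ℝ) (hTmeas : Measurable T) (hT'meas : Measurable T')
    (hTnonneg : ∀ᵐ ω ∂μ, 0 ≤ T ω) (hT'nonneg : ∀ᵐ ω ∂μ, 0 ≤ T' ω)
    (hTlap : ∀ l : ℝ, 0 ≤ l → ∫ ω, Real.exp (-(l * T ω)) ∂μ = Real.exp (-(l ^ α)))
    (hT'lap : ∀ l : ℝ, 0 ≤ l → ∫ ω, Real.exp (-(l * T' ω)) ∂μ = Real.exp (-(l ^ α)))
    (hindep : IndepFun T T' μ)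
    (l : ℝ) (hl : 0 ≤ l) :
    ∫ ω, (1 + l * (T ω / T' ω))⁻¹ ∂μ = (1 + l ^ α)⁻¹ := by
  rcases eq_or_lt_of_le hl with rfl | hl0
  · simp [Real.zero_rpow hα0.ne']
  have hpos := aux_pos μ α hα0 T' hT'meas hT'nonneg hT'lap
  have hlα : (0:ℝ) ≤ l ^ α := Real.rpow_nonneg hl α
  have hb : (0:ℝ) < 1 + l ^ α := by linarith
  -- measurability and nonnegativity of the integrand
  have hmeasf : AEStronglyMeasurable (fun ω => (1 + l * (T ω / T' ω))⁻¹) μ :=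
    ((measurable_const.add ((hTmeas.div hT'meas).const_mul l)).inv).aestronglyMeasurable
  have hnnf : 0 ≤ᵐ[μ] fun ω => (1 + l * (T ω / T' ω))⁻¹ := by
    filter_upwards [hTnonneg, hpos] with ω h1 h2
    have : 0 ≤ l * (T ω / T' ω) := by positivity
    positivity
  rw [integral_eq_lintegral_of_nonneg_ae hnnf hmeasf]
  suffices h : ∫⁻ ω, ENNReal.ofReal ((1 + l * (T ω / T' ω))⁻¹) ∂μ
      = ENNReal.ofReal ((1 + l ^ α)⁻¹) by
    rw [h, ENNReal.toReal_ofReal (by positivity)]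
  -- Step 1: rewrite integrand as an inner integral over (0, ∞)
  have step1 : ∫⁻ ω, ENNReal.ofReal ((1 + l * (T ω / T' ω))⁻¹) ∂μ
      = ∫⁻ ω, ∫⁻ t in Set.Ioi (0:ℝ),
          ENNReal.ofReal (T' ω * Real.exp (-(t * (T' ω + l * T ω)))) ∂volume ∂μ := by
    apply lintegral_congr_ae
    filter_upwards [hTnonneg, hpos] with ω h1 h2
    have hbω : 0 < T' ω + l * T ω := by positivity
    rw [aux_exp_integral h2.le hbω]
    congr 1
    have he : 1 + l * (T ω / T' ω) = (T' ω + l * T ω) / T' ω := by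
      field_simp
    rw [he, inv_div]
  rw [step1]
  -- Step 2: swap the integrals
  rw [lintegral_lintegral_swap (by fun_prop)]
  -- Step 3: compute the inner integral over Ω using independence
  have step3 : ∀ t ∈ Set.Ioi (0:ℝ),
      ∫⁻ ω, ENNReal.ofReal (T' ω * Real.exp (-(t * (T' ω + l * T ω)))) ∂μ
        = ENNReal.ofReal (α * t ^ (α - 1) * Real.exp (-(t ^ α)))
            * ENNReal.ofReal (Real.exp (-((t * l) ^ α))) := by
    intro t ht
    rw [Set.mem_Ioi] at ht
    have hsplit : ∫⁻ ω, ENNReal.ofReal (T' ω * Real.exp (-(t * (T' ω + l * T ω)))) ∂μ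
        = ∫⁻ ω, ((fun x => ENNReal.ofReal (x * Real.exp (-(t * x)))) ∘ T') ω
            * ((fun x => ENNReal.ofReal (Real.exp (-(t * l * x)))) ∘ T) ω ∂μ := by
      apply lintegral_congr_ae
      filter_upwards [hT'nonneg] with ω hω
      simp only [Function.comp_apply]
      rw [← ENNReal.ofReal_mul (by positivity)]
      congr 1
      rw [mul_assoc, ← Real.exp_add]
      congr 2
      ring
    rw [hsplit, lintegral_mul_eq_lintegral_mul_lintegral_of_indepFun''
      (by fun_prop) (by fun_prop) (hindep.symm.comp (by fun_prop) (by fun_prop))]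
    congr 1
    · -- first factor
      obtain ⟨hint, heq⟩ := aux_deriv μ α hα0 T' hT'meas hT'nonneg hT'lap ht
      rw [Function.comp_def, ← ofReal_integral_eq_lintegral_ofReal hint ?_, heq]
      filter_upwards [hT'nonneg] with ω hω
      positivity
    · -- second factor
      have hint := aux_int_exp μ T hTmeas hTnonneg (t * l) (by positivity)
      rw [Function.comp_def, ← ofReal_integral_eq_lintegral_ofReal hint ?_,
        hTlap (t * l) (by positivity)]
      filter_upwards with ω
      positivity
  rw [setLIntegral_congr_fun measurableSet_Ioi step3]
  -- Step 4: compute the resulting integral over (0, ∞)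
  have step4a : ∀ t ∈ Set.Ioi (0:ℝ),
      ENNReal.ofReal (α * t ^ (α - 1) * Real.exp (-(t ^ α)))
          * ENNReal.ofReal (Real.exp (-((t * l) ^ α)))
        = ENNReal.ofReal (α * (t ^ (α - 1) * Real.exp (-(1 + l ^ α) * t ^ α))) := by
    intro t ht
    rw [Set.mem_Ioi] at ht
    rw [← ENNReal.ofReal_mul (by positivity)]
    congr 1
    rw [mul_assoc, mul_assoc, ← Real.exp_add, Real.mul_rpow ht.le hl]
    congr 2
    ring
  rw [setLIntegral_congr_fun measurableSet_Ioi step4a]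
  -- integrability of the final integrand
  have hintg : IntegrableOn (fun t : ℝ => t ^ (α - 1) * Real.exp (-(1 + l ^ α) * t ^ α))
      (Set.Ioi 0) := by
    have := (integrableOn_Ioi_comp_rpow_iff' (fun y => Real.exp (-(1 + l ^ α) * y))
      (p := α) hα0.ne').mpr (exp_neg_integrableOn_Ioi 0 hb)
    simpa [smul_eq_mul] using this
  rw [← ofReal_integral_eq_lintegral_ofReal (hintg.const_mul α) ?_]
  · congr 1
    rw [MeasureTheory.integral_const_mul,
      integral_rpow_mul_exp_neg_mul_rpow hα0 (by linarith) hb]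
    have h1 : -(α - 1 + 1) / α = -1 := by field_simp; ring
    have h2 : (α - 1 + 1) / α = 1 := by field_simp; ring
    rw [h1, h2, Real.Gamma_one, Real.rpow_neg_one]
    field_simp
  · rw [EventuallyLE, ae_restrict_iff' measurableSet_Ioi]
    filter_upwards with t ht
    rw [Set.mem_Ioi] at ht
    positivity
end

section
/- Fix 0 < α < 1. Let T and T' be independent standard stable(α) random variables and let ε be a standard exponential random variable independent of (T, T'). Then for every x ≥ 0, P(ε·T/T' > x) = E_α(-x^α), where E_α is the Mittag-Leffler function E_α(z) := Σ_{k=0}^∞ z^k/Γ(kα + 1). -/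
open MeasureTheory ProbabilityTheory Real Set Filter

namespace Stmt8Helpers

lemma pow_div_factorial_bound (b : ℝ) (hb : 0 ≤ b) :
    ∃ C : ℝ, 0 ≤ C ∧ ∀ n : ℕ, b ^ n / (n.factorial : ℝ) ≤ C * (1/2) ^ n := by
  refine ⟨Real.exp b * 2 ^ (⌈2*b⌉₊), by positivity, ?_⟩
  set m := ⌈2*b⌉₊ with hm
  have hterm : ∀ n : ℕ, b ^ n / (n.factorial : ℝ) ≤ Real.exp b := by
    intro n
    have h1 := Real.sum_le_exp_of_nonneg hb (n+1)
    have h2 : b ^ n / (n.factorial : ℝ) ≤ ∑ i ∈ Finset.range (n+1), b ^ i / (i.factorial : ℝ) :=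
      Finset.single_le_sum (f := fun i => b ^ i / (i.factorial : ℝ))
        (fun i _ => by positivity) (Finset.self_mem_range_succ n)
    linarith
  intro n
  induction n with
  | zero =>
      simp only [pow_zero, Nat.factorial_zero, Nat.cast_one, div_one, mul_one]
      have h1 : (1:ℝ) ≤ Real.exp b := Real.one_le_exp hb
      have h2 : (1:ℝ) ≤ (2:ℝ) ^ m := one_le_pow₀ one_le_two
      nlinarith
  | succ n ih =>
      rcases le_or_gt (n+1) m with h | h
      · have h1 : (2:ℝ)^(n+1) ≤ 2^m := pow_le_pow_right₀ one_le_two h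
        have h2 : (1:ℝ) ≤ 2 ^ m * (1/2:ℝ)^(n+1) := by
          rw [one_div, inv_pow, ← div_eq_mul_inv, le_div_iff₀ (by positivity), one_mul]
          exact h1
        have h3 := hterm (n+1)
        have h4 : Real.exp b * 1 ≤ Real.exp b * (2^m * (1/2:ℝ)^(n+1)) :=
          mul_le_mul_of_nonneg_left h2 (Real.exp_nonneg b)
        calc b^(n+1)/(((n+1).factorial : ℕ) : ℝ) ≤ Real.exp b := h3
          _ ≤ Real.exp b * (2^m * (1/2:ℝ)^(n+1)) := by linarith
          _ = Real.exp b * 2^m * (1/2:ℝ)^(n+1) := by ring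
      · have hmb : 2*b ≤ (m:ℝ) := Nat.le_ceil _
        have hmn : (m:ℝ) ≤ (n:ℝ) := by exact_mod_cast Nat.lt_succ_iff.mp h
        have hkey : b / ((n:ℝ)+1) ≤ 1/2 := by
          rw [div_le_div_iff₀ (by positivity) (by norm_num)]
          linarith
        have hne : ((n.factorial : ℕ) : ℝ) ≠ 0 := by positivity
        have hcast : (((n+1).factorial : ℕ) : ℝ) = ((n:ℝ)+1) * ((n.factorial : ℕ) : ℝ) := by
          push_cast [Nat.factorial_succ]; ring
        have hfact : b^(n+1)/(((n+1).factorial : ℕ) : ℝ)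
            = (b^n/((n.factorial : ℕ) : ℝ)) * (b/((n:ℝ)+1)) := by
          rw [pow_succ, hcast, eq_comm, _root_.div_mul_div_comm,
            mul_comm ((n.factorial : ℕ) : ℝ) ((n:ℝ)+1)]
        calc b^(n+1)/(((n+1).factorial : ℕ) : ℝ)
            = (b^n/((n.factorial : ℕ) : ℝ)) * (b/((n:ℝ)+1)) := hfact
          _ ≤ (Real.exp b * 2^m * (1/2:ℝ)^n) * (1/2) := by
              apply mul_le_mul ih hkey (by positivity) (by positivity)
          _ = Real.exp b * 2^m * (1/2:ℝ)^(n+1) := by ring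

lemma factorial_le_Gamma {y : ℝ} (hy : 1 ≤ y) :
    (((Nat.floor y).factorial : ℕ) : ℝ) ≤ Real.Gamma (y + 1) := by
  have h0 : (0:ℝ) ≤ y := by linarith
  have hfl : 1 ≤ Nat.floor y := Nat.le_floor (by exact_mod_cast hy)
  have h1 : ((Nat.floor y : ℝ)) + 1 ≤ y + 1 := by linarith [Nat.floor_le h0]
  have h2 : (2:ℝ) ≤ (Nat.floor y:ℝ) + 1 := by
    have : (1:ℝ) ≤ (Nat.floor y:ℝ) := by exact_mod_cast hfl
    linarith
  have h3 := Real.Gamma_strictMonoOn_Ici.monotoneOn (mem_Ici.mpr h2)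
    (mem_Ici.mpr (le_trans h2 h1)) h1
  rwa [Real.Gamma_nat_eq_factorial] at h3

lemma ml_summable {α : ℝ} (hα : 0 < α) {c : ℝ} (hc : 0 ≤ c) :
    Summable (fun k : ℕ => c ^ k / Real.Gamma ((k:ℝ) * α + 1)) := by
  set b := (max 1 c) ^ (1/α) with hb
  have hmax : (0:ℝ) < max 1 c := lt_of_lt_of_le one_pos (le_max_left _ _)
  have hb1 : 1 ≤ b := Real.one_le_rpow (le_max_left _ _) (by positivity)
  have hb0 : (0:ℝ) ≤ b := by linarith
  have hbα : c ≤ b ^ α := by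
    rw [hb, ← Real.rpow_mul hmax.le, one_div, inv_mul_cancel₀ hα.ne', Real.rpow_one]
    exact le_max_right _ _
  obtain ⟨C, hC0, hC⟩ := pow_div_factorial_bound b hb0
  set K := ⌈1/α⌉₊ + 1 with hK
  rw [← summable_nat_add_iff K]
  have hr0 : (0:ℝ) < (1/2:ℝ) ^ α := Real.rpow_pos_of_pos (by norm_num) _
  have hr1 : ((1/2:ℝ)) ^ α < 1 := Real.rpow_lt_one (by norm_num) (by norm_num) hα
  refine Summable.of_nonneg_of_le (fun k => ?_) (fun k => ?_)
    ((summable_geometric_of_lt_one hr0.le hr1).mul_left (2 * (b * C)))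
  · exact div_nonneg (pow_nonneg hc _) (Real.Gamma_pos_of_pos (by positivity)).le
  · set j := k + K with hj
    have hjα : 1 ≤ (j:ℝ) * α := by
      have h1 : (1/α : ℝ) ≤ (⌈1/α⌉₊ : ℝ) := Nat.le_ceil _
      have h2 : ((⌈1/α⌉₊ : ℕ) : ℝ) + 1 ≤ (j:ℝ) := by
        have : K ≤ j := by omega
        exact_mod_cast this
      have h2' : ((⌈1/α⌉₊ : ℕ) : ℝ) ≤ (j:ℝ) := by
        have h0 : (0:ℝ) ≤ 1 := zero_le_one
        calc ((⌈1/α⌉₊ : ℕ) : ℝ) ≤ ((⌈1/α⌉₊ : ℕ) : ℝ) + 1 := by nlinarith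
          _ ≤ (j:ℝ) := h2
      have h3 := mul_le_mul_of_nonneg_right (le_trans h1 h2') hα.le
      rwa [one_div, inv_mul_cancel₀ hα.ne'] at h3
    set n := ⌊(j:ℝ)*α⌋₊ with hn
    have hjα0 : (0:ℝ) ≤ (j:ℝ)*α := by positivity
    have hΓpos : (0:ℝ) < Real.Gamma ((j:ℝ)*α + 1) := Real.Gamma_pos_of_pos (by positivity)
    have hfacΓ : ((n.factorial : ℕ) : ℝ) ≤ Real.Gamma ((j:ℝ)*α + 1) := factorial_le_Gamma hjα
    have hn1 : (n:ℝ) ≤ (j:ℝ)*α := Nat.floor_le hjα0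
    have hn2 : (j:ℝ)*α < (n:ℝ) + 1 := Nat.lt_floor_add_one _
    have hnum : c ^ j ≤ b * b ^ n := by
      calc c ^ j ≤ (b ^ α) ^ j := pow_le_pow_left₀ hc hbα j
        _ = b ^ (α * (j:ℝ)) := by rw [← Real.rpow_natCast (b ^ α) j, ← Real.rpow_mul hb0]
        _ ≤ b ^ ((n:ℝ) + 1) := Real.rpow_le_rpow_of_exponent_le hb1 (by rw [mul_comm]; linarith)
        _ = b ^ (n + 1 : ℕ) := by rw [← Real.rpow_natCast b (n+1)]; push_cast; ring_nf
        _ = b * b ^ n := by rw [pow_succ]; ring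
    have hfac0 : (0:ℝ) < ((n.factorial : ℕ) : ℝ) := by positivity
    have hhalf : ((1:ℝ)/2) ^ n ≤ 2 * ((1/2:ℝ) ^ α) ^ j := by
      have e1 : ((1:ℝ)/2) ^ n = ((1:ℝ)/2) ^ ((n:ℝ)) := by rw [Real.rpow_natCast]
      have e2 : ((1:ℝ)/2) ^ ((n:ℝ)) ≤ ((1:ℝ)/2) ^ ((j:ℝ)*α - 1) :=
        Real.rpow_le_rpow_of_exponent_ge (by norm_num) (by norm_num) (by linarith)
      have e3 : ((1:ℝ)/2) ^ ((j:ℝ)*α - 1) = 2 * ((1/2:ℝ) ^ α) ^ j := by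
        rw [Real.rpow_sub (by norm_num), Real.rpow_one, mul_comm ((j:ℝ)) α,
          Real.rpow_mul (by norm_num : (0:ℝ) ≤ 1/2), Real.rpow_natCast]
        ring
      rw [e1]; rw [e3] at e2; exact e2
    calc c ^ j / Real.Gamma ((j:ℝ)*α + 1) ≤ (b * b ^ n) / ((n.factorial : ℕ) : ℝ) :=
          div_le_div₀ (by positivity) hnum hfac0 hfacΓ
      _ = b * (b ^ n / ((n.factorial : ℕ) : ℝ)) := by ring
      _ ≤ b * (C * (1/2:ℝ)^n) := mul_le_mul_of_nonneg_left (hC n) hb0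
      _ ≤ b * (C * (2 * ((1/2:ℝ) ^ α) ^ j)) :=
          mul_le_mul_of_nonneg_left (mul_le_mul_of_nonneg_left hhalf hC0) hb0
      _ = (2 * (b * C)) * (((1/2:ℝ) ^ α) ^ j) := by ring
      _ ≤ (2 * (b * C)) * (((1/2:ℝ) ^ α) ^ k) := by
          apply mul_le_mul_of_nonneg_left _ (by positivity)
          rw [hj, pow_add]
          have : ((1/2:ℝ) ^ α) ^ K ≤ 1 := pow_le_one₀ hr0.le hr1.le
          nlinarith [pow_nonneg hr0.le k, pow_nonneg hr0.le K]

lemma expMeasure_Ioi {y : ℝ} (hy : 0 ≤ y) :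
    expMeasure 1 (Set.Ioi y) = ENNReal.ofReal (Real.exp (-y)) := by
  haveI : IsProbabilityMeasure (expMeasure 1) := isProbabilityMeasure_expMeasure one_pos
  have h1 : expMeasure 1 (Set.Iic y) = ENNReal.ofReal (1 - Real.exp (-y)) := by
    rw [expMeasure, gammaMeasure, withDensity_apply _ measurableSet_Iic]
    have h := lintegral_exponentialPDF_eq_antiDeriv one_pos y
    rw [if_pos hy, one_mul] at h
    exact h
  have h2 : expMeasure 1 (Set.Ioi y) = 1 - expMeasure 1 (Set.Iic y) := by
    rw [← Set.compl_Iic, measure_compl measurableSet_Iic (measure_ne_top _ _), measure_univ]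
  rw [h2, h1, ← ENNReal.ofReal_one, ← ENNReal.ofReal_sub _ (by
    have := Real.exp_le_one_iff.mpr (neg_nonpos.mpr hy); linarith)]
  norm_num

section Stable
variable {Ω : Type*} [MeasurableSpace Ω] (μ : Measure Ω) [IsProbabilityMeasure μ]
  {α : ℝ} {T : Ω → ℝ}

lemma stable_integrable (hTmeas : Measurable T) (hTnonneg : ∀ᵐ ω ∂μ, 0 ≤ T ω)
    {l : ℝ} (hl : 0 ≤ l) : Integrable (fun ω => Real.exp (-(l * T ω))) μ := by
  refine Integrable.mono' (integrable_const 1)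
    ((hTmeas.const_mul l).neg.exp.aestronglyMeasurable) ?_
  filter_upwards [hTnonneg] with ω hω
  rw [Real.norm_eq_abs, abs_of_pos (Real.exp_pos _)]
  exact Real.exp_le_one_iff.mpr (by nlinarith)

lemma stable_lap_lintegral (hTmeas : Measurable T) (hTnonneg : ∀ᵐ ω ∂μ, 0 ≤ T ω)
    (hTlap : ∀ l : ℝ, 0 ≤ l → ∫ ω, Real.exp (-(l * T ω)) ∂μ = Real.exp (-(l ^ α)))
    {l : ℝ} (hl : 0 ≤ l) :
    ∫⁻ ω, ENNReal.ofReal (Real.exp (-(l * T ω))) ∂μ = ENNReal.ofReal (Real.exp (-(l ^ α))) := by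
  rw [← ofReal_integral_eq_lintegral_ofReal (stable_integrable μ hTmeas hTnonneg hl)
    (ae_of_all _ fun ω => (Real.exp_pos _).le), hTlap l hl]

lemma stable_pos (hα0 : 0 < α) (hTmeas : Measurable T) (hTnonneg : ∀ᵐ ω ∂μ, 0 ≤ T ω)
    (hTlap : ∀ l : ℝ, 0 ≤ l → ∫ ω, Real.exp (-(l * T ω)) ∂μ = Real.exp (-(l ^ α))) :
    ∀ᵐ ω ∂μ, 0 < T ω := by
  have hset : MeasurableSet {ω | T ω = 0} := hTmeas (measurableSet_singleton 0)
  have key : ∀ n : ℕ, μ {ω | T ω = 0} ≤ ENNReal.ofReal (Real.exp (-((n:ℝ) ^ α))) := by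
    intro n
    rw [← stable_lap_lintegral μ hTmeas hTnonneg hTlap (Nat.cast_nonneg n),
      ← setLIntegral_one, ← lintegral_indicator hset]
    refine lintegral_mono fun ω => ?_
    by_cases h : T ω = 0
    · rw [Set.indicator_of_mem (by exact h : ω ∈ {ω | T ω = 0})]
      simp [h]
    · rw [Set.indicator_of_notMem (by exact h : ω ∉ {ω | T ω = 0})]
      exact zero_le
  have t1 : Tendsto (fun n : ℕ => ((n:ℝ)) ^ α) atTop atTop :=
    (tendsto_rpow_atTop hα0).comp tendsto_natCast_atTop_atTop
  have t2 : Tendsto (fun n : ℕ => Real.exp (-((n:ℝ) ^ α))) atTop (nhds 0) :=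
    Real.tendsto_exp_neg_atTop_nhds_zero.comp t1
  have t3 : Tendsto (fun n : ℕ => ENNReal.ofReal (Real.exp (-((n:ℝ) ^ α)))) atTop (nhds 0) := by
    rw [← ENNReal.ofReal_zero]
    exact ENNReal.tendsto_ofReal t2
  have hzero : μ {ω | T ω = 0} = 0 := le_antisymm (ge_of_tendsto' t3 key) zero_le
  have hne : ∀ᵐ ω ∂μ, T ω ≠ 0 := by
    rw [ae_iff]
    simpa using hzero
  filter_upwards [hTnonneg, hne] with ω h1 h2
  exact lt_of_le_of_ne h1 (Ne.symm h2)

lemma stable_moment (hα0 : 0 < α) (hTmeas : Measurable T) (hTnonneg : ∀ᵐ ω ∂μ, 0 ≤ T ω)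
    (hTlap : ∀ l : ℝ, 0 ≤ l → ∫ ω, Real.exp (-(l * T ω)) ∂μ = Real.exp (-(l ^ α)))
    {s : ℝ} (hs : 0 < s) :
    ∫⁻ ω, ENNReal.ofReal (T ω ^ (-s)) ∂μ
      = ENNReal.ofReal ((1/α) * Real.Gamma (s/α) / Real.Gamma s) := by
  have hpos := stable_pos μ hα0 hTmeas hTnonneg hTlap
  have hΓs : 0 < Real.Gamma s := Real.Gamma_pos_of_pos hs
  have A : ∀ t : ℝ, 0 < t → ENNReal.ofReal (Real.Gamma s * t ^ (-s))
      = ∫⁻ l in Ioi (0:ℝ), ENNReal.ofReal (l ^ (s-1) * Real.exp (-(l * t))) := by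
    intro t ht
    have hfun : (fun x:ℝ => x ^ (s-1) * Real.exp (-t * x ^ (1:ℝ)))
        = fun l => l ^ (s-1) * Real.exp (-(l * t)) := by
      funext y; rw [Real.rpow_one, neg_mul, mul_comm t y]
    have hint : IntegrableOn (fun l : ℝ => l ^ (s-1) * Real.exp (-(l * t))) (Ioi 0) := by
      have := integrableOn_rpow_mul_exp_neg_mul_rpow (p := 1) (s := s-1) (b := t)
        (by linarith) one_pos ht
      rwa [hfun] at this
    have hval : ∫ l in Ioi (0:ℝ), l ^ (s-1) * Real.exp (-(l * t)) = t ^ (-s) * Real.Gamma s := by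
      have := integral_rpow_mul_exp_neg_mul_rpow (p := 1) (q := s-1) (b := t)
        one_pos (by linarith) ht
      rw [hfun] at this
      rw [this]
      norm_num
    rw [← ofReal_integral_eq_lintegral_ofReal hint ?_]
    · rw [hval, mul_comm]
    · rw [EventuallyLE, ae_restrict_iff' measurableSet_Ioi]
      refine ae_of_all _ fun l hl => ?_
      have : (0:ℝ) < l := hl
      positivity
  have hmeas2 : Measurable (Function.uncurry fun (ω : Ω) (l : ℝ) =>
      ENNReal.ofReal (l ^ (s-1) * Real.exp (-(l * T ω)))) := by
    apply ENNReal.measurable_ofReal.comp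
    exact (measurable_snd.pow measurable_const).mul
      (((measurable_snd.mul (hTmeas.comp measurable_fst)).neg).exp)
  have key : ENNReal.ofReal (Real.Gamma s) * ∫⁻ ω, ENNReal.ofReal (T ω ^ (-s)) ∂μ
      = ENNReal.ofReal ((1/α) * Real.Gamma (s/α)) := by
    have hmeasI : Measurable fun ω => ENNReal.ofReal (T ω ^ (-s)) :=
      ENNReal.measurable_ofReal.comp (hTmeas.pow measurable_const)
    rw [← lintegral_const_mul _ hmeasI]
    have e1 : ∫⁻ ω, ENNReal.ofReal (Real.Gamma s) * ENNReal.ofReal (T ω ^ (-s)) ∂μ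
        = ∫⁻ ω, ∫⁻ l in Ioi (0:ℝ), ENNReal.ofReal (l ^ (s-1) * Real.exp (-(l * T ω))) ∂volume ∂μ := by
      refine lintegral_congr_ae ?_
      filter_upwards [hpos] with ω hω
      rw [← ENNReal.ofReal_mul hΓs.le]
      exact A (T ω) hω
    rw [e1, lintegral_lintegral_swap (hmeas2.aemeasurable)]
    have e2 : ∀ l ∈ Ioi (0:ℝ), ∫⁻ ω, ENNReal.ofReal (l ^ (s-1) * Real.exp (-(l * T ω))) ∂μ
        = ENNReal.ofReal (l ^ (s-1) * Real.exp (-(l ^ α))) := by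
      intro l hl
      have hl0 : (0:ℝ) < l := hl
      calc ∫⁻ ω, ENNReal.ofReal (l ^ (s-1) * Real.exp (-(l * T ω))) ∂μ
          = ∫⁻ ω, ENNReal.ofReal (l ^ (s-1)) * ENNReal.ofReal (Real.exp (-(l * T ω))) ∂μ := by
            refine lintegral_congr fun ω => ?_
            rw [ENNReal.ofReal_mul (by positivity)]
        _ = ENNReal.ofReal (l ^ (s-1)) * ∫⁻ ω, ENNReal.ofReal (Real.exp (-(l * T ω))) ∂μ := by
            have hme : Measurable fun ω => ENNReal.ofReal (Real.exp (-(l * T ω))) :=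
              ENNReal.measurable_ofReal.comp ((hTmeas.const_mul l).neg.exp)
            exact lintegral_const_mul _ hme
        _ = ENNReal.ofReal (l ^ (s-1)) * ENNReal.ofReal (Real.exp (-(l ^ α))) := by
            rw [stable_lap_lintegral μ hTmeas hTnonneg hTlap hl0.le]
        _ = ENNReal.ofReal (l ^ (s-1) * Real.exp (-(l ^ α))) := by
            rw [← ENNReal.ofReal_mul (by positivity)]
    rw [setLIntegral_congr_fun_ae measurableSet_Ioi (ae_of_all _ e2)]
    have hs' : 0 < s/α := div_pos hs hα0
    have hintf : IntegrableOn (fun y : ℝ => y ^ (s/α - 1) * Real.exp (-y)) (Ioi 0) := by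
      have := Real.GammaIntegral_convergent hs'
      refine this.congr_fun (fun y _ => by rw [mul_comm]) measurableSet_Ioi
    have hint2 : IntegrableOn (fun l : ℝ => l ^ (s-1) * Real.exp (-(l ^ α))) (Ioi 0) := by
      have h := (integrableOn_Ioi_comp_rpow_iff' (fun y : ℝ => y ^ (s/α - 1) * Real.exp (-y))
        hα0.ne').mpr hintf
      refine h.congr_fun (fun y hy => ?_) measurableSet_Ioi
      have hy0 : (0:ℝ) < y := hy
      simp only [smul_eq_mul]
      have h1 : ((y:ℝ) ^ α) ^ (s/α - 1) = y ^ (s - α) := by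
        rw [← Real.rpow_mul hy0.le]
        congr 1
        field_simp
      rw [h1, ← mul_assoc, ← Real.rpow_add hy0]
      congr 2
      ring
    have hval2 : ∫ l in Ioi (0:ℝ), l ^ (s-1) * Real.exp (-(l ^ α))
        = (1/α) * Real.Gamma (s/α) := by
      have := integral_rpow_mul_exp_neg_rpow hα0 (by linarith : (-1:ℝ) < s - 1)
      rw [sub_add_cancel] at this
      rw [← this]
    rw [← ofReal_integral_eq_lintegral_ofReal hint2 ?_, hval2]
    rw [EventuallyLE, ae_restrict_iff' measurableSet_Ioi]
    refine ae_of_all _ fun l hl => ?_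
    have : (0:ℝ) < l := hl
    positivity
  have hΓne : ENNReal.ofReal (Real.Gamma s) ≠ 0 := by
    simp [ENNReal.ofReal_eq_zero, not_le, hΓs]
  have hΓnt : ENNReal.ofReal (Real.Gamma s) ≠ ⊤ := ENNReal.ofReal_ne_top
  rw [ENNReal.ofReal_div_of_pos hΓs, ENNReal.eq_div_iff hΓne hΓnt]
  exact key

lemma stable_moment_nat (hα0 : 0 < α) (hTmeas : Measurable T) (hTnonneg : ∀ᵐ ω ∂μ, 0 ≤ T ω)
    (hTlap : ∀ l : ℝ, 0 ≤ l → ∫ ω, Real.exp (-(l * T ω)) ∂μ = Real.exp (-(l ^ α)))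
    (k : ℕ) :
    ∫⁻ ω, ENNReal.ofReal (T ω ^ (-((k:ℝ) * α))) ∂μ
      = ENNReal.ofReal ((k.factorial : ℝ) / Real.Gamma ((k:ℝ) * α + 1)) := by
  cases k with
  | zero => simp [Real.Gamma_one]
  | succ n =>
    have hs : 0 < (((n+1 : ℕ)):ℝ) * α := by positivity
    rw [stable_moment μ hα0 hTmeas hTnonneg hTlap hs]
    congr 1
    have hΓpos : 0 < Real.Gamma ((((n+1 : ℕ)):ℝ) * α) := Real.Gamma_pos_of_pos hs
    have e1 : ((((n+1 : ℕ)):ℝ) * α)/α = (((n+1 : ℕ)):ℝ) := by field_simp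
    have e2 : Real.Gamma ((((n+1 : ℕ)):ℝ)) = (n.factorial : ℝ) := by
      push_cast
      exact Real.Gamma_nat_eq_factorial n
    have e3 : Real.Gamma ((((n+1 : ℕ)):ℝ) * α + 1)
        = ((((n+1 : ℕ)):ℝ) * α) * Real.Gamma ((((n+1 : ℕ)):ℝ) * α) :=
      Real.Gamma_add_one hs.ne'
    have hfs : ((n+1).factorial : ℝ) = (((n+1 : ℕ)):ℝ) * (n.factorial : ℝ) := by
      push_cast [Nat.factorial_succ]; ring
    rw [e1, e2, e3, hfs]
    field_simp

omit [IsProbabilityMeasure μ] in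
lemma integral_of_lintegral_ofReal {g : Ω → ℝ} {M : ℝ}
    (hg : AEMeasurable g μ) (hnn : ∀ᵐ ω ∂μ, 0 ≤ g ω) (hM : 0 ≤ M)
    (h : ∫⁻ ω, ENNReal.ofReal (g ω) ∂μ = ENNReal.ofReal M) :
    Integrable g μ ∧ ∫ ω, g ω ∂μ = M := by
  have hfin : HasFiniteIntegral g μ := by
    rw [hasFiniteIntegral_iff_ofReal hnn, h]
    exact ENNReal.ofReal_lt_top
  have hint : Integrable g μ := ⟨hg.aestronglyMeasurable, hfin⟩
  refine ⟨hint, ?_⟩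
  have h2 := ofReal_integral_eq_lintegral_ofReal hint hnn
  rw [h, ENNReal.ofReal_eq_ofReal_iff (integral_nonneg_of_ae hnn) hM] at h2
  exact h2

end Stable

end Stmt8Helpers

open Stmt8Helpers

/-- Mittag-Leffler survival function: for independent standard stable(α) variables `T, T'`
and a standard exponential `ε` independent of `(T, T')`,
`P(ε T/T' > x) = E_α(-x^α) = ∑_k (-x^α)^k / Γ(kα+1)` for all `x ≥ 0`. -/
theorem stmt8 {Ω : Type*} [MeasurableSpace Ω] (μ : Measure Ω) [IsProbabilityMeasure μ]
    (α : ℝ) (hα0 : 0 < α) (hα1 : α < 1)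
    (T T' : Ω → ℝ) (hTmeas : Measurable T) (hT'meas : Measurable T')
    (hTnonneg : ∀ᵐ ω ∂μ, 0 ≤ T ω) (hT'nonneg : ∀ᵐ ω ∂μ, 0 ≤ T' ω)
    (hTlap : ∀ l : ℝ, 0 ≤ l → ∫ ω, Real.exp (-(l * T ω)) ∂μ = Real.exp (-(l ^ α)))
    (hT'lap : ∀ l : ℝ, 0 ≤ l → ∫ ω, Real.exp (-(l * T' ω)) ∂μ = Real.exp (-(l ^ α)))
    (hindepTT' : IndepFun T T' μ)
    (ε : Ω → ℝ) (hεmeas : Measurable ε) (hεlaw : Measure.map ε μ = expMeasure 1)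
    (hindepε : IndepFun ε (fun ω => (T ω, T' ω)) μ)
    (x : ℝ) (hx : 0 ≤ x) :
    (μ {ω | x < ε ω * (T ω / T' ω)}).toReal =
      ∑' k : ℕ, (-(x ^ α)) ^ k / Real.Gamma ((k : ℝ) * α + 1) := by
  have hTpos : ∀ᵐ ω ∂μ, 0 < T ω := stable_pos μ hα0 hTmeas hTnonneg hTlap
  have hT'pos : ∀ᵐ ω ∂μ, 0 < T' ω := stable_pos μ hα0 hT'meas hT'nonneg hT'lap
  haveI : IsProbabilityMeasure (expMeasure 1) := isProbabilityMeasure_expMeasure one_pos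
  set c := x ^ α with hc
  have hc0 : 0 ≤ c := Real.rpow_nonneg hx α
  set g : Ω → ℝ := fun ω => Real.exp (-(c * T ω ^ (-α))) with hg
  have hgmeas : Measurable g := (((hTmeas.pow measurable_const).const_mul c).neg).exp
  have hTT'meas : Measurable (fun ω => (T ω, T' ω)) := hTmeas.prodMk hT'meas
  set ν := Measure.map (fun ω => (T ω, T' ω)) μ with hν
  haveI hνprob : IsProbabilityMeasure ν := Measure.isProbabilityMeasure_map hTT'meas.aemeasurable
  have hmapeq : Measure.map (fun ω => (ε ω, (T ω, T' ω))) μ = (expMeasure 1).prod ν := by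
    rw [hν, ← hεlaw]
    exact (indepFun_iff_map_prod_eq_prod_map_map hεmeas.aemeasurable
      hTT'meas.aemeasurable).mp hindepε
  have hSmeas : MeasurableSet {p : ℝ × ℝ × ℝ | x < p.1 * (p.2.1 / p.2.2)} :=
    measurableSet_lt measurable_const
      (measurable_fst.mul ((measurable_fst.comp measurable_snd).div
        (measurable_snd.comp measurable_snd)))
  have h1 : μ {ω | x < ε ω * (T ω / T' ω)}
      = ((expMeasure 1).prod ν) {p : ℝ × ℝ × ℝ | x < p.1 * (p.2.1 / p.2.2)} := by
    rw [← hmapeq, Measure.map_apply (hεmeas.prodMk hTT'meas) hSmeas]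
    rfl
  have hνae : ∀ᵐ q ∂ν, 0 < q.1 ∧ 0 < q.2 := by
    have hms : MeasurableSet {q : ℝ × ℝ | 0 < q.1 ∧ 0 < q.2} :=
      (measurableSet_lt measurable_const measurable_fst).inter
        (measurableSet_lt measurable_const measurable_snd)
    rw [hν, ae_map_iff hTT'meas.aemeasurable hms]
    filter_upwards [hTpos, hT'pos] with ω h h' using ⟨h, h'⟩
  have h2 : ((expMeasure 1).prod ν) {p : ℝ × ℝ × ℝ | x < p.1 * (p.2.1 / p.2.2)}
      = ∫⁻ q, expMeasure 1 ((fun e => (e, q)) ⁻¹' {p : ℝ × ℝ × ℝ | x < p.1 * (p.2.1 / p.2.2)}) ∂ν :=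
    Measure.prod_apply_symm hSmeas
  have h3 : ∀ᵐ q ∂ν, expMeasure 1 ((fun e => (e, q)) ⁻¹' {p : ℝ × ℝ × ℝ | x < p.1 * (p.2.1 / p.2.2)})
      = ENNReal.ofReal (Real.exp (-(x * (q.2 / q.1)))) := by
    filter_upwards [hνae] with q hq
    obtain ⟨hq1, hq2⟩ := hq
    have hset : (fun e => (e, q)) ⁻¹' {p : ℝ × ℝ × ℝ | x < p.1 * (p.2.1 / p.2.2)}
        = Ioi (x * (q.2 / q.1)) := by
      ext e
      simp only [mem_preimage, mem_setOf_eq, mem_Ioi]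
      have ha : (x < e * (q.1 / q.2)) ↔ x * q.2 < e * q.1 := by
        rw [← mul_div_assoc]
        exact lt_div_iff₀ hq2
      have hb : (x * (q.2 / q.1) < e) ↔ x * q.2 < e * q.1 := by
        rw [← mul_div_assoc]
        exact div_lt_iff₀ hq1
      exact ha.trans hb.symm
    rw [hset, expMeasure_Ioi (mul_nonneg hx (div_nonneg hq2.le hq1.le))]
  have h4 : μ {ω | x < ε ω * (T ω / T' ω)}
      = ∫⁻ q, ENNReal.ofReal (Real.exp (-(x * (q.2 / q.1)))) ∂ν := by
    rw [h1, h2]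
    exact lintegral_congr_ae h3
  have hνprod : ν = (Measure.map T μ).prod (Measure.map T' μ) := by
    rw [hν]
    exact (indepFun_iff_map_prod_eq_prod_map_map hTmeas.aemeasurable
      hT'meas.aemeasurable).mp hindepTT'
  have hTmap_ae : ∀ᵐ t ∂(Measure.map T μ), 0 < t := by
    have hms0 : MeasurableSet {t : ℝ | 0 < t} := measurableSet_Ioi
    rw [ae_map_iff hTmeas.aemeasurable hms0]
    exact hTpos
  have hfmeas : Measurable (fun q : ℝ × ℝ => ENNReal.ofReal (Real.exp (-(x * (q.2 / q.1))))) :=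
    ENNReal.measurable_ofReal.comp ((((measurable_snd.div measurable_fst)).const_mul x).neg.exp)
  have h5 : ∫⁻ q, ENNReal.ofReal (Real.exp (-(x * (q.2 / q.1)))) ∂ν
      = ∫⁻ t, ∫⁻ t', ENNReal.ofReal (Real.exp (-(x * (t' / t)))) ∂(Measure.map T' μ)
          ∂(Measure.map T μ) := by
    rw [hνprod]
    exact lintegral_prod _ hfmeas.aemeasurable
  have h6 : ∫⁻ t, ∫⁻ t', ENNReal.ofReal (Real.exp (-(x * (t' / t)))) ∂(Measure.map T' μ)
          ∂(Measure.map T μ)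
      = ∫⁻ t, ENNReal.ofReal (Real.exp (-((x / t) ^ α))) ∂(Measure.map T μ) := by
    refine lintegral_congr_ae ?_
    filter_upwards [hTmap_ae] with t ht
    have hminner : Measurable (fun t' : ℝ => ENNReal.ofReal (Real.exp (-(x * (t' / t))))) :=
      ENNReal.measurable_ofReal.comp (((measurable_id.div_const t).const_mul x).neg.exp)
    have e2 : ∫⁻ t', ENNReal.ofReal (Real.exp (-(x * (t' / t)))) ∂(Measure.map T' μ)
        = ∫⁻ ω, ENNReal.ofReal (Real.exp (-((x/t) * T' ω))) ∂μ := by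
      rw [lintegral_map hminner hT'meas]
      refine lintegral_congr fun ω => ?_
      congr 2
      ring
    rw [e2, stable_lap_lintegral μ hT'meas hT'nonneg hT'lap (div_nonneg hx ht.le)]
  have h7 : ∫⁻ t, ENNReal.ofReal (Real.exp (-((x / t) ^ α))) ∂(Measure.map T μ)
      = ∫⁻ ω, ENNReal.ofReal (Real.exp (-((x / T ω) ^ α))) ∂μ :=
    lintegral_map (ENNReal.measurable_ofReal.comp
      ((((measurable_const.div measurable_id).pow measurable_const)).neg.exp)) hTmeas
  have h8 : ∫⁻ ω, ENNReal.ofReal (Real.exp (-((x / T ω) ^ α))) ∂μ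
      = ∫⁻ ω, ENNReal.ofReal (g ω) ∂μ := by
    refine lintegral_congr_ae ?_
    filter_upwards [hTpos] with ω hω
    have e : (x / T ω) ^ α = c * T ω ^ (-α) := by
      rw [Real.div_rpow hx hω.le, Real.rpow_neg hω.le, div_eq_mul_inv]
    rw [hg]
    simp only
    rw [e]
  have hμA : μ {ω | x < ε ω * (T ω / T' ω)} = ∫⁻ ω, ENNReal.ofReal (g ω) ∂μ := by
    rw [h4, h5, h6, h7, h8]
  -- Step 3: moments and series expansion
  have moment : ∀ k : ℕ, Integrable (fun ω => T ω ^ (-((k:ℝ) * α))) μ ∧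
      ∫ ω, T ω ^ (-((k:ℝ) * α)) ∂μ = (k.factorial : ℝ) / Real.Gamma ((k:ℝ) * α + 1) := by
    intro k
    have hΓ : 0 < Real.Gamma ((k:ℝ)*α + 1) := Real.Gamma_pos_of_pos (by positivity)
    refine integral_of_lintegral_ofReal μ ((hTmeas.pow measurable_const).aemeasurable) ?_
      (div_nonneg (Nat.cast_nonneg _) hΓ.le)
      (stable_moment_nat μ hα0 hTmeas hTnonneg hTlap k)
    filter_upwards [hTpos] with ω hω
    exact (Real.rpow_pos_of_pos hω _).le
  set F : ℕ → Ω → ℝ := fun k ω => (-(c * T ω ^ (-α))) ^ k / (k.factorial : ℝ) with hF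
  have hFae : ∀ k : ℕ, F k =ᵐ[μ]
      fun ω => (((-1:ℝ))^k * c^k / (k.factorial : ℝ)) * T ω ^ (-((k:ℝ)*α)) := by
    intro k
    filter_upwards [hTpos] with ω hω
    have h1 : (T ω ^ (-α)) ^ k = T ω ^ (-((k:ℝ)*α)) := by
      rw [← Real.rpow_natCast (T ω ^ (-α)) k, ← Real.rpow_mul hω.le]
      congr 1
      push_cast
      ring
    show (-(c * T ω ^ (-α))) ^ k / (k.factorial : ℝ) = _
    rw [neg_pow, mul_pow, h1]
    ring
  have hFint : ∀ k, Integrable (F k) μ := fun k =>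
    (((moment k).1.const_mul _)).congr (hFae k).symm
  have hFval : ∀ k, ∫ ω, F k ω ∂μ = (-c)^k / Real.Gamma ((k:ℝ)*α + 1) := by
    intro k
    rw [integral_congr_ae (hFae k), integral_const_mul, (moment k).2, neg_pow]
    have hkne : ((k.factorial : ℕ) : ℝ) ≠ 0 := Nat.cast_ne_zero.mpr k.factorial_ne_zero
    field_simp
    ring
  have hFnorm : ∀ k, ∫ ω, ‖F k ω‖ ∂μ = c^k / Real.Gamma ((k:ℝ)*α + 1) := by
    intro k
    have hae : (fun ω => ‖F k ω‖) =ᵐ[μ]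
        fun ω => (c^k / (k.factorial : ℝ)) * T ω ^ (-((k:ℝ)*α)) := by
      filter_upwards [hFae k, hTpos] with ω h hω
      rw [Real.norm_eq_abs, h, abs_mul, abs_of_nonneg (Real.rpow_pos_of_pos hω _).le,
        abs_div, abs_mul, abs_pow, abs_neg, abs_one, one_pow, one_mul, abs_pow,
        abs_of_nonneg hc0, Nat.abs_cast]
    rw [integral_congr_ae hae, integral_const_mul, (moment k).2]
    have hkne : ((k.factorial : ℕ) : ℝ) ≠ 0 := Nat.cast_ne_zero.mpr k.factorial_ne_zero
    field_simp
  have hsum : Summable (fun k => ∫ ω, ‖F k ω‖ ∂μ) := by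
    have he : (fun k => ∫ ω, ‖F k ω‖ ∂μ)
        = fun k : ℕ => c^k / Real.Gamma ((k:ℝ)*α + 1) := funext hFnorm
    rw [he]
    exact ml_summable hα0 hc0
  have hseries : ∑' k, ∫ ω, F k ω ∂μ = ∫ ω, ∑' k, F k ω ∂μ :=
    integral_tsum_of_summable_integral_norm hFint hsum
  have hgsum : (fun ω => ∑' k, F k ω) = g := by
    funext ω
    rw [hg]
    simp only
    rw [Real.exp_eq_exp_ℝ, NormedSpace.exp_eq_tsum_div]
  have hgint : ∫ ω, g ω ∂μ = (μ {ω | x < ε ω * (T ω / T' ω)}).toReal := by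
    rw [integral_eq_lintegral_of_nonneg_ae (ae_of_all _ fun ω => (Real.exp_pos _).le)
      hgmeas.aestronglyMeasurable, ← hμA]
  calc (μ {ω | x < ε ω * (T ω / T' ω)}).toReal
      = ∫ ω, g ω ∂μ := hgint.symm
    _ = ∑' k, ∫ ω, F k ω ∂μ := by rw [hseries, hgsum]
    _ = ∑' k : ℕ, (-c) ^ k / Real.Gamma ((k : ℝ) * α + 1) := by
        exact tsum_congr hFval
end

section
/- Fix 0 < α < 1 and 0 < p < 1, and set q := 1 - p. Let T_p and T_q be independent nonnegative random variables with Laplace transforms E[exp(-λT_p)] = exp(-p·λ^α) and E[exp(-λT_q)] = exp(-q·λ^α) for all λ ≥ 0 (the increments of a stable(α) subordinator over intervals of lengths p and q), and set M := T_p/(T_p + T_q). Then for every λ ≥ 0, E[(1 + λM)^{-1}] = (q + p(1+λ)^{α-1})/(q + p(1+λ)^α). -/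
open MeasureTheory ProbabilityTheory

open MeasureTheory ProbabilityTheory Real Filter Set Topology Metric

lemma aux_mul_exp_le {a x : ℝ} (ha : 0 < a) (hx : 0 ≤ x) :
    x * Real.exp (-(a * x)) ≤ (a * Real.exp 1)⁻¹ := by
  have h1 : a * x ≤ Real.exp (a * x - 1) := by
    have := Real.add_one_le_exp (a * x - 1); linarith
  have hepos := (Real.exp_pos (-(a * x))).le
  have key : a * x * Real.exp (-(a * x)) ≤ Real.exp (a * x - 1) * Real.exp (-(a * x)) :=
    mul_le_mul_of_nonneg_right h1 hepos
  have h3 : Real.exp (a * x - 1) * Real.exp (-(a * x)) = (Real.exp 1)⁻¹ := by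
    rw [← Real.exp_add, ← Real.exp_neg]; ring_nf
  rw [h3] at key
  have h5 : x * Real.exp (-(a * x)) ≤ (Real.exp 1)⁻¹ / a := by
    rw [le_div_iff₀ ha]
    calc x * Real.exp (-(a * x)) * a = a * x * Real.exp (-(a * x)) := by ring
      _ ≤ (Real.exp 1)⁻¹ := key
  have h6 : (a * Real.exp 1)⁻¹ = (Real.exp 1)⁻¹ / a := by
    rw [mul_inv, div_eq_mul_inv, mul_comm]
  rw [h6]; exact h5

lemma aux_integrable_exp {Ω : Type*} [MeasurableSpace Ω] (μ : Measure Ω) [IsProbabilityMeasure μ]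
    {a : ℝ} (ha : 0 ≤ a) {X : Ω → ℝ} (hX : Measurable X) (hXnn : ∀ᵐ ω ∂μ, 0 ≤ X ω) :
    Integrable (fun ω => Real.exp (-(a * X ω))) μ := by
  refine (integrable_const (1:ℝ)).mono'
    (Real.measurable_exp.comp (hX.const_mul a).neg).aestronglyMeasurable ?_
  filter_upwards [hXnn] with ω hω
  rw [Real.norm_eq_abs, abs_of_pos (Real.exp_pos _)]
  exact Real.exp_le_one_iff.mpr (neg_nonpos.mpr (mul_nonneg ha hω))

lemma aux_integrable_mul_exp {Ω : Type*} [MeasurableSpace Ω] (μ : Measure Ω)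
    [IsProbabilityMeasure μ] {a : ℝ} (ha : 0 < a) {X : Ω → ℝ} (hX : Measurable X)
    (hXnn : ∀ᵐ ω ∂μ, 0 ≤ X ω) :
    Integrable (fun ω => X ω * Real.exp (-(a * X ω))) μ := by
  refine (integrable_const ((a * Real.exp 1)⁻¹)).mono'
    (hX.mul (Real.measurable_exp.comp (hX.const_mul a).neg)).aestronglyMeasurable ?_
  filter_upwards [hXnn] with ω hω
  rw [Real.norm_eq_abs, abs_of_nonneg (mul_nonneg hω (Real.exp_pos _).le)]
  exact aux_mul_exp_le ha hω

lemma lap_pos {Ω : Type*} [MeasurableSpace Ω] (μ : Measure Ω) [IsProbabilityMeasure μ]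
    {α c : ℝ} (hα0 : 0 < α) (hc : 0 < c) {X : Ω → ℝ} (hX : Measurable X)
    (hXnn : ∀ᵐ ω ∂μ, 0 ≤ X ω)
    (hlap : ∀ l : ℝ, 0 ≤ l → ∫ ω, Real.exp (-(l * X ω)) ∂μ = Real.exp (-(c * l ^ α))) :
    ∀ᵐ ω ∂μ, 0 < X ω := by
  have hAmeas : MeasurableSet {ω | X ω ≤ 0} := measurableSet_le hX measurable_const
  have key : ∀ n : ℕ, (μ {ω | X ω ≤ 0}).toReal ≤ Real.exp (-(c * (n : ℝ) ^ α)) := by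
    intro n
    have hint : Integrable ({ω | X ω ≤ 0}.indicator (fun _ => (1:ℝ))) μ :=
      (integrable_const (1:ℝ)).indicator hAmeas
    have hint2 : Integrable (fun ω => Real.exp (-((n : ℝ) * X ω))) μ := by
      refine (integrable_const (1:ℝ)).mono'
        (Real.measurable_exp.comp (hX.const_mul _).neg).aestronglyMeasurable ?_
      filter_upwards [hXnn] with ω hω
      rw [Real.norm_eq_abs, abs_of_pos (Real.exp_pos _)]
      exact Real.exp_le_one_iff.mpr (neg_nonpos.mpr (mul_nonneg (Nat.cast_nonneg n) hω))
    have hmono : {ω | X ω ≤ 0}.indicator (fun _ => (1:ℝ)) ≤ᵐ[μ]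
        fun ω => Real.exp (-((n : ℝ) * X ω)) := by
      filter_upwards [hXnn] with ω hω
      by_cases h : ω ∈ {ω | X ω ≤ 0}
      · have hx0 : X ω = 0 := le_antisymm h hω
        simp [Set.indicator_of_mem h, hx0]
      · simp only [Set.indicator_of_notMem h]
        exact (Real.exp_pos _).le
    have hI := integral_mono_ae hint hint2 hmono
    rwa [integral_indicator_const _ hAmeas, hlap n (Nat.cast_nonneg n), smul_eq_mul,
      mul_one] at hI
  have hlim : Tendsto (fun n : ℕ => Real.exp (-(c * (n : ℝ) ^ α))) atTop (𝓝 0) := by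
    apply Real.tendsto_exp_atBot.comp
    apply tendsto_neg_atBot_iff.mpr
    exact ((tendsto_rpow_atTop hα0).const_mul_atTop hc).comp tendsto_natCast_atTop_atTop
  have hA0 : (μ {ω | X ω ≤ 0}).toReal ≤ 0 :=
    ge_of_tendsto hlim (Filter.Eventually.of_forall key)
  have hμ0 : μ {ω | X ω ≤ 0} = 0 := by
    have h := le_antisymm hA0 ENNReal.toReal_nonneg
    rcases (ENNReal.toReal_eq_zero_iff _).mp h with h' | h'
    · exact h'
    · exact absurd h' (measure_ne_top μ _)
  rw [ae_iff]
  simpa [not_lt] using hμ0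

lemma lap_moment {Ω : Type*} [MeasurableSpace Ω] (μ : Measure Ω) [IsProbabilityMeasure μ]
    {α c : ℝ} (hα0 : 0 < α) (hc : 0 < c) {X : Ω → ℝ} (hX : Measurable X)
    (hXnn : ∀ᵐ ω ∂μ, 0 ≤ X ω)
    (hlap : ∀ l : ℝ, 0 ≤ l → ∫ ω, Real.exp (-(l * X ω)) ∂μ = Real.exp (-(c * l ^ α)))
    {s : ℝ} (hs : 0 < s) :
    ∫ ω, X ω * Real.exp (-(s * X ω)) ∂μ
      = c * α * s ^ (α - 1) * Real.exp (-(c * s ^ α)) := by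
  have hball : ∀ r ∈ Metric.ball s (s / 2), s / 2 ≤ r := by
    intro r hr
    rw [Metric.mem_ball, Real.dist_eq, abs_sub_lt_iff] at hr
    linarith [hr.2]
  have h := hasDerivAt_integral_of_dominated_loc_of_lip (μ := μ)
    (F := fun (r : ℝ) (ω : Ω) => Real.exp (-(r * X ω)))
    (F' := fun ω => Real.exp (-(s * X ω)) * (-(X ω)))
    (x₀ := s) (bound := fun _ => (s / 2 * Real.exp 1)⁻¹) (s := Metric.ball s (s / 2))
    (Metric.ball_mem_nhds s (by positivity))
    (Filter.Eventually.of_forall fun r =>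
      (Real.measurable_exp.comp (hX.const_mul r).neg).aestronglyMeasurable)
    ?_ ?_ ?_ (integrable_const _) ?_
  · obtain ⟨hF'int, hderivF⟩ := h
    have hG : HasDerivAt (fun r : ℝ => Real.exp (-(c * r ^ α)))
        (Real.exp (-(c * s ^ α)) * (-(c * (α * s ^ (α - 1))))) s :=
      (((Real.hasDerivAt_rpow_const (p := α) (Or.inl hs.ne')).const_mul c).neg).exp
    have heq : (fun r : ℝ => Real.exp (-(c * r ^ α)))
        =ᶠ[𝓝 s] fun r : ℝ => ∫ ω, Real.exp (-(r * X ω)) ∂μ := by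
      filter_upwards [eventually_gt_nhds hs] with r hr
      exact (hlap r hr.le).symm
    have hG' : HasDerivAt (fun r : ℝ => ∫ ω, Real.exp (-(r * X ω)) ∂μ)
        (Real.exp (-(c * s ^ α)) * (-(c * (α * s ^ (α - 1))))) s :=
      hG.congr_of_eventuallyEq heq.symm
    have huniq := hderivF.unique hG'
    have h2 : ∫ ω, Real.exp (-(s * X ω)) * (-(X ω)) ∂μ
        = -∫ ω, X ω * Real.exp (-(s * X ω)) ∂μ := by
      rw [← integral_neg]
      congr 1; funext ω; ring
    rw [h2] at huniq
    have hfin : ∫ ω, X ω * Real.exp (-(s * X ω)) ∂μ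
        = -(Real.exp (-(c * s ^ α)) * (-(c * (α * s ^ (α - 1))))) := by linarith
    rw [hfin]; ring
  · exact aux_integrable_exp μ hs.le hX hXnn
  · exact ((Real.measurable_exp.comp (hX.const_mul s).neg).mul
      hX.neg).aestronglyMeasurable
  · -- Lipschitz
    filter_upwards [hXnn] with ω hω
    apply Convex.lipschitzOnWith_of_nnnorm_hasDerivWithin_le (convex_ball s (s / 2))
      (f' := fun r => Real.exp (-(r * X ω)) * (-(X ω)))
    · intro r hr
      exact ((hasDerivAt_mul_const (X ω)).neg.exp).hasDerivWithinAt
    · intro r hr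
      rw [← NNReal.coe_le_coe, coe_nnnorm, Real.coe_nnabs, Real.norm_eq_abs, abs_mul, abs_neg,
        abs_of_pos (Real.exp_pos _), abs_of_nonneg hω,
        abs_of_nonneg (by positivity : (0:ℝ) ≤ (s / 2 * Real.exp 1)⁻¹)]
      have h1 : Real.exp (-(r * X ω)) ≤ Real.exp (-(s / 2 * X ω)) := by
        apply Real.exp_le_exp.mpr
        have := mul_le_mul_of_nonneg_right (hball r hr) hω
        linarith
      calc Real.exp (-(r * X ω)) * X ω ≤ Real.exp (-(s / 2 * X ω)) * X ω :=
            mul_le_mul_of_nonneg_right h1 hω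
        _ = X ω * Real.exp (-(s / 2 * X ω)) := by ring
        _ ≤ (s / 2 * Real.exp 1)⁻¹ := aux_mul_exp_le (by positivity) hω
  · exact Filter.Eventually.of_forall fun ω =>
      ((hasDerivAt_mul_const (X ω)).neg.exp : HasDerivAt _ _ s)

lemma exp_hasDeriv_aux {z : ℝ} (hz : 0 < z) (x : ℝ) :
    HasDerivAt (fun t : ℝ => -z⁻¹ * Real.exp (-(t * z))) (Real.exp (-(x * z))) x := by
  have h := ((hasDerivAt_mul_const z).neg.exp (x := x)).const_mul (-z⁻¹)
  simp only [Pi.neg_apply] at h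
  refine h.congr_deriv ?_
  field_simp

lemma exp_tendsto_aux {z : ℝ} (hz : 0 < z) :
    Tendsto (fun t : ℝ => -z⁻¹ * Real.exp (-(t * z))) atTop (𝓝 0) := by
  have h1 : Tendsto (fun t : ℝ => -(t * z)) atTop atBot :=
    tendsto_neg_atBot_iff.mpr (Tendsto.atTop_mul_const hz tendsto_id)
  have h2 : Tendsto (fun t : ℝ => Real.exp (-(t * z))) atTop (𝓝 0) :=
    Real.tendsto_exp_atBot.comp h1
  have := h2.const_mul (-z⁻¹)
  simpa using this

lemma integrableOn_exp_neg_mul {z : ℝ} (hz : 0 < z) :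
    IntegrableOn (fun t : ℝ => Real.exp (-(t * z))) (Ioi 0) :=
  integrableOn_Ioi_deriv_of_nonneg' (fun x _ => exp_hasDeriv_aux hz x)
    (fun x _ => (Real.exp_pos _).le) (exp_tendsto_aux hz)

lemma integral_exp_neg_mul {z : ℝ} (hz : 0 < z) :
    ∫ t in Ioi (0:ℝ), Real.exp (-(t * z)) = z⁻¹ := by
  have h := integral_Ioi_of_hasDerivAt_of_tendsto' (fun x _ => exp_hasDeriv_aux hz x)
    (integrableOn_exp_neg_mul hz) (exp_tendsto_aux hz)
  simpa using h

lemma rpow_exp_hasDeriv_aux {α c : ℝ} (hc : 0 < c) {x : ℝ} (hx : 0 < x) :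
    HasDerivAt (fun t : ℝ => -c⁻¹ * Real.exp (-(c * t ^ α)))
      (α * x ^ (α - 1) * Real.exp (-(c * x ^ α))) x := by
  have h := ((((Real.hasDerivAt_rpow_const (p := α)
    (Or.inl hx.ne')).const_mul c).neg).exp).const_mul (-c⁻¹)
  simp only [Pi.neg_apply] at h
  refine h.congr_deriv ?_
  field_simp

lemma rpow_exp_tendsto_aux {α c : ℝ} (hα0 : 0 < α) (hc : 0 < c) :
    Tendsto (fun t : ℝ => -c⁻¹ * Real.exp (-(c * t ^ α))) atTop (𝓝 0) := by
  have h1 : Tendsto (fun t : ℝ => -(c * t ^ α)) atTop atBot :=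
    tendsto_neg_atBot_iff.mpr ((tendsto_rpow_atTop hα0).const_mul_atTop hc)
  have h2 := Real.tendsto_exp_atBot.comp h1
  have := h2.const_mul (-c⁻¹)
  simpa using this

lemma rpow_exp_cont_aux {α c : ℝ} (hα0 : 0 < α) :
    ContinuousWithinAt (fun t : ℝ => -c⁻¹ * Real.exp (-(c * t ^ α))) (Ici 0) 0 := by
  have c1 : ContinuousAt (fun x : ℝ => -(c * x ^ α)) 0 :=
    ((Real.continuousAt_rpow_const 0 α (Or.inr hα0.le)).const_mul c).neg
  have c2 : ContinuousAt (fun x : ℝ => Real.exp (-(c * x ^ α))) 0 :=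
    Real.continuous_exp.continuousAt.comp c1
  exact (continuousAt_const.mul c2).continuousWithinAt

lemma integrableOn_rpow_exp_aux {α c : ℝ} (hα0 : 0 < α) (hc : 0 < c) :
    IntegrableOn (fun t : ℝ => α * t ^ (α - 1) * Real.exp (-(c * t ^ α))) (Ioi 0) :=
  integrableOn_Ioi_deriv_of_nonneg (rpow_exp_cont_aux hα0)
    (fun x hx => rpow_exp_hasDeriv_aux hc hx)
    (fun x hx => by have h0 : (0:ℝ) < x := hx; positivity) (rpow_exp_tendsto_aux hα0 hc)

lemma integral_rpow_exp_aux {α c : ℝ} (hα0 : 0 < α) (hc : 0 < c) :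
    ∫ t in Ioi (0:ℝ), α * t ^ (α - 1) * Real.exp (-(c * t ^ α)) = c⁻¹ := by
  have h := integral_Ioi_of_hasDerivAt_of_nonneg (rpow_exp_cont_aux hα0)
    (fun x hx => rpow_exp_hasDeriv_aux hc hx)
    (fun x hx => by have h0 : (0:ℝ) < x := hx; positivity) (rpow_exp_tendsto_aux hα0 hc)
  rw [h, Real.zero_rpow hα0.ne']
  simp

/-- Lamperti's Stieltjes transform: for `0 < α < 1`, `0 < p < 1`, `q = 1 - p`, and
independent nonnegative `T_p, T_q` with `E[e^{-λT_p}] = e^{-pλ^α}`, `E[e^{-λT_q}] = e^{-qλ^α}`,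
the variable `M := T_p/(T_p+T_q)` satisfies
`E[(1+λM)⁻¹] = (q + p(1+λ)^{α-1})/(q + p(1+λ)^α)` for all `λ ≥ 0`. -/
theorem stmt9 {Ω : Type*} [MeasurableSpace Ω] (μ : Measure Ω) [IsProbabilityMeasure μ]
    (α p : ℝ) (hα0 : 0 < α) (hα1 : α < 1) (hp0 : 0 < p) (hp1 : p < 1)
    (q : ℝ) (hq : q = 1 - p)
    (Tp Tq : Ω → ℝ) (hTpmeas : Measurable Tp) (hTqmeas : Measurable Tq)
    (hTpnonneg : ∀ᵐ ω ∂μ, 0 ≤ Tp ω) (hTqnonneg : ∀ᵐ ω ∂μ, 0 ≤ Tq ω)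
    (hTplap : ∀ l : ℝ, 0 ≤ l → ∫ ω, Real.exp (-(l * Tp ω)) ∂μ = Real.exp (-(p * l ^ α)))
    (hTqlap : ∀ l : ℝ, 0 ≤ l → ∫ ω, Real.exp (-(l * Tq ω)) ∂μ = Real.exp (-(q * l ^ α)))
    (hindep : IndepFun Tp Tq μ)
    (M : Ω → ℝ) (hM : ∀ ω, M ω = Tp ω / (Tp ω + Tq ω))
    (l : ℝ) (hl : 0 ≤ l) :
    ∫ ω, (1 + l * M ω)⁻¹ ∂μ =
      (q + p * (1 + l) ^ (α - 1)) / (q + p * (1 + l) ^ α) := by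
  have hq0 : 0 < q := by rw [hq]; linarith
  have h1l : (0:ℝ) < 1 + l := by linarith
  set c : ℝ := q + p * (1 + l) ^ α with hc_def
  set K : ℝ := q + p * (1 + l) ^ (α - 1) with hK_def
  have hcpos : 0 < c := by have := Real.rpow_pos_of_pos h1l α; positivity
  have hKpos : 0 < K := by have := Real.rpow_pos_of_pos h1l (α - 1); positivity
  have hTp0 : ∀ᵐ ω ∂μ, 0 < Tp ω := lap_pos μ hα0 hp0 hTpmeas hTpnonneg hTplap
  have hMeq : M = fun ω => Tp ω / (Tp ω + Tq ω) := funext hM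
  have hMmeas : Measurable M := by rw [hMeq]; exact hTpmeas.div (hTpmeas.add hTqmeas)
  -- the function under the double integral
  set f : Ω → ℝ → ℝ := fun ω t =>
    (Tp ω + Tq ω) * Real.exp (-(t * ((1 + l) * Tp ω + Tq ω))) with hf_def
  have hf_meas : Measurable (Function.uncurry f) := by
    apply Measurable.mul
    · exact (hTpmeas.add hTqmeas).comp measurable_fst
    · exact Real.measurable_exp.comp
        (measurable_snd.mul (((hTpmeas.const_mul _).add hTqmeas).comp measurable_fst)).neg
  -- value of the ω-integral for fixed t > 0
  have hg : ∀ t : ℝ, 0 < t →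
      ∫ ω, f ω t ∂μ = K * (α * t ^ (α - 1) * Real.exp (-(c * t ^ α))) := by
    intro t ht
    have ha : 0 < t * (1 + l) := by positivity
    have hsplit : ∀ ω, f ω t =
        (Tp ω * Real.exp (-(t * (1 + l) * Tp ω))) * Real.exp (-(t * Tq ω)) +
        Real.exp (-(t * (1 + l) * Tp ω)) * (Tq ω * Real.exp (-(t * Tq ω))) := by
      intro ω
      have harg : -(t * ((1 + l) * Tp ω + Tq ω))
          = -(t * (1 + l) * Tp ω) + -(t * Tq ω) := by ring
      simp only [hf_def, harg, Real.exp_add]; ring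
    have hm1 : Measurable fun ω => Tp ω * Real.exp (-(t * (1 + l) * Tp ω)) :=
      hTpmeas.mul (Real.measurable_exp.comp (hTpmeas.const_mul _).neg)
    have hm2 : Measurable fun ω => Real.exp (-(t * Tq ω)) :=
      Real.measurable_exp.comp (hTqmeas.const_mul _).neg
    have hm3 : Measurable fun ω => Real.exp (-(t * (1 + l) * Tp ω)) :=
      Real.measurable_exp.comp (hTpmeas.const_mul _).neg
    have hm4 : Measurable fun ω => Tq ω * Real.exp (-(t * Tq ω)) :=
      hTqmeas.mul (Real.measurable_exp.comp (hTqmeas.const_mul _).neg)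
    have hint1 : Integrable (fun ω =>
        (Tp ω * Real.exp (-(t * (1 + l) * Tp ω))) * Real.exp (-(t * Tq ω))) μ := by
      refine (integrable_const ((t * (1 + l) * Real.exp 1)⁻¹)).mono'
        (hm1.mul hm2).aestronglyMeasurable ?_
      filter_upwards [hTpnonneg, hTqnonneg] with ω h1 h2
      rw [Real.norm_eq_abs, abs_of_nonneg (by positivity)]
      calc Tp ω * Real.exp (-(t * (1 + l) * Tp ω)) * Real.exp (-(t * Tq ω))
          ≤ Tp ω * Real.exp (-(t * (1 + l) * Tp ω)) * 1 := by
            apply mul_le_mul_of_nonneg_left _ (by positivity)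
            exact Real.exp_le_one_iff.mpr (neg_nonpos.mpr (by positivity))
        _ = Tp ω * Real.exp (-(t * (1 + l) * Tp ω)) := mul_one _
        _ ≤ (t * (1 + l) * Real.exp 1)⁻¹ := aux_mul_exp_le ha h1
    have hint2 : Integrable (fun ω =>
        Real.exp (-(t * (1 + l) * Tp ω)) * (Tq ω * Real.exp (-(t * Tq ω)))) μ := by
      refine (integrable_const ((t * Real.exp 1)⁻¹)).mono'
        (hm3.mul hm4).aestronglyMeasurable ?_
      filter_upwards [hTpnonneg, hTqnonneg] with ω h1 h2
      rw [Real.norm_eq_abs, abs_of_nonneg (by positivity)]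
      calc Real.exp (-(t * (1 + l) * Tp ω)) * (Tq ω * Real.exp (-(t * Tq ω)))
          ≤ 1 * (Tq ω * Real.exp (-(t * Tq ω))) := by
            apply mul_le_mul_of_nonneg_right _ (by positivity)
            exact Real.exp_le_one_iff.mpr (neg_nonpos.mpr (by positivity))
        _ = Tq ω * Real.exp (-(t * Tq ω)) := one_mul _
        _ ≤ (t * Real.exp 1)⁻¹ := aux_mul_exp_le ht h2
    have hprod1 : ∫ ω, (Tp ω * Real.exp (-(t * (1 + l) * Tp ω)))
          * Real.exp (-(t * Tq ω)) ∂μ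
        = (∫ ω, Tp ω * Real.exp (-(t * (1 + l) * Tp ω)) ∂μ)
          * ∫ ω, Real.exp (-(t * Tq ω)) ∂μ := by
      have hcomp : IndepFun (fun ω => Tp ω * Real.exp (-(t * (1 + l) * Tp ω)))
          (fun ω => Real.exp (-(t * Tq ω))) μ := by
        have := hindep.comp (φ := fun x : ℝ => x * Real.exp (-(t * (1 + l) * x)))
          (ψ := fun y : ℝ => Real.exp (-(t * y)))
          (measurable_id.mul (Real.measurable_exp.comp (measurable_id.const_mul _).neg))
          (Real.measurable_exp.comp (measurable_id.const_mul _).neg)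
        exact this
      exact IndepFun.integral_mul_eq_mul_integral hcomp
        (aux_integrable_mul_exp μ ha hTpmeas hTpnonneg).aestronglyMeasurable
        (aux_integrable_exp μ ht.le hTqmeas hTqnonneg).aestronglyMeasurable
    have hprod2 : ∫ ω, Real.exp (-(t * (1 + l) * Tp ω))
          * (Tq ω * Real.exp (-(t * Tq ω))) ∂μ
        = (∫ ω, Real.exp (-(t * (1 + l) * Tp ω)) ∂μ)
          * ∫ ω, Tq ω * Real.exp (-(t * Tq ω)) ∂μ := by
      have hcomp : IndepFun (fun ω => Real.exp (-(t * (1 + l) * Tp ω)))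
          (fun ω => Tq ω * Real.exp (-(t * Tq ω))) μ := by
        have := hindep.comp (φ := fun x : ℝ => Real.exp (-(t * (1 + l) * x)))
          (ψ := fun y : ℝ => y * Real.exp (-(t * y)))
          (Real.measurable_exp.comp (measurable_id.const_mul _).neg)
          (measurable_id.mul (Real.measurable_exp.comp (measurable_id.const_mul _).neg))
        exact this
      exact IndepFun.integral_mul_eq_mul_integral hcomp
        (aux_integrable_exp μ ha.le hTpmeas hTpnonneg).aestronglyMeasurable
        (aux_integrable_mul_exp μ ht hTqmeas hTqnonneg).aestronglyMeasurable
    calc ∫ ω, f ω t ∂μ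
        = ∫ ω, ((Tp ω * Real.exp (-(t * (1 + l) * Tp ω))) * Real.exp (-(t * Tq ω)) +
            Real.exp (-(t * (1 + l) * Tp ω)) * (Tq ω * Real.exp (-(t * Tq ω)))) ∂μ := by
          exact integral_congr_ae (Filter.Eventually.of_forall hsplit)
      _ = (∫ ω, (Tp ω * Real.exp (-(t * (1 + l) * Tp ω))) * Real.exp (-(t * Tq ω)) ∂μ) +
          ∫ ω, Real.exp (-(t * (1 + l) * Tp ω)) * (Tq ω * Real.exp (-(t * Tq ω))) ∂μ :=
          integral_add hint1 hint2
      _ = (p * α * (t * (1 + l)) ^ (α - 1) * Real.exp (-(p * (t * (1 + l)) ^ α)))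
            * Real.exp (-(q * t ^ α)) +
          Real.exp (-(p * (t * (1 + l)) ^ α)) *
            (q * α * t ^ (α - 1) * Real.exp (-(q * t ^ α))) := by
          rw [hprod1, hprod2,
            lap_moment μ hα0 hp0 hTpmeas hTpnonneg hTplap ha,
            lap_moment μ hα0 hq0 hTqmeas hTqnonneg hTqlap ht,
            hTqlap t ht.le, hTplap (t * (1 + l)) ha.le]
      _ = K * (α * t ^ (α - 1) * Real.exp (-(c * t ^ α))) := by
          rw [Real.mul_rpow ht.le h1l.le, Real.mul_rpow ht.le h1l.le]
          have hE : Real.exp (-(p * (t ^ α * (1 + l) ^ α))) * Real.exp (-(q * t ^ α))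
              = Real.exp (-(c * t ^ α)) := by
            rw [← Real.exp_add]; congr 1; rw [hc_def]; ring
          rw [hK_def, ← hE]; ring
  -- a.e. pointwise facts
  have hMfrac : ∀ᵐ ω ∂μ, (1 + l * M ω)⁻¹
      = (Tp ω + Tq ω) / ((1 + l) * Tp ω + Tq ω) := by
    filter_upwards [hTp0, hTqnonneg] with ω h1 h2
    have hst : 0 < Tp ω + Tq ω := by linarith
    have hz : 0 < (1 + l) * Tp ω + Tq ω := by nlinarith
    rw [hM]
    have key : 1 + l * (Tp ω / (Tp ω + Tq ω))
        = ((1 + l) * Tp ω + Tq ω) / (Tp ω + Tq ω) := by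
      field_simp; ring
    rw [key, inv_div]
  have hMnn : ∀ᵐ ω ∂μ, 0 ≤ M ω := by
    filter_upwards [hTp0, hTqnonneg] with ω h1 h2
    rw [hM]; positivity
  have hLHSnn : 0 ≤ᵐ[μ] fun ω => (1 + l * M ω)⁻¹ := by
    filter_upwards [hMnn] with ω h1
    have : 0 ≤ l * M ω := mul_nonneg hl h1
    positivity
  have hLHSint : Integrable (fun ω => (1 + l * M ω)⁻¹) μ := by
    refine (integrable_const (1:ℝ)).mono'
      ((measurable_const.add (hMmeas.const_mul l)).inv).aestronglyMeasurable ?_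
    filter_upwards [hMnn] with ω h1
    have h2 : 0 ≤ l * M ω := mul_nonneg hl h1
    rw [Real.norm_eq_abs, abs_of_nonneg (by positivity)]
    rw [inv_le_one_iff₀]
    right; linarith
  have step1 : ENNReal.ofReal (∫ ω, (1 + l * M ω)⁻¹ ∂μ)
      = ∫⁻ ω, ENNReal.ofReal ((1 + l * M ω)⁻¹) ∂μ :=
    ofReal_integral_eq_lintegral_ofReal hLHSint hLHSnn
  have step2 : ∫⁻ ω, ENNReal.ofReal ((1 + l * M ω)⁻¹) ∂μ
      = ∫⁻ ω, ∫⁻ t in Ioi (0:ℝ), ENNReal.ofReal (f ω t) ∂volume ∂μ := by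
    apply lintegral_congr_ae
    filter_upwards [hMfrac, hTp0, hTqnonneg] with ω hfrac h1 h2
    have hz : 0 < (1 + l) * Tp ω + Tq ω := by nlinarith
    have hC : 0 ≤ Tp ω + Tq ω := by linarith
    have hInt : ∫ t in Ioi (0:ℝ), f ω t
        = (Tp ω + Tq ω) / ((1 + l) * Tp ω + Tq ω) := by
      simp only [hf_def]
      rw [integral_const_mul, integral_exp_neg_mul hz, div_eq_mul_inv]
    rw [hfrac, ← hInt]
    apply ofReal_integral_eq_lintegral_ofReal
    · exact (integrableOn_exp_neg_mul hz).const_mul _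
    · exact Filter.Eventually.of_forall fun t => mul_nonneg hC (Real.exp_pos _).le
  have step3 : ∫⁻ ω, ∫⁻ t in Ioi (0:ℝ), ENNReal.ofReal (f ω t) ∂volume ∂μ
      = ∫⁻ t in Ioi (0:ℝ), ∫⁻ ω, ENNReal.ofReal (f ω t) ∂μ ∂volume :=
    lintegral_lintegral_swap hf_meas.ennreal_ofReal.aemeasurable
  have step4 : ∫⁻ t in Ioi (0:ℝ), ∫⁻ ω, ENNReal.ofReal (f ω t) ∂μ ∂volume
      = ∫⁻ t in Ioi (0:ℝ),
          ENNReal.ofReal (K * (α * t ^ (α - 1) * Real.exp (-(c * t ^ α)))) ∂volume := by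
    apply lintegral_congr_ae
    filter_upwards [ae_restrict_mem measurableSet_Ioi] with t ht
    have ht0 : (0:ℝ) < t := ht
    have hintt : Integrable (fun ω => f ω t) μ := by
      refine (integrable_const ((t * Real.exp 1)⁻¹)).mono' ?_ ?_
      · exact ((hTpmeas.add hTqmeas).mul (Real.measurable_exp.comp
          ((((hTpmeas.const_mul _).add hTqmeas).const_mul t).neg))).aestronglyMeasurable
      · filter_upwards [hTpnonneg, hTqnonneg] with ω h1 h2
        have hS : 0 ≤ Tp ω + Tq ω := by linarith
        simp only [hf_def]
        rw [Real.norm_eq_abs, abs_of_nonneg (by positivity)]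
        have hmono : Real.exp (-(t * ((1 + l) * Tp ω + Tq ω)))
            ≤ Real.exp (-(t * (Tp ω + Tq ω))) := by
          apply Real.exp_le_exp.mpr
          nlinarith [mul_nonneg (mul_nonneg ht0.le hl) h1]
        calc (Tp ω + Tq ω) * Real.exp (-(t * ((1 + l) * Tp ω + Tq ω)))
            ≤ (Tp ω + Tq ω) * Real.exp (-(t * (Tp ω + Tq ω))) :=
              mul_le_mul_of_nonneg_left hmono hS
          _ ≤ (t * Real.exp 1)⁻¹ := aux_mul_exp_le ht0 hS
    have hnn : 0 ≤ᵐ[μ] fun ω => f ω t := by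
      filter_upwards [hTpnonneg, hTqnonneg] with ω h1 h2
      simp only [hf_def]
      positivity
    rw [← ofReal_integral_eq_lintegral_ofReal hintt hnn, hg t ht0]
  have step5 : ∫⁻ t in Ioi (0:ℝ),
        ENNReal.ofReal (K * (α * t ^ (α - 1) * Real.exp (-(c * t ^ α)))) ∂volume
      = ENNReal.ofReal (K * c⁻¹) := by
    have hnn : 0 ≤ᵐ[volume.restrict (Ioi (0:ℝ))]
        fun t => K * (α * t ^ (α - 1) * Real.exp (-(c * t ^ α))) := by
      filter_upwards [ae_restrict_mem measurableSet_Ioi] with t ht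
      have ht0 : (0:ℝ) < t := ht
      positivity
    rw [← ofReal_integral_eq_lintegral_ofReal
      ((integrableOn_rpow_exp_aux hα0 hcpos).const_mul K) hnn,
      integral_const_mul, integral_rpow_exp_aux hα0 hcpos]
  have hfinal : ENNReal.ofReal (∫ ω, (1 + l * M ω)⁻¹ ∂μ) = ENNReal.ofReal (K * c⁻¹) := by
    rw [step1, step2, step3, step4, step5]
  have hLHS0 : 0 ≤ ∫ ω, (1 + l * M ω)⁻¹ ∂μ := integral_nonneg_of_ae hLHSnn
  have hres := (ENNReal.ofReal_eq_ofReal_iff hLHS0 (by positivity)).mp hfinal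
  rw [hres, div_eq_mul_inv]
end

section
/- Let P = (P_j)_{j≥1} be a random discrete distribution, let X be an integrable real random variable, and let (X_j)_{j≥1} be i.i.d. copies of X independent of P. Then the series X̃ := Σ_{j≥1} X_j·P_j converges absolutely almost surely, E[X̃] = E[X], and X̃ is dominated by X in the convex order: for every convex function φ: ℝ → ℝ with E|φ(X)| < ∞, one has E[φ(X̃)] ≤ E[φ(X)]. In particular, E|X̃|^r ≤ E|X|^r for every real r ≥ 1. -/
open MeasureTheory ProbabilityTheory

/-- Every convex function on `ℝ` has an affine minorant. -/
lemma aux_convex_affine_minorant {φ : ℝ → ℝ} (hφ : ConvexOn ℝ Set.univ φ) :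
    ∃ c b : ℝ, ∀ t, c * t + b ≤ φ t := by
  have hφc : Continuous φ := continuousOn_univ.1 (hφ.continuousOn isOpen_univ)
  obtain ⟨z, hz, hmin⟩ := isCompact_Icc.exists_isMinOn (Set.nonempty_Icc.2 (zero_le_one (α := ℝ)))
    hφc.continuousOn
  set c : ℝ := φ 1 - φ 0 with hc
  set b : ℝ := min (φ 0) (φ z) - |c| with hb
  refine ⟨c, b, fun t => ?_⟩
  have hb0 : b ≤ φ 0 := by
    have : min (φ 0) (φ z) ≤ φ 0 := min_le_left _ _
    have : b ≤ min (φ 0) (φ z) := by simp [hb, abs_nonneg]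
    linarith [min_le_left (φ 0) (φ z)]
  rcases lt_trichotomy t 0 with ht | ht | ht
  · have hs := hφ.slope_mono_adjacent (Set.mem_univ t) (Set.mem_univ 1) ht zero_lt_one
    have h1 : (φ 0 - φ t) / (0 - t) ≤ c := by simpa [hc] using hs
    have hpos : 0 < 0 - t := by linarith
    rw [div_le_iff₀ hpos] at h1
    nlinarith
  · subst ht; simpa using hb0
  · rcases le_or_gt t 1 with ht1 | ht1
    · have hm : φ z ≤ φ t := hmin (Set.mem_Icc.2 ⟨le_of_lt ht, ht1⟩)
      have hct : c * t ≤ |c| := by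
        calc c * t ≤ |c * t| := le_abs_self _
        _ = |c| * |t| := abs_mul _ _
        _ ≤ |c| * 1 := by
            have : |t| ≤ 1 := abs_le.2 ⟨by linarith, ht1⟩
            nlinarith [abs_nonneg c]
        _ = |c| := mul_one _
      have : b ≤ φ z - |c| := by simp [hb, min_le_right]
      linarith
    · have hs := hφ.slope_mono_adjacent (Set.mem_univ 0) (Set.mem_univ t) zero_lt_one ht1
      have h1 : c ≤ (φ t - φ 1) / (t - 1) := by simpa [hc] using hs
      have hpos : 0 < t - 1 := by linarith
      rw [le_div_iff₀ hpos] at h1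
      have hφ1 : φ 1 = φ 0 + c := by rw [hc]; ring
      nlinarith

/-- Jensen's inequality for countable convex combinations. -/
lemma aux_jensen_tsum {φ : ℝ → ℝ} (hφ : ConvexOn ℝ Set.univ φ) (hφc : Continuous φ)
    (p : ℕ → ℝ) (hp : ∀ j, 0 ≤ p j) (hp1 : ∑' j, p j = 1)
    (x : ℕ → ℝ) (h1 : Summable fun j => |x j| * p j) (h2 : Summable fun j => |φ (x j)| * p j) :
    φ (∑' j, x j * p j) ≤ ∑' j, φ (x j) * p j := by
  classical
  set m : Measure ℕ := Measure.sum (fun j => ENNReal.ofReal (p j) • Measure.dirac j) with hm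
  have hpsummable : Summable p := by
    by_contra h
    rw [tsum_eq_zero_of_not_summable h] at hp1
    norm_num at hp1
  have hmsing : ∀ i : ℕ, m {i} = ENNReal.ofReal (p i) := by
    intro i
    rw [hm, Measure.sum_apply _ (measurableSet_singleton i)]
    rw [tsum_eq_single i]
    · simp
    · intro j hj
      simp [Measure.dirac_apply' _ (measurableSet_singleton i), Set.indicator,
        hj]
  have hofsum : ∑' j, ENNReal.ofReal (p j) = 1 := by
    rw [← ENNReal.ofReal_tsum_of_nonneg hp hpsummable, hp1, ENNReal.ofReal_one]
  have : IsProbabilityMeasure m := by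
    constructor
    have : m Set.univ = ∑' i : ℕ, m {i} := by
      rw [← Set.biUnion_of_singleton (Set.univ : Set ℕ)]
      rw [measure_biUnion (Set.countable_univ) ?_ (fun i _ => measurableSet_singleton i)]
      · exact tsum_univ fun i => m {i}
      · intro i _ j _ hij
        simp [Function.onFun, Set.disjoint_singleton, hij]
    rw [this]
    simp_rw [hmsing]
    exact hofsum
  -- integrability of a function w.r.t. m given summability
  have key : ∀ f : ℕ → ℝ, (Summable fun j => |f j| * p j) →
      Integrable f m ∧ ∫ j, f j ∂m = ∑' j, f j * p j := by
    intro f hf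
    have hfint : Integrable f m := by
      constructor
      · exact (measurable_from_top (f := f)).aestronglyMeasurable
      · rw [MeasureTheory.hasFiniteIntegral_iff_norm]
        rw [lintegral_countable' _]
        have heq : ∀ j : ℕ, ENNReal.ofReal ‖f j‖ * m {j} = ENNReal.ofReal (|f j| * p j) := by
          intro j
          rw [hmsing, ← ENNReal.ofReal_mul (by positivity)]
          simp [abs_nonneg]
        simp_rw [heq]
        rw [← ENNReal.ofReal_tsum_of_nonneg (fun j => mul_nonneg (abs_nonneg _) (hp j)) hf]
        exact ENNReal.ofReal_lt_top
    refine ⟨hfint, ?_⟩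
    rw [MeasureTheory.integral_countable' hfint]
    apply tsum_congr
    intro j
    rw [measureReal_def, hmsing, ENNReal.toReal_ofReal (hp j), smul_eq_mul, mul_comm]
  obtain ⟨hxint, hxval⟩ := key x h1
  obtain ⟨hφxint, hφxval⟩ := key (fun j => φ (x j)) h2
  have := hφ.map_integral_le (μ := m) hφc.continuousOn isClosed_univ
    (Filter.Eventually.of_forall fun _ => Set.mem_univ _) hxint hφxint
  rwa [hxval, hφxval] at this

lemma aux_core {Ω : Type*} [MeasurableSpace Ω] (μ : Measure Ω) [IsProbabilityMeasure μ]
    (P : ℕ → Ω → ℝ) (hPmeas : ∀ j, Measurable (P j))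
    (hPnonneg : ∀ j, ∀ᵐ ω ∂μ, 0 ≤ P j ω)
    (hPsum : ∀ᵐ ω ∂μ, ∑' j, P j ω = 1)
    (Y₀ : Ω → ℝ) (hY0int : Integrable Y₀ μ)
    (Y : ℕ → Ω → ℝ) (hYmeas : ∀ j, Measurable (Y j))
    (hYid : ∀ j, IdentDistrib (Y j) Y₀ μ μ)
    (hYindep : ∀ j, IndepFun (Y j) (P j) μ) :
    (∀ᵐ ω ∂μ, Summable fun j => |Y j ω| * P j ω) ∧
    Integrable (fun ω => ∑' j, Y j ω * P j ω) μ ∧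
    ∫ ω, (∑' j, Y j ω * P j ω) ∂μ = ∫ ω, Y₀ ω ∂μ := by
  classical
  have hPae : ∀ᵐ ω ∂μ, (∀ j, 0 ≤ P j ω) ∧ ∑' j, P j ω = 1 :=
    (ae_all_iff.2 hPnonneg).and hPsum
  -- a.e., `P · ω` is a summable nonneg sequence of sum 1
  have hPsummable : ∀ᵐ ω ∂μ, Summable fun j => P j ω := by
    filter_upwards [hPae] with ω ⟨h0, h1⟩
    by_contra h
    rw [tsum_eq_zero_of_not_summable h] at h1
    norm_num at h1
  have hPofReal : ∀ᵐ ω ∂μ, ∑' j, ENNReal.ofReal (P j ω) = 1 := by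
    filter_upwards [hPae, hPsummable] with ω ⟨h0, h1⟩ hs
    rw [← ENNReal.ofReal_tsum_of_nonneg h0 hs, h1, ENNReal.ofReal_one]
  -- total mass of the lintegrals of ofReal ∘ P
  have hPlint : ∑' j, ∫⁻ ω, ENNReal.ofReal (P j ω) ∂μ = 1 := by
    rw [← MeasureTheory.lintegral_tsum (fun j => ((hPmeas j).ennreal_ofReal).aemeasurable)]
    rw [lintegral_congr_ae hPofReal]
    simp
  -- norm-lintegral of each Y j
  have hYnorm : ∀ j, ∫⁻ ω, (‖Y j ω‖₊ : ENNReal) ∂μ = ∫⁻ ω, (‖Y₀ ω‖₊ : ENNReal) ∂μ := by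
    intro j
    exact ((hYid j).comp (measurable_coe_nnreal_ennreal.comp measurable_nnnorm)).lintegral_eq
  have hY0fin : ∫⁻ ω, (‖Y₀ ω‖₊ : ENNReal) ∂μ < ⊤ := hY0int.2
  -- key total finiteness
  have hterm : ∀ j, ∫⁻ ω, (‖Y j ω‖₊ : ENNReal) * ENNReal.ofReal (P j ω) ∂μ =
      (∫⁻ ω, (‖Y₀ ω‖₊ : ENNReal) ∂μ) * ∫⁻ ω, ENNReal.ofReal (P j ω) ∂μ := by
    intro j
    have hmf : Measurable fun ω => (‖Y j ω‖₊ : ENNReal) := (hYmeas j).nnnorm.coe_nnreal_ennreal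
    have hmg : Measurable fun ω => ENNReal.ofReal (P j ω) := (hPmeas j).ennreal_ofReal
    have hind : IndepFun (fun ω => (‖Y j ω‖₊ : ENNReal)) (fun ω => ENNReal.ofReal (P j ω)) μ :=
      (hYindep j).comp (measurable_nnnorm.coe_nnreal_ennreal) ENNReal.measurable_ofReal
    have h := lintegral_mul_eq_lintegral_mul_lintegral_of_indepFun hmf hmg hind
    rw [← hYnorm j]
    exact h
  have hS : ∑' j, ∫⁻ ω, (‖Y j ω‖₊ : ENNReal) * ENNReal.ofReal (P j ω) ∂μ =
      ∫⁻ ω, (‖Y₀ ω‖₊ : ENNReal) ∂μ := by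
    simp_rw [hterm]
    rw [ENNReal.tsum_mul_left, hPlint, mul_one]
  have hSfin : ∫⁻ ω, ∑' j, (‖Y j ω‖₊ : ENNReal) * ENNReal.ofReal (P j ω) ∂μ ≠ ⊤ := by
    rw [MeasureTheory.lintegral_tsum
      (f := fun j ω => (‖Y j ω‖₊ : ENNReal) * ENNReal.ofReal (P j ω)) (fun j =>
      ((hYmeas j).nnnorm.coe_nnreal_ennreal.mul ((hPmeas j).ennreal_ofReal)).aemeasurable), hS]
    exact hY0fin.ne
  -- a.e. summability
  have hae_lt : ∀ᵐ ω ∂μ, ∑' j, (‖Y j ω‖₊ : ENNReal) * ENNReal.ofReal (P j ω) < ⊤ :=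
    ae_lt_top (Measurable.ennreal_tsum fun j =>
      (hYmeas j).nnnorm.coe_nnreal_ennreal.mul ((hPmeas j).ennreal_ofReal)) hSfin
  have hsummable : ∀ᵐ ω ∂μ, Summable fun j => |Y j ω| * P j ω := by
    filter_upwards [hae_lt, hPae] with ω hlt ⟨h0, _⟩
    have heq : ∀ j, (‖Y j ω‖₊ : ENNReal) * ENNReal.ofReal (P j ω) =
        ENNReal.ofReal (|Y j ω| * P j ω) := by
      intro j
      rw [ENNReal.ofReal_mul (abs_nonneg _), ← enorm_eq_nnnorm, Real.enorm_eq_ofReal_abs]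
    rw [show (fun j => (‖Y j ω‖₊ : ENNReal) * ENNReal.ofReal (P j ω)) =
      (fun j => ENNReal.ofReal (|Y j ω| * P j ω)) from funext heq] at hlt
    have := ENNReal.summable_toReal hlt.ne
    refine this.congr fun j => ?_
    rw [ENNReal.toReal_ofReal (mul_nonneg (abs_nonneg _) (h0 j))]
  -- integrability of P j
  have hPjint : ∀ j, Integrable (P j) μ := by
    intro j
    refine Integrable.mono' (integrable_const 1) (hPmeas j).aestronglyMeasurable ?_
    filter_upwards [hPae, hPsummable] with ω ⟨h0, h1⟩ hsum
    rw [Real.norm_eq_abs, abs_of_nonneg (h0 j)]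
    calc P j ω ≤ ∑' i, P i ω := hsum.le_tsum j (fun i _ => h0 i)
    _ = 1 := h1
  -- a.e. measurability of the tsum
  have hTmeas : AEMeasurable (fun ω => ∑' j, Y j ω * P j ω) μ := by
    have hSnmeas : ∀ n : ℕ, Measurable fun ω => ∑ j ∈ Finset.range n, Y j ω * P j ω :=
      fun n => Finset.measurable_sum _ (fun j _ => (hYmeas j).mul (hPmeas j))
    have htends : ∀ᵐ ω ∂μ, Filter.Tendsto (fun n => ∑ j ∈ Finset.range n, Y j ω * P j ω)
        Filter.atTop (nhds (∑' j, Y j ω * P j ω)) := by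
      filter_upwards [hsummable, hPae] with ω hs ⟨h0, _⟩
      have habs : Summable fun j => |Y j ω * P j ω| := by
        refine hs.congr fun j => ?_
        rw [abs_mul, abs_of_nonneg (h0 j)]
      exact habs.of_abs.hasSum.tendsto_sum_nat
    exact aemeasurable_of_tendsto_metrizable_ae Filter.atTop
      (fun n => (hSnmeas n).aemeasurable) htends
  -- pointwise bound on the norm of the tsum
  have hbound : ∀ᵐ ω ∂μ, (‖∑' j, Y j ω * P j ω‖₊ : ENNReal) ≤
      ∑' j, (‖Y j ω‖₊ : ENNReal) * ENNReal.ofReal (P j ω) := by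
    filter_upwards [hsummable, hPae] with ω hs ⟨h0, _⟩
    have habs : Summable fun j => |Y j ω * P j ω| := by
      refine hs.congr fun j => ?_
      rw [abs_mul, abs_of_nonneg (h0 j)]
    have hnorm : Summable fun j => ‖Y j ω * P j ω‖ := by
      simpa only [Real.norm_eq_abs] using habs
    calc (‖∑' j, Y j ω * P j ω‖₊ : ENNReal)
        = ENNReal.ofReal ‖∑' j, Y j ω * P j ω‖ := by
          rw [Real.norm_eq_abs, ← enorm_eq_nnnorm, Real.enorm_eq_ofReal_abs]
      _ ≤ ENNReal.ofReal (∑' j, ‖Y j ω * P j ω‖) :=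
          ENNReal.ofReal_le_ofReal (norm_tsum_le_tsum_norm hnorm)
      _ = ∑' j, ENNReal.ofReal ‖Y j ω * P j ω‖ :=
          ENNReal.ofReal_tsum_of_nonneg (fun j => norm_nonneg _) hnorm
      _ = ∑' j, (‖Y j ω‖₊ : ENNReal) * ENNReal.ofReal (P j ω) := by
          refine tsum_congr fun j => ?_
          rw [Real.norm_eq_abs, abs_mul, abs_of_nonneg (h0 j),
            ENNReal.ofReal_mul (abs_nonneg _), ← enorm_eq_nnnorm, Real.enorm_eq_ofReal_abs]
  have hTint : Integrable (fun ω => ∑' j, Y j ω * P j ω) μ := by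
    refine ⟨hTmeas.aestronglyMeasurable, ?_⟩
    show (∫⁻ ω, (‖∑' j, Y j ω * P j ω‖₊ : ENNReal) ∂μ) < ⊤
    calc (∫⁻ ω, (‖∑' j, Y j ω * P j ω‖₊ : ENNReal) ∂μ)
        ≤ ∫⁻ ω, ∑' j, (‖Y j ω‖₊ : ENNReal) * ENNReal.ofReal (P j ω) ∂μ :=
          lintegral_mono_ae hbound
      _ < ⊤ := lt_top_iff_ne_top.2 hSfin
  refine ⟨hsummable, hTint, ?_⟩
  -- the value of the integral
  have hnormeq : ∀ j, ∫⁻ ω, (‖Y j ω * P j ω‖₊ : ENNReal) ∂μ =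
      ∫⁻ ω, (‖Y j ω‖₊ : ENNReal) * ENNReal.ofReal (P j ω) ∂μ := by
    intro j
    refine lintegral_congr_ae ?_
    filter_upwards [hPnonneg j] with ω h0
    rw [← enorm_eq_nnnorm, Real.enorm_eq_ofReal_abs, abs_mul, abs_of_nonneg h0,
      ENNReal.ofReal_mul (abs_nonneg _), ← enorm_eq_nnnorm, Real.enorm_eq_ofReal_abs]
  have hswap := MeasureTheory.integral_tsum (f := fun j ω => Y j ω * P j ω)
    (fun j => ((hYmeas j).mul (hPmeas j)).aestronglyMeasurable)
    (by simp only [enorm_eq_nnnorm]; rw [show (fun (j : ℕ) => ∫⁻ ω, (‖Y j ω * P j ω‖₊ : ENNReal) ∂μ) =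
          (fun j => ∫⁻ ω, (‖Y j ω‖₊ : ENNReal) * ENNReal.ofReal (P j ω) ∂μ) from
          funext hnormeq, hS]
        exact hY0fin.ne)
  rw [hswap]
  have hjval : ∀ j, ∫ ω, Y j ω * P j ω ∂μ = (∫ ω, Y₀ ω ∂μ) * ∫ ω, P j ω ∂μ := by
    intro j
    have h := (hYindep j).integral_fun_mul_eq_mul_integral ((hYid j).integrable_iff.2 hY0int).aestronglyMeasurable (hPjint j).aestronglyMeasurable
    rw [← (hYid j).integral_eq]
    exact h
  have hPsum_int : ∑' j, ∫ ω, P j ω ∂μ = 1 := by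
    have hPnormeq : ∀ j, ∫⁻ ω, (‖P j ω‖₊ : ENNReal) ∂μ =
        ∫⁻ ω, ENNReal.ofReal (P j ω) ∂μ := by
      intro j
      refine lintegral_congr_ae ?_
      filter_upwards [hPnonneg j] with ω h0
      rw [← enorm_eq_nnnorm, Real.enorm_eq_ofReal_abs, abs_of_nonneg h0]
    have h1 : ∫ ω, ∑' j, P j ω ∂μ = 1 := by
      rw [integral_congr_ae (g := fun _ => (1 : ℝ)) hPsum]
      simp
    rw [← MeasureTheory.integral_tsum (f := fun j ω => P j ω)
      (fun j => (hPmeas j).aestronglyMeasurable)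
      (by simp only [enorm_eq_nnnorm]; rw [show (fun (j : ℕ) => ∫⁻ ω, (‖P j ω‖₊ : ENNReal) ∂μ) =
            (fun j => ∫⁻ ω, ENNReal.ofReal (P j ω) ∂μ) from funext hPnormeq, hPlint]
          exact ENNReal.one_ne_top), h1]
  rw [show (fun (j : ℕ) => ∫ ω, Y j ω * P j ω ∂μ) =
    (fun j => (∫ ω, Y₀ ω ∂μ) * ∫ ω, P j ω ∂μ) from funext hjval]
  rw [tsum_mul_left, hPsum_int, mul_one]

lemma aux_key {Ω : Type*} [MeasurableSpace Ω] (μ : Measure Ω) [IsProbabilityMeasure μ]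
    (P : ℕ → Ω → ℝ) (hPmeas : ∀ j, Measurable (P j))
    (hPnonneg : ∀ j, ∀ᵐ ω ∂μ, 0 ≤ P j ω)
    (hPsum : ∀ᵐ ω ∂μ, ∑' j, P j ω = 1)
    (X : Ω → ℝ) (hXint : Integrable X μ)
    (Xs : ℕ → Ω → ℝ) (hXsmeas : ∀ j, Measurable (Xs j))
    (hXsid : ∀ j, IdentDistrib (Xs j) X μ μ)
    (hpair : ∀ j, IndepFun (Xs j) (P j) μ)
    (φ : ℝ → ℝ) (hφ : ConvexOn ℝ Set.univ φ)
    (hφint : Integrable (fun ω => φ (X ω)) μ) :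
    Integrable (fun ω => φ (∑' j, Xs j ω * P j ω)) μ ∧
    ∫ ω, φ (∑' j, Xs j ω * P j ω) ∂μ ≤ ∫ ω, φ (X ω) ∂μ := by
  have hφc : Continuous φ := continuousOn_univ.1 (hφ.continuousOn isOpen_univ)
  obtain ⟨hsum1, hTint, _⟩ := aux_core μ P hPmeas hPnonneg hPsum X hXint Xs hXsmeas hXsid hpair
  obtain ⟨hsum2, hgint, hgval⟩ := aux_core μ P hPmeas hPnonneg hPsum
    (fun ω => φ (X ω)) hφint (fun j ω => φ (Xs j ω))
    (fun j => hφc.measurable.comp (hXsmeas j))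
    (fun j => (hXsid j).comp hφc.measurable)
    (fun j => (hpair j).comp hφc.measurable measurable_id)
  have hPae : ∀ᵐ ω ∂μ, (∀ j, 0 ≤ P j ω) ∧ ∑' j, P j ω = 1 :=
    (ae_all_iff.2 hPnonneg).and hPsum
  have hjensen : ∀ᵐ ω ∂μ, φ (∑' j, Xs j ω * P j ω) ≤ ∑' j, φ (Xs j ω) * P j ω := by
    filter_upwards [hsum1, hsum2, hPae] with ω h1 h2 ⟨h0, hp1⟩
    exact aux_jensen_tsum hφ hφc (fun j => P j ω) h0 hp1 (fun j => Xs j ω) h1 h2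
  obtain ⟨c, b, hcb⟩ := aux_convex_affine_minorant hφ
  have hφTint : Integrable (fun ω => φ (∑' j, Xs j ω * P j ω)) μ := by
    refine Integrable.mono' ((((hTint.const_mul c).add (integrable_const b)).abs.add hgint.abs))
      (hφc.measurable.comp_aemeasurable hTint.aemeasurable).aestronglyMeasurable ?_
    filter_upwards [hjensen] with ω hj
    simp only [Pi.add_apply]
    rw [Real.norm_eq_abs, abs_le]
    constructor
    · have h1 := hcb (∑' j, Xs j ω * P j ω)
      have h2 := neg_abs_le (c * (∑' j, Xs j ω * P j ω) + b)
      have h3 := abs_nonneg (∑' j, φ (Xs j ω) * P j ω)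
      linarith
    · have h2 := le_abs_self (∑' j, φ (Xs j ω) * P j ω)
      have h3 := abs_nonneg (c * (∑' j, Xs j ω * P j ω) + b)
      linarith
  refine ⟨hφTint, ?_⟩
  calc ∫ ω, φ (∑' j, Xs j ω * P j ω) ∂μ
      ≤ ∫ ω, ∑' j, φ (Xs j ω) * P j ω ∂μ := integral_mono_ae hφTint hgint hjensen
    _ = ∫ ω, φ (X ω) ∂μ := hgval

lemma aux_abs_rpow_convex {r : ℝ} (hr : 1 ≤ r) :
    ConvexOn ℝ Set.univ (fun t : ℝ => |t| ^ r) := by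
  have h1 : ConvexOn ℝ (Set.Ici (0 : ℝ)) fun y : ℝ => y ^ r := convexOn_rpow hr
  have himg : (fun t : ℝ => |t|) '' Set.univ = Set.Ici (0 : ℝ) := by
    ext y
    constructor
    · rintro ⟨t, -, rfl⟩
      exact abs_nonneg t
    · intro hy
      exact ⟨y, Set.mem_univ y, abs_of_nonneg hy⟩
  have h2 : ConvexOn ℝ Set.univ (fun t : ℝ => |t|) := by
    have := convexOn_univ_norm (E := ℝ)
    exact this
  have hmono : MonotoneOn (fun y : ℝ => y ^ r) (Set.Ici (0 : ℝ)) :=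
    fun x hx y _ hxy => Real.rpow_le_rpow hx hxy (le_trans zero_le_one hr)
  have h1' : ConvexOn ℝ ((fun t : ℝ => |t|) '' Set.univ) fun y : ℝ => y ^ r := himg ▸ h1
  have hmono' : MonotoneOn (fun y : ℝ => y ^ r) ((fun t : ℝ => |t|) '' Set.univ) :=
    himg ▸ hmono
  exact h1'.comp h2 hmono'

/-- Convex order domination of a `P`-mean: for a random discrete distribution `P`, an
integrable `X` and i.i.d. copies `(X_j)` of `X` independent of `P`, the series
`X̃ := ∑ X_j P_j` converges absolutely a.s., `E[X̃] = E[X]`, `E[φ(X̃)] ≤ E[φ(X)]` for every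
convex `φ` with `E|φ(X)| < ∞`, and `E|X̃|^r ≤ E|X|^r` for every `r ≥ 1`. -/
theorem stmt10 {Ω : Type*} [MeasurableSpace Ω] (μ : Measure Ω) [IsProbabilityMeasure μ]
    (P : ℕ → Ω → ℝ) (hPmeas : ∀ j, Measurable (P j))
    (hPnonneg : ∀ j, ∀ᵐ ω ∂μ, 0 ≤ P j ω)
    (hPsum : ∀ᵐ ω ∂μ, ∑' j, P j ω = 1)
    (X : Ω → ℝ) (hXmeas : Measurable X) (hXint : Integrable X μ)
    (Xs : ℕ → Ω → ℝ) (hXsmeas : ∀ j, Measurable (Xs j))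
    (hXsiid : iIndepFun Xs μ)
    (hXsid : ∀ j, IdentDistrib (Xs j) X μ μ)
    (hXsindep : IndepFun (fun ω => fun j => Xs j ω) (fun ω => fun j => P j ω) μ) :
    (∀ᵐ ω ∂μ, Summable fun j => |Xs j ω * P j ω|) ∧
    (∫ ω, (∑' j, Xs j ω * P j ω) ∂μ = ∫ ω, X ω ∂μ) ∧
    (∀ φ : ℝ → ℝ, ConvexOn ℝ Set.univ φ → Integrable (fun ω => φ (X ω)) μ →
      ∫ ω, φ (∑' j, Xs j ω * P j ω) ∂μ ≤ ∫ ω, φ (X ω) ∂μ) ∧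
    (∀ r : ℝ, 1 ≤ r →
      ∫⁻ ω, ENNReal.ofReal (|∑' j, Xs j ω * P j ω| ^ r) ∂μ ≤
        ∫⁻ ω, ENNReal.ofReal (|X ω| ^ r) ∂μ) := by
  have hpair : ∀ j, IndepFun (Xs j) (P j) μ := fun j =>
    hXsindep.comp (measurable_pi_apply j) (measurable_pi_apply j)
  obtain ⟨hsum1, hTint, hTval⟩ :=
    aux_core μ P hPmeas hPnonneg hPsum X hXint Xs hXsmeas hXsid hpair
  refine ⟨?_, hTval, ?_, ?_⟩
  · filter_upwards [hsum1, ae_all_iff.2 hPnonneg] with ω hs h0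
    refine hs.congr fun j => ?_
    rw [abs_mul, abs_of_nonneg (h0 j)]
  · intro φ hφ hφint
    exact (aux_key μ P hPmeas hPnonneg hPsum X hXint Xs hXsmeas hXsid hpair φ hφ hφint).2
  · intro r hr
    have hconv : ConvexOn ℝ Set.univ (fun t : ℝ => |t| ^ r) := aux_abs_rpow_convex hr
    by_cases hfin : ∫⁻ ω, ENNReal.ofReal (|X ω| ^ r) ∂μ = ⊤
    · rw [hfin]; exact le_top
    · have hφXmeas : Measurable fun ω => |X ω| ^ r :=
        (continuous_abs.rpow_const fun x => Or.inr (le_trans zero_le_one hr)).measurable.comp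
          hXmeas
      have hφXint : Integrable (fun ω => |X ω| ^ r) μ := by
        refine ⟨hφXmeas.aestronglyMeasurable, ?_⟩
        show (∫⁻ ω, (‖|X ω| ^ r‖₊ : ENNReal) ∂μ) < ⊤
        have heq : ∀ ω, (‖|X ω| ^ r‖₊ : ENNReal) = ENNReal.ofReal (|X ω| ^ r) := fun ω => by
          rw [← enorm_eq_nnnorm, Real.enorm_eq_ofReal_abs, abs_of_nonneg (Real.rpow_nonneg (abs_nonneg _) r)]
        simp_rw [heq]
        exact lt_top_iff_ne_top.2 hfin
      obtain ⟨hint, hle⟩ := aux_key μ P hPmeas hPnonneg hPsum X hXint Xs hXsmeas hXsid hpair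
        (fun t => |t| ^ r) hconv hφXint
      rw [← ofReal_integral_eq_lintegral_ofReal hint
        (Filter.Eventually.of_forall fun ω => Real.rpow_nonneg (abs_nonneg _) r),
        ← ofReal_integral_eq_lintegral_ofReal hφXint
        (Filter.Eventually.of_forall fun ω => Real.rpow_nonneg (abs_nonneg _) r)]
      exact ENNReal.ofReal_le_ofReal hle
end

section
/- Let m ≥ 1 and θ_1, …, θ_m > 0 with θ := Σ_{i=1}^m θ_i, and let (P_1, …, P_m) have the Dirichlet(θ_1, …, θ_m) distribution, i.e. P_i = γ_i/(γ_1 + ⋯ + γ_m) for independent random variables γ_i with Gamma(θ_i) distribution. Then for all fixed nonnegative reals x_1, …, x_m and all λ ≥ 0: E[(1 + λ·Σ_{i=1}^m x_i·P_i)^{-θ}] = Π_{i=1}^m (1 + λ·x_i)^{-θ_i}; moreover, for γ a Gamma(θ) random variable independent of (P_1, …, P_m), E[exp(-λ·γ·Σ_{i=1}^m x_i·P_i)] equals the same product. -/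
open MeasureTheory ProbabilityTheory

section Stmt14AuxSection
open Real Set Filter Topology

namespace Stmt14Aux

lemma gammaMeasure_nonpos {a r : ℝ} : gammaMeasure a r {x : ℝ | x ≤ 0} = 0 := by
  have h2 : {x : ℝ | x ≤ 0} = Iio (0:ℝ) ∪ {0} := by
    rw [Iio_union_right]; rfl
  have hA : gammaMeasure a r (Iio 0) = 0 := by
    rw [gammaMeasure, withDensity_apply _ measurableSet_Iio]
    exact lintegral_gammaPDF_of_nonpos le_rfl
  have hB : gammaMeasure a r {0} = 0 := by
    rw [gammaMeasure, withDensity_apply _ (measurableSet_singleton 0)]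
    exact setLIntegral_measure_zero _ _ (measure_singleton 0)
  refine le_antisymm ?_ zero_le
  rw [h2]
  refine le_trans (measure_union_le _ _) ?_
  simp [hA, hB]

lemma gammaMeasure_ae_pos {a r : ℝ} : ∀ᵐ x ∂gammaMeasure a r, 0 < x := by
  rw [ae_iff]
  have : {x : ℝ | ¬ 0 < x} = {x : ℝ | x ≤ 0} := by ext x; simp
  rw [this]
  exact gammaMeasure_nonpos

lemma measurable_gammaPDF (a r : ℝ) : Measurable (gammaPDF a r) :=
  (measurable_gammaPDFReal a r).ennreal_ofReal

lemma gamma_lintegral_exp {a s : ℝ} (ha : 0 < a) (hs : 0 ≤ s) :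
    ∫⁻ t, ENNReal.ofReal (Real.exp (-(s * t))) ∂gammaMeasure a 1 =
      ENNReal.ofReal ((1 + s) ^ (-a)) := by
  have h1s : (0:ℝ) < 1 + s := by linarith
  have hmeas : Measurable fun t : ℝ => ENNReal.ofReal (Real.exp (-(s * t))) :=
    ((measurable_const_mul s).neg.exp).ennreal_ofReal
  rw [gammaMeasure, lintegral_withDensity_eq_lintegral_mul _ (measurable_gammaPDF a 1) hmeas]
  have key : ∀ t : ℝ, (gammaPDF a 1 * fun t => ENNReal.ofReal (Real.exp (-(s * t)))) t
      = ENNReal.ofReal ((1 + s) ^ (-a)) * gammaPDF a (1 + s) t := by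
    intro t
    simp only [Pi.mul_apply, gammaPDF_eq]
    split_ifs with ht
    · rw [← ENNReal.ofReal_mul (by positivity), ← ENNReal.ofReal_mul (by positivity)]
      congr 1
      have h2 : ((1:ℝ) + s) ^ (-a) * (1 + s) ^ a = 1 := by
        rw [← Real.rpow_add h1s]; simp
      have h3 : Real.exp (-((1+s)*t)) = Real.exp (-(1*t)) * Real.exp (-(s*t)) := by
        rw [← Real.exp_add]; ring_nf
      rw [Real.one_rpow, h3]
      linear_combination (-(t ^ (a - 1) * Real.exp (-(1*t)) * Real.exp (-(s * t))) / Real.Gamma a) * h2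
    · simp
  simp_rw [key]
  rw [lintegral_const_mul _ (measurable_gammaPDF a (1+s)), lintegral_gammaPDF_eq_one ha h1s,
    mul_one]

lemma gamma_integral_exp {a s : ℝ} (ha : 0 < a) (hs : 0 ≤ s) :
    ∫ t, Real.exp (-(s * t)) ∂gammaMeasure a 1 = (1 + s) ^ (-a) := by
  rw [integral_eq_lintegral_of_nonneg_ae (f := fun t => Real.exp (-(s * t))) (ae_of_all _ fun t => (Real.exp_pos _).le)
    ((measurable_const_mul s).neg.exp.aestronglyMeasurable)]
  rw [gamma_lintegral_exp ha hs, ENNReal.toReal_ofReal (Real.rpow_nonneg (by linarith) _)]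

lemma gammaPDF_scale {a r c : ℝ} (hr : 0 < r) (hc : 0 < c) (x : ℝ) :
    gammaPDF a r x = ENNReal.ofReal c * gammaPDF a (r / c) (c * x) := by
  rw [gammaPDF_eq, gammaPDF_eq, ← ENNReal.ofReal_mul hc.le]
  congr 1
  by_cases hx : 0 ≤ x
  · rw [if_pos hx, if_pos (by positivity)]
    rw [Real.mul_rpow hc.le hx]
    have h1 : (r / c) * (c * x) = r * x := by field_simp
    rw [h1]
    have h2 : c * (r / c) ^ a * c ^ (a - 1) = r ^ a := by
      rw [Real.div_rpow hr.le hc.le, Real.rpow_sub hc, Real.rpow_one]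
      have hca : (0:ℝ) < c ^ a := Real.rpow_pos_of_pos hc a
      field_simp
    linear_combination (-(x ^ (a - 1) * Real.exp (-(r * x))) / Real.Gamma a) * h2
  · rw [if_neg hx, if_neg (by push_neg at hx ⊢; nlinarith), mul_zero]

lemma gammaMeasure_map_mul {a r c : ℝ} (hr : 0 < r) (hc : 0 < c) :
    Measure.map (fun t => c * t) (gammaMeasure a r) = gammaMeasure a (r / c) := by
  ext s hs
  rw [Measure.map_apply (measurable_const_mul c) hs, gammaMeasure, gammaMeasure,
    withDensity_apply _ (hs.preimage (measurable_const_mul c)), withDensity_apply _ hs]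
  have hind : Measurable (Set.indicator s (gammaPDF a (r / c))) :=
    (measurable_gammaPDF a (r/c)).indicator hs
  have hmap : ∫⁻ y, Set.indicator s (gammaPDF a (r / c)) y ∂(Measure.map (fun x : ℝ => c * x) volume)
      = ∫⁻ x, Set.indicator s (gammaPDF a (r / c)) (c * x) ∂volume :=
    lintegral_map hind (measurable_const_mul c)
  rw [Real.map_volume_mul_left hc.ne', lintegral_smul_measure, smul_eq_mul] at hmap
  calc ∫⁻ x in (fun t : ℝ => c * t) ⁻¹' s, gammaPDF a r x
      = ∫⁻ x, Set.indicator ((fun t : ℝ => c * t) ⁻¹' s) (gammaPDF a r) x := by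
        rw [lintegral_indicator (hs.preimage (measurable_const_mul c))]
    _ = ∫⁻ x, ENNReal.ofReal c * Set.indicator s (gammaPDF a (r / c)) (c * x) := by
        congr 1; funext x
        by_cases hxs : c * x ∈ s
        · rw [Set.indicator_of_mem (by exact hxs) , Set.indicator_of_mem hxs]
          exact gammaPDF_scale hr hc x
        · rw [Set.indicator_of_notMem (by exact hxs), Set.indicator_of_notMem hxs, mul_zero]
    _ = ENNReal.ofReal c * (ENNReal.ofReal |c⁻¹| * ∫⁻ y, Set.indicator s (gammaPDF a (r / c)) y) := by
        rw [lintegral_const_mul' _ _ ENNReal.ofReal_ne_top, hmap]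
    _ = ∫⁻ x in s, gammaPDF a (r / c) x := by
        rw [abs_of_pos (inv_pos.mpr hc), ← mul_assoc, ← ENNReal.ofReal_mul hc.le, mul_inv_cancel₀ hc.ne',
          ENNReal.ofReal_one, one_mul, lintegral_indicator hs]

lemma gammaMeasure_tilt {a u : ℝ} (ha : 0 < a) (hu : 0 ≤ u) :
    (gammaMeasure a 1).withDensity (fun t => ENNReal.ofReal ((1 + u) ^ a * Real.exp (-(u * t))))
      = gammaMeasure a (1 + u) := by
  have h1u : (0:ℝ) < 1 + u := by linarith
  rw [gammaMeasure, gammaMeasure,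
    ← withDensity_mul _ (g := fun t => ENNReal.ofReal ((1 + u) ^ a * Real.exp (-(u * t)))) (measurable_gammaPDF a 1)
      (((measurable_const_mul u).neg.exp.const_mul _).ennreal_ofReal)]
  congr 1
  funext t
  simp only [Pi.mul_apply, gammaPDF_eq]
  split_ifs with ht
  · rw [← ENNReal.ofReal_mul (by positivity)]
    congr 1
    have h3 : Real.exp (-((1+u)*t)) = Real.exp (-(1*t)) * Real.exp (-(u*t)) := by
      rw [← Real.exp_add]; ring_nf
    rw [Real.one_rpow, h3]
    ring
  · simp

lemma lintegral_pi_prod : ∀ {n : ℕ} (κ : Fin n → Measure ℝ), (∀ i, IsProbabilityMeasure (κ i)) →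
    ∀ (g : Fin n → ℝ → ENNReal), (∀ i, Measurable (g i)) →
    ∫⁻ y, ∏ i, g i (y i) ∂Measure.pi κ = ∏ i, ∫⁻ t, g i t ∂κ i := by
  intro n
  induction n with
  | zero =>
    intro κ hκ g hg
    haveI := hκ
    simp [lintegral_const, Measure.pi_univ]
  | succ n ih =>
    intro κ hκ g hg
    haveI := hκ
    have h0 := measurePreserving_piFinSuccAbove κ 0
    have hG : Measurable fun z : ℝ × (Fin n → ℝ) => g 0 z.1 * ∏ j : Fin n, g (Fin.succ j) (z.2 j) := by
      refine (((hg 0).comp measurable_fst).mul ?_)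
      exact Finset.measurable_prod _ fun j _ => (hg _).comp ((measurable_pi_apply j).comp measurable_snd)
    have hcomp := h0.lintegral_comp hG
    have heq : ∀ y : Fin (n+1) → ℝ,
        g 0 ((MeasurableEquiv.piFinSuccAbove (fun _ => ℝ) 0) y).1 *
          ∏ j : Fin n, g (Fin.succ j) (((MeasurableEquiv.piFinSuccAbove (fun _ => ℝ) 0) y).2 j)
        = ∏ i, g i (y i) := by
      intro y
      rw [Fin.prod_univ_succ]
      simp only [MeasurableEquiv.piFinSuccAbove_apply, Fin.zero_succAbove]
      exact congrArg _ (Finset.prod_congr rfl fun j _ => rfl)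
    calc ∫⁻ y, ∏ i, g i (y i) ∂Measure.pi κ
        = ∫⁻ y, g 0 ((MeasurableEquiv.piFinSuccAbove (fun _ => ℝ) 0) y).1 *
            ∏ j : Fin n, g (Fin.succ j) (((MeasurableEquiv.piFinSuccAbove (fun _ => ℝ) 0) y).2 j)
            ∂Measure.pi κ := by
          refine lintegral_congr fun y => (heq y).symm
      _ = ∫⁻ z, g 0 z.1 * ∏ j : Fin n, g (Fin.succ j) (z.2 j)
            ∂((κ 0).prod (Measure.pi fun j : Fin n => κ ((0:Fin (n+1)).succAbove j))) := hcomp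
      _ = (∫⁻ t, g 0 t ∂κ 0) * ∏ j : Fin n, ∫⁻ t, g (Fin.succ j) t ∂κ (Fin.succ j) := by
          rw [lintegral_prod_mul (f := g 0) (g := fun v : Fin n → ℝ => ∏ j, g (Fin.succ j) (v j))
            ((hg 0).aemeasurable)
            ((Finset.measurable_prod _ fun j _ => (hg _).comp (measurable_pi_apply j)).aemeasurable)]
          congr 1
          have := ih (fun j : Fin n => κ ((0:Fin (n+1)).succAbove j)) (fun j => hκ _)
            (fun j => g (Fin.succ j)) (fun j => hg _)
          simpa [Fin.succAbove] using this
      _ = ∏ i, ∫⁻ t, g i t ∂κ i := (Fin.prod_univ_succ fun i => ∫⁻ t, g i t ∂κ i).symm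


lemma pi_gamma_tilt {m : ℕ} (θs : Fin m → ℝ) (hθs : ∀ i, 0 < θs i) {u : ℝ} (hu : 0 ≤ u) :
    Measure.pi (fun i => gammaMeasure (θs i) (1 + u)) =
      (Measure.pi (fun i => gammaMeasure (θs i) 1)).withDensity
        (fun y => ∏ i, ENNReal.ofReal ((1 + u) ^ (θs i) * Real.exp (-(u * y i)))) := by
  have h1u : (0:ℝ) < 1 + u := by linarith
  haveI h1 : ∀ i, IsProbabilityMeasure (gammaMeasure (θs i) 1) :=
    fun i => isProbabilityMeasure_gammaMeasure (hθs i) one_pos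
  haveI h2 : ∀ i, IsProbabilityMeasure (gammaMeasure (θs i) (1 + u)) :=
    fun i => isProbabilityMeasure_gammaMeasure (hθs i) h1u
  have hfm : ∀ i : Fin m, Measurable (fun t : ℝ =>
      ENNReal.ofReal ((1 + u) ^ (θs i) * Real.exp (-(u * t)))) :=
    fun i => ((measurable_const_mul u).neg.exp.const_mul _).ennreal_ofReal
  refine Measure.pi_eq fun s hs => ?_
  rw [withDensity_apply _ (MeasurableSet.univ_pi hs),
    ← lintegral_indicator (MeasurableSet.univ_pi hs)]
  have hind : ∀ y : Fin m → ℝ,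
      Set.indicator (Set.pi Set.univ s)
        (fun y => ∏ i, ENNReal.ofReal ((1 + u) ^ (θs i) * Real.exp (-(u * y i)))) y
      = ∏ i, Set.indicator (s i)
          (fun t => ENNReal.ofReal ((1 + u) ^ (θs i) * Real.exp (-(u * t)))) (y i) := by
    intro y
    by_cases hy : y ∈ Set.pi Set.univ s
    · rw [Set.indicator_of_mem hy]
      exact Finset.prod_congr rfl fun i _ =>
        (Set.indicator_of_mem (hy i (Set.mem_univ i))
          (fun t => ENNReal.ofReal ((1 + u) ^ (θs i) * Real.exp (-(u * t))))).symm
    · rw [Set.indicator_of_notMem hy]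
      rw [Set.mem_pi] at hy
      push_neg at hy
      obtain ⟨i, _, hi⟩ := hy
      exact (Finset.prod_eq_zero (Finset.mem_univ i)
        (Set.indicator_of_notMem hi _)).symm
  simp_rw [hind]
  rw [lintegral_pi_prod _ h1 _ (fun i => (hfm i).indicator (hs i))]
  refine Finset.prod_congr rfl fun i _ => ?_
  rw [lintegral_indicator (hs i), ← withDensity_apply _ (hs i), gammaMeasure_tilt (hθs i) hu]

lemma star_lemma {m : ℕ} (θs : Fin m → ℝ) (hθs : ∀ i, 0 < θs i) (θ : ℝ) (hθ : θ = ∑ i, θs i)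
    {u : ℝ} (hu : 0 ≤ u) {B : Set (Fin m → ℝ)} (hB : MeasurableSet B)
    (hBinv : (fun y (i : Fin m) => (1 + u)⁻¹ * y i) ⁻¹' B = B) :
    ∫⁻ y in B, ENNReal.ofReal (Real.exp (-(u * ∑ i, y i)))
        ∂(Measure.pi fun i => gammaMeasure (θs i) 1)
      = ENNReal.ofReal ((1 + u) ^ (-θ)) * (Measure.pi fun i => gammaMeasure (θs i) 1) B := by
  have h1u : (0:ℝ) < 1 + u := by linarith
  haveI h1 : ∀ i, IsProbabilityMeasure (gammaMeasure (θs i) 1) :=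
    fun i => isProbabilityMeasure_gammaMeasure (hθs i) one_pos
  haveI h2 : ∀ i, IsProbabilityMeasure (gammaMeasure (θs i) (1 + u)) :=
    fun i => isProbabilityMeasure_gammaMeasure (hθs i) h1u
  set ν := Measure.pi fun i => gammaMeasure (θs i) 1 with hν
  set ν' := Measure.pi fun i => gammaMeasure (θs i) (1 + u) with hν'
  -- scaling
  have hmp : MeasurePreserving (fun (y : Fin m → ℝ) (i : Fin m) => (1 + u)⁻¹ * y i) ν ν' := by
    refine measurePreserving_pi _ _ fun i => ?_
    refine ⟨measurable_const_mul _, ?_⟩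
    rw [gammaMeasure_map_mul one_pos (inv_pos.mpr h1u)]
    congr 1
    field_simp
  have hscale : ν' B = ν B := by
    rw [← hmp.map_eq, Measure.map_apply hmp.measurable hB, hBinv]
  -- tilt
  have htilt : ν' B = ENNReal.ofReal ((1 + u) ^ θ) *
      ∫⁻ y in B, ENNReal.ofReal (Real.exp (-(u * ∑ i, y i))) ∂ν := by
    rw [hν', pi_gamma_tilt θs hθs hu, ← hν, withDensity_apply _ hB]
    have hkey : ∀ y : Fin m → ℝ,
        (∏ i, ENNReal.ofReal ((1 + u) ^ (θs i) * Real.exp (-(u * y i))))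
        = ENNReal.ofReal ((1 + u) ^ θ) * ENNReal.ofReal (Real.exp (-(u * ∑ i, y i))) := by
      intro y
      have e1 : ∀ i : Fin m, ENNReal.ofReal ((1 + u) ^ (θs i) * Real.exp (-(u * y i)))
          = ENNReal.ofReal ((1 + u) ^ (θs i)) * ENNReal.ofReal (Real.exp (-(u * y i))) :=
        fun i => ENNReal.ofReal_mul (by positivity)
      simp_rw [e1]
      rw [Finset.prod_mul_distrib, ← ENNReal.ofReal_prod_of_nonneg
        (fun i _ => by positivity), ← ENNReal.ofReal_prod_of_nonneg
        (fun i _ => (Real.exp_pos _).le)]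
      congr 2
      · rw [hθ]
        have : ∀ i : Fin m, (1 + u) ^ (θs i) = Real.exp (Real.log (1 + u) * θs i) :=
          fun i => Real.rpow_def_of_pos h1u _
        simp_rw [this, ← Real.exp_sum, ← Finset.mul_sum]
        exact (Real.rpow_def_of_pos h1u _).symm
      · rw [← Real.exp_sum]
        congr 1
        rw [Finset.mul_sum]
        simp
    simp_rw [hkey]
    rw [lintegral_const_mul' _ _ ENNReal.ofReal_ne_top]
  -- combine
  have hfin : ν B = ENNReal.ofReal ((1 + u) ^ θ) *
      ∫⁻ y in B, ENNReal.ofReal (Real.exp (-(u * ∑ i, y i))) ∂ν := by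
    rw [← hscale, htilt]
  rw [hfin, ← mul_assoc, ← ENNReal.ofReal_mul (Real.rpow_nonneg h1u.le _),
    ← Real.rpow_add h1u]
  simp

noncomputable def Sf {m : ℕ} (y : Fin m → ℝ) : ℝ := ∑ k, y k

noncomputable def Mf {m : ℕ} (x : Fin m → ℝ) (y : Fin m → ℝ) : ℝ :=
  ∑ i, x i * (y i / Sf y)

noncomputable def Nf {m : ℕ} (x : Fin m → ℝ) (y : Fin m → ℝ) : ℝ := max (Mf x y) 0

noncomputable def Qn {m : ℕ} (x : Fin m → ℝ) (n : ℕ) (y : Fin m → ℝ) : ℝ :=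
  (⌊(2:ℝ) ^ n * Nf x y⌋ : ℝ) / 2 ^ n

lemma ae_pi_pos {m : ℕ} (θs : Fin m → ℝ) (hθs : ∀ i, 0 < θs i) :
    ∀ᵐ y ∂(Measure.pi fun i => gammaMeasure (θs i) 1), ∀ i, 0 < y i := by
  haveI h1 : ∀ i, IsProbabilityMeasure (gammaMeasure (θs i) 1) :=
    fun i => isProbabilityMeasure_gammaMeasure (hθs i) one_pos
  rw [ae_iff]
  have hsub : {y : Fin m → ℝ | ¬ ∀ i, 0 < y i} ⊆ ⋃ i, {y : Fin m → ℝ | y i ≤ 0} := by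
    intro y hy
    simp only [Set.mem_setOf_eq, not_forall, not_lt] at hy
    obtain ⟨i, hi⟩ := hy
    exact Set.mem_iUnion.mpr ⟨i, hi⟩
  refine measure_mono_null hsub (measure_iUnion_null fun i => ?_)
  have hbox : {y : Fin m → ℝ | y i ≤ 0}
      = Set.pi Set.univ (fun j => if j = i then Set.Iic 0 else Set.univ) := by
    ext y
    simp only [Set.mem_setOf_eq, Set.mem_pi, Set.mem_univ, forall_true_left]
    constructor
    · intro h j
      by_cases hj : j = i
      · subst hj; simp [h]
      · simp [hj]
    · intro h
      have := h i
      simpa using this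
  rw [hbox, Measure.pi_pi]
  refine Finset.prod_eq_zero (Finset.mem_univ i) ?_
  simp only [if_pos rfl]
  exact gammaMeasure_nonpos


lemma main_nu {m : ℕ} (hm : 1 ≤ m) (θs : Fin m → ℝ) (hθs : ∀ i, 0 < θs i)
    (θ : ℝ) (hθ : θ = ∑ i, θs i) (x : Fin m → ℝ) (hx : ∀ i, 0 ≤ x i)
    (l : ℝ) (hl : 0 ≤ l) :
    ∫⁻ y : Fin m → ℝ, ENNReal.ofReal ((1 + l * Mf x y) ^ (-θ))
        ∂(Measure.pi fun i => gammaMeasure (θs i) 1)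
      = ∏ i, ENNReal.ofReal ((1 + l * x i) ^ (-(θs i))) := by
  classical
  have hFm : Nonempty (Fin m) := ⟨⟨0, hm⟩⟩
  have hθpos : 0 < θ := by
    rw [hθ]; exact Finset.sum_pos (fun i _ => hθs i) Finset.univ_nonempty
  haveI h1 : ∀ i, IsProbabilityMeasure (gammaMeasure (θs i) 1) :=
    fun i => isProbabilityMeasure_gammaMeasure (hθs i) one_pos
  set ν := Measure.pi fun i => gammaMeasure (θs i) 1 with hν
  haveI hνP : IsProbabilityMeasure ν := ⟨by rw [hν, Measure.pi_univ]; simp⟩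
  -- measurability
  have hSfm : Measurable (Sf (m := m)) :=
    Finset.measurable_sum _ fun i _ => measurable_pi_apply i
  have hMfm : Measurable (Mf x) :=
    Finset.measurable_sum _ fun i _ => ((measurable_pi_apply i).div hSfm).const_mul (x i)
  have hNm : Measurable (Nf x) := hMfm.max measurable_const
  have hN0 : ∀ y, 0 ≤ Nf x y := fun y => le_max_right _ _
  have h2n : ∀ n : ℕ, (0:ℝ) < 2 ^ n := fun n => pow_pos two_pos n
  have hfloorm : ∀ n : ℕ, Measurable fun y : Fin m → ℝ => ⌊(2:ℝ) ^ n * Nf x y⌋ :=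
    fun n => Int.measurable_floor.comp (hNm.const_mul _)
  have hQnm : ∀ n, Measurable (Qn x n) := by
    intro n
    have : Measurable fun y : Fin m → ℝ => ((⌊(2:ℝ) ^ n * Nf x y⌋ : ℤ) : ℝ) :=
      measurable_from_top.comp (hfloorm n)
    exact this.div_const _
  have hQ0 : ∀ n y, 0 ≤ Qn x n y := by
    intro n y
    refine div_nonneg ?_ (h2n n).le
    exact_mod_cast Int.floor_nonneg.mpr (mul_nonneg (h2n n).le (hN0 y))
  have hQle : ∀ n y, Qn x n y ≤ Nf x y := by
    intro n y
    rw [Qn, div_le_iff₀ (h2n n), mul_comm]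
    exact Int.floor_le _
  have hQgt : ∀ n y, Nf x y - ((2:ℝ) ^ n)⁻¹ ≤ Qn x n y := by
    intro n y
    rw [Qn, le_div_iff₀ (h2n n)]
    have := Int.sub_one_lt_floor ((2:ℝ) ^ n * Nf x y)
    have h := (h2n n).ne'
    nlinarith [this, inv_mul_cancel₀ (h2n n).ne']
  have hQtend : ∀ y, Filter.Tendsto (fun n => Qn x n y) Filter.atTop (nhds (Nf x y)) := by
    intro y
    have hlow : Filter.Tendsto (fun n : ℕ => Nf x y - ((2:ℝ) ^ n)⁻¹) Filter.atTop
        (nhds (Nf x y)) := by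
      have h2 : Filter.Tendsto (fun n : ℕ => ((2:ℝ) ^ n)⁻¹) Filter.atTop (nhds 0) :=
        tendsto_inv_atTop_zero.comp (tendsto_pow_atTop_atTop_of_one_lt one_lt_two)
      simpa using tendsto_const_nhds.sub h2
    exact tendsto_of_tendsto_of_tendsto_of_le_of_le hlow tendsto_const_nhds
      (fun n => hQgt n y) (fun n => hQle n y)
  -- good set
  have hGm : MeasurableSet {y : Fin m → ℝ | ∀ i, 0 < y i} := by
    have : {y : Fin m → ℝ | ∀ i, 0 < y i} = ⋂ i, {y : Fin m → ℝ | 0 < y i} := by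
      ext y; simp
    rw [this]
    exact MeasurableSet.iInter fun i => measurableSet_lt measurable_const (measurable_pi_apply i)
  have haeG : ∀ᵐ y ∂ν, ∀ i, 0 < y i := by
    rw [hν]; exact ae_pi_pos θs hθs
  have hSpos : ∀ y : Fin m → ℝ, (∀ i, 0 < y i) → 0 < Sf y :=
    fun y hy => Finset.sum_pos (fun i _ => hy i) Finset.univ_nonempty
  have hMf0 : ∀ y : Fin m → ℝ, (∀ i, 0 < y i) → 0 ≤ Mf x y := fun y hy =>
    Finset.sum_nonneg fun i _ => mul_nonneg (hx i) (div_nonneg (hy i).le (hSpos y hy).le)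
  have hNG : ∀ y : Fin m → ℝ, (∀ i, 0 < y i) → Nf x y = Mf x y :=
    fun y hy => max_eq_left (hMf0 y hy)
  have hMS : ∀ y : Fin m → ℝ, (∀ i, 0 < y i) → Mf x y * Sf y = ∑ i, x i * y i := by
    intro y hy
    have h : Mf x y = (∑ i, x i * y i) / Sf y := by
      rw [Mf, Finset.sum_div]
      exact Finset.sum_congr rfl fun i _ => (mul_div_assoc _ _ _).symm
    rw [h, div_mul_cancel₀ _ (hSpos y hy).ne']
  -- scale invariance of Nf
  have hNs : ∀ (c : ℝ), c ≠ 0 → ∀ y : Fin m → ℝ, Nf x (fun i => c * y i) = Nf x y := by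
    intro c hc y
    have h1 : Sf (fun i => c * y i) = c * Sf y := by
      rw [Sf, Sf, Finset.mul_sum]
    have h2 : Mf x (fun i => c * y i) = Mf x y := by
      rw [Mf, Mf]
      refine Finset.sum_congr rfl fun i _ => ?_
      rw [h1, mul_div_mul_left _ _ hc]
    rw [Nf, Nf, h2]
  -- partition sets
  have hstep : ∀ n : ℕ,
      ∫⁻ y, ENNReal.ofReal ((1 + l * Qn x n y) ^ (-θ)) ∂ν
        = ∫⁻ y, ENNReal.ofReal (Real.exp (-(l * Qn x n y * Sf y))) ∂ν := by
    intro n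
    set A : ℤ → Set (Fin m → ℝ) := fun k => {y | ⌊(2:ℝ) ^ n * Nf x y⌋ = k} with hA
    have hAm : ∀ k, MeasurableSet (A k) := fun k => (hfloorm n) (measurableSet_singleton k)
    have hAdis : Pairwise (Function.onFun Disjoint A) := by
      intro k k' hkk'
      rw [Function.onFun, Set.disjoint_left]
      intro y hy hy'
      exact hkk' (hy.symm.trans hy')
    have hAun : (⋃ k : ℤ, A k) = Set.univ := by
      ext y; simp only [Set.mem_iUnion, Set.mem_univ, iff_true]
      exact ⟨_, rfl⟩
    have hQA : ∀ (k : ℤ) (y : Fin m → ℝ), y ∈ A k → Qn x n y = (k : ℝ) / 2 ^ n := by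
      intro k y hy
      rw [Qn, hy]
    have hAneg : ∀ k : ℤ, k < 0 → A k = ∅ := by
      intro k hk
      ext y
      simp only [hA, Set.mem_setOf_eq, Set.mem_empty_iff_false, iff_false]
      intro h
      have : (0:ℤ) ≤ ⌊(2:ℝ) ^ n * Nf x y⌋ :=
        Int.floor_nonneg.mpr (mul_nonneg (h2n n).le (hN0 y))
      omega
    have hAinv : ∀ (k : ℤ) (c : ℝ), c ≠ 0 →
        (fun (y : Fin m → ℝ) (i : Fin m) => c * y i) ⁻¹' (A k) = A k := by
      intro k c hc
      ext y
      simp only [hA, Set.mem_preimage, Set.mem_setOf_eq]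
      rw [hNs c hc y]
    calc ∫⁻ y, ENNReal.ofReal ((1 + l * Qn x n y) ^ (-θ)) ∂ν
        = ∑' k : ℤ, ∫⁻ y in A k, ENNReal.ofReal ((1 + l * Qn x n y) ^ (-θ)) ∂ν := by
          rw [← lintegral_iUnion hAm hAdis, hAun, Measure.restrict_univ]
      _ = ∑' k : ℤ, ENNReal.ofReal ((1 + l * ((k:ℝ)/2^n)) ^ (-θ)) * ν (A k) := by
          refine tsum_congr fun k => ?_
          rw [setLIntegral_congr_fun (hAm k)
            (fun y hy => by rw [hQA k y hy])]
          exact setLIntegral_const _ _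
      _ = ∑' k : ℤ, ∫⁻ y in A k, ENNReal.ofReal (Real.exp (-(l * Qn x n y * Sf y))) ∂ν := by
          refine tsum_congr fun k => ?_
          rcases lt_or_ge k 0 with hk | hk
          · rw [hAneg k hk]
            simp
          · have hu : 0 ≤ l * ((k:ℝ)/2^n) :=
              mul_nonneg hl (div_nonneg (by exact_mod_cast hk) (h2n n).le)
            have h1u : (0:ℝ) < 1 + l * ((k:ℝ)/2^n) := by linarith
            have hcong : ∫⁻ y in A k, ENNReal.ofReal (Real.exp (-(l * Qn x n y * Sf y))) ∂ν
                = ∫⁻ y in A k, ENNReal.ofReal (Real.exp (-(l * ((k:ℝ)/2^n) * ∑ i, y i))) ∂ν :=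
              setLIntegral_congr_fun (hAm k) (fun y hy => by
                rw [hQA k y hy]; rfl)
            rw [hcong]
            exact (star_lemma θs hθs θ hθ hu (hAm k) (hAinv k _ (inv_ne_zero h1u.ne'))).symm
      _ = ∫⁻ y, ENNReal.ofReal (Real.exp (-(l * Qn x n y * Sf y))) ∂ν := by
          rw [← lintegral_iUnion hAm hAdis, hAun, Measure.restrict_univ]
  -- limits
  have hmeas1 : ∀ n : ℕ, Measurable fun y => ENNReal.ofReal ((1 + l * Qn x n y) ^ (-θ)) :=
    fun n => ((measurable_const.add ((hQnm n).const_mul l)).pow measurable_const).ennreal_ofReal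
  have htend1 : Filter.Tendsto (fun n => ∫⁻ y, ENNReal.ofReal ((1 + l * Qn x n y) ^ (-θ)) ∂ν)
      Filter.atTop (nhds (∫⁻ y, ENNReal.ofReal ((1 + l * Nf x y) ^ (-θ)) ∂ν)) := by
    refine tendsto_lintegral_of_dominated_convergence (fun _ => 1) hmeas1
      (fun n => ae_of_all _ fun y => ?_) (by simp) (ae_of_all _ fun y => ?_)
    · exact ENNReal.ofReal_le_one.mpr (Real.rpow_le_one_of_one_le_of_nonpos
        (by nlinarith [mul_nonneg hl (hQ0 n y)]) (by linarith))
    · have h0 : (0:ℝ) < 1 + l * Nf x y := by nlinarith [mul_nonneg hl (hN0 y)]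
      have hc1 : ContinuousAt (fun t : ℝ => 1 + l * t) (Nf x y) :=
        (continuous_const.add (continuous_const.mul continuous_id)).continuousAt
      have hc2 : ContinuousAt (fun t : ℝ => (1 + l * t) ^ (-θ)) (Nf x y) :=
        hc1.rpow_const (Or.inl h0.ne')
      have h' := Filter.Tendsto.comp (ENNReal.continuous_ofReal.continuousAt.comp hc2)
        (hQtend y)
      exact h'
  have hmeas2 : ∀ n : ℕ, Measurable fun y => ENNReal.ofReal (Real.exp (-(l * Qn x n y * Sf y))) :=
    fun n => ((((hQnm n).const_mul l).mul hSfm).neg.exp).ennreal_ofReal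
  have htend2 : Filter.Tendsto
      (fun n => ∫⁻ y, ENNReal.ofReal (Real.exp (-(l * Qn x n y * Sf y))) ∂ν)
      Filter.atTop (nhds (∫⁻ y, ENNReal.ofReal (Real.exp (-(l * Nf x y * Sf y))) ∂ν)) := by
    refine tendsto_lintegral_of_dominated_convergence (fun _ => 1) hmeas2 ?_ (by simp) ?_
    · intro n
      filter_upwards [haeG] with y hy
      exact ENNReal.ofReal_le_one.mpr (Real.exp_le_one_iff.mpr
        (neg_nonpos.mpr (mul_nonneg (mul_nonneg hl (hQ0 n y)) (hSpos y hy).le)))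
    · refine ae_of_all _ fun y => ?_
      have hc : Continuous (fun t : ℝ => ENNReal.ofReal (Real.exp (-(l * t * Sf y)))) :=
        ENNReal.continuous_ofReal.comp
          (Real.continuous_exp.comp (((continuous_const.mul continuous_id).mul
            continuous_const).neg))
      have h' := Filter.Tendsto.comp (hc.tendsto (Nf x y)) (hQtend y)
      exact h'
  have hkey : ∫⁻ y, ENNReal.ofReal ((1 + l * Nf x y) ^ (-θ)) ∂ν
      = ∫⁻ y, ENNReal.ofReal (Real.exp (-(l * Nf x y * Sf y))) ∂ν := by
    refine tendsto_nhds_unique ?_ htend2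
    have h := htend1
    simp_rw [hstep] at h
    exact h
  calc ∫⁻ y, ENNReal.ofReal ((1 + l * Mf x y) ^ (-θ)) ∂ν
      = ∫⁻ y, ENNReal.ofReal ((1 + l * Nf x y) ^ (-θ)) ∂ν := by
        refine lintegral_congr_ae ?_
        filter_upwards [haeG] with y hy
        rw [hNG y hy]
    _ = ∫⁻ y, ENNReal.ofReal (Real.exp (-(l * Nf x y * Sf y))) ∂ν := hkey
    _ = ∫⁻ y, ENNReal.ofReal (Real.exp (-(l * ∑ i, x i * y i))) ∂ν := by
        refine lintegral_congr_ae ?_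
        filter_upwards [haeG] with y hy
        rw [hNG y hy, mul_assoc, hMS y hy]
    _ = ∫⁻ y, ∏ i, ENNReal.ofReal (Real.exp (-(l * x i * y i))) ∂ν := by
        refine lintegral_congr fun y => ?_
        rw [← ENNReal.ofReal_prod_of_nonneg (fun i _ => (Real.exp_pos _).le), ← Real.exp_sum]
        congr 2
        rw [Finset.mul_sum, ← Finset.sum_neg_distrib]
        exact Finset.sum_congr rfl fun i _ => by ring
    _ = ∏ i, ∫⁻ t, ENNReal.ofReal (Real.exp (-(l * x i * t))) ∂gammaMeasure (θs i) 1 := by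
        rw [hν]
        exact lintegral_pi_prod _ h1 _
          fun i => ((measurable_id.const_mul _).neg.exp).ennreal_ofReal
    _ = ∏ i, ENNReal.ofReal ((1 + l * x i) ^ (-(θs i))) := by
        refine Finset.prod_congr rfl fun i _ => ?_
        exact gamma_lintegral_exp (hθs i) (mul_nonneg hl (hx i))


end Stmt14Aux


end Stmt14AuxSection

open Stmt14Aux

/-- Von Neumann–Watson transform of a finite Dirichlet mean: for
`(P_1,…,P_m) ~ Dirichlet(θ_1,…,θ_m)` (normalized independent gamma variables), fixed
nonnegative `x_1,…,x_m` and `λ ≥ 0`,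
`E[(1 + λ ∑ x_i P_i)^{-θ}] = ∏ (1 + λ x_i)^{-θ_i}`, and for `γ ~ Gamma(θ)` independent of
`(P_1,…,P_m)`, `E[exp(-λ γ ∑ x_i P_i)]` equals the same product. -/
theorem stmt14 {Ω : Type*} [MeasurableSpace Ω] (μ : Measure Ω) [IsProbabilityMeasure μ]
    (m : ℕ) (hm : 1 ≤ m) (θs : Fin m → ℝ) (hθs : ∀ i, 0 < θs i)
    (θ : ℝ) (hθ : θ = ∑ i, θs i)
    (γs : Fin m → Ω → ℝ) (hγsmeas : ∀ i, Measurable (γs i))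
    (hγsindep : iIndepFun γs μ)
    (hγslaw : ∀ i, Measure.map (γs i) μ = gammaMeasure (θs i) 1)
    (P : Fin m → Ω → ℝ) (hP : ∀ i ω, P i ω = γs i ω / ∑ k, γs k ω)
    (γ : Ω → ℝ) (hγmeas : Measurable γ)
    (hγlaw : Measure.map γ μ = gammaMeasure θ 1)
    (hγindep : IndepFun γ (fun ω => fun i => P i ω) μ)
    (x : Fin m → ℝ) (hx : ∀ i, 0 ≤ x i) (l : ℝ) (hl : 0 ≤ l) :
    ∫ ω, (1 + l * ∑ i, x i * P i ω) ^ (-θ) ∂μ = ∏ i, (1 + l * x i) ^ (-(θs i)) ∧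
    ∫ ω, Real.exp (-(l * γ ω * ∑ i, x i * P i ω)) ∂μ =
      ∏ i, (1 + l * x i) ^ (-(θs i)) := by
  classical
  have hFm : Nonempty (Fin m) := ⟨⟨0, hm⟩⟩
  have hθpos : 0 < θ := by
    rw [hθ]; exact Finset.sum_pos (fun i _ => hθs i) Finset.univ_nonempty
  haveI h1 : ∀ i, IsProbabilityMeasure (gammaMeasure (θs i) 1) :=
    fun i => isProbabilityMeasure_gammaMeasure (hθs i) one_pos
  haveI h2 : IsProbabilityMeasure (gammaMeasure θ 1) := isProbabilityMeasure_gammaMeasure hθpos one_pos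
  set ν := Measure.pi fun i => gammaMeasure (θs i) 1 with hν
  set γvec : Ω → (Fin m → ℝ) := fun ω i => γs i ω with hγvec
  have hγvecmeas : Measurable γvec := measurable_pi_iff.mpr hγsmeas
  have hmap : Measure.map γvec μ = ν := by
    rw [hν]
    refine (Measure.pi_eq fun s hs => ?_).symm
    rw [Measure.map_apply hγvecmeas (MeasurableSet.univ_pi hs)]
    have hpre : γvec ⁻¹' Set.pi Set.univ s = ⋂ i ∈ Finset.univ, γs i ⁻¹' s i := by
      ext ω
      simp [hγvec, Set.mem_pi]
    rw [hpre, hγsindep.measure_inter_preimage_eq_mul Finset.univ (fun i _ => hs i)]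
    exact Finset.prod_congr rfl fun i _ => by
      rw [← hγslaw i, Measure.map_apply (hγsmeas i) (hs i)]
  have haeΩ : ∀ᵐ ω ∂μ, ∀ i, 0 < γs i ω := by
    rw [ae_all_iff]
    intro i
    have h : ∀ᵐ t ∂(Measure.map (γs i) μ), 0 < t := by
      rw [hγslaw i]; exact gammaMeasure_ae_pos
    exact (ae_map_iff (hγsmeas i).aemeasurable measurableSet_Ioi).mp h
  have hPm : ∀ i, Measurable (P i) := by
    intro i
    have h : P i = fun ω => γs i ω / ∑ k, γs k ω := funext (hP i)
    rw [h]
    exact (hγsmeas i).div (Finset.measurable_sum _ fun k _ => hγsmeas k)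
  -- measurability of Mf
  have hSfm : Measurable (Sf (m := m)) :=
    Finset.measurable_sum _ fun i _ => measurable_pi_apply i
  have hMfx : Measurable (Mf x) :=
    Finset.measurable_sum _ fun i _ => ((measurable_pi_apply i).div hSfm).const_mul (x i)
  have hIm : Measurable fun y : Fin m → ℝ => (1 + l * Mf x y) ^ (-θ) :=
    (measurable_const.add (hMfx.const_mul l)).pow measurable_const
  have hMQ : ∀ ω, (∑ i, x i * P i ω) = Mf x (γvec ω) := by
    intro ω
    simp only [Mf, Sf, hγvec]
    refine Finset.sum_congr rfl fun i _ => ?_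
    rw [hP i ω]
  have hpart1 : ∫ ω, (1 + l * ∑ i, x i * P i ω) ^ (-θ) ∂μ
      = ∏ i, (1 + l * x i) ^ (-(θs i)) := by
    calc ∫ ω, (1 + l * ∑ i, x i * P i ω) ^ (-θ) ∂μ
        = ∫ ω, (1 + l * Mf x (γvec ω)) ^ (-θ) ∂μ := by
          refine integral_congr_ae (ae_of_all _ fun ω => ?_)
          simp only [hMQ ω]
      _ = ∫ y, (1 + l * Mf x y) ^ (-θ) ∂(Measure.map γvec μ) :=
          (integral_map hγvecmeas.aemeasurable hIm.aestronglyMeasurable).symm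
      _ = ∫ y, (1 + l * Mf x y) ^ (-θ) ∂ν := by rw [hmap]
      _ = (∫⁻ y, ENNReal.ofReal ((1 + l * Mf x y) ^ (-θ)) ∂ν).toReal := by
          rw [integral_eq_lintegral_of_nonneg_ae ?_ hIm.aestronglyMeasurable]
          rw [hν]
          filter_upwards [ae_pi_pos θs hθs] with y hy
          have hS : 0 < Sf y := Finset.sum_pos (fun i _ => hy i) Finset.univ_nonempty
          have hMf0 : 0 ≤ Mf x y :=
            Finset.sum_nonneg fun i _ =>
              mul_nonneg (hx i) (div_nonneg (hy i).le hS.le)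
          exact Real.rpow_nonneg (by nlinarith [mul_nonneg hl hMf0]) _
      _ = (∏ i, ENNReal.ofReal ((1 + l * x i) ^ (-(θs i)))).toReal := by
          rw [hν, main_nu hm θs hθs θ hθ x hx l hl]
      _ = ∏ i, (1 + l * x i) ^ (-(θs i)) := by
          rw [ENNReal.toReal_prod]
          exact Finset.prod_congr rfl fun i _ =>
            ENNReal.toReal_ofReal (Real.rpow_nonneg (by nlinarith [mul_nonneg hl (hx i)]) _)
  refine ⟨hpart1, ?_⟩
  set Qv : Ω → (Fin m → ℝ) := fun ω i => P i ω with hQv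
  have hQvm : Measurable Qv := measurable_pi_iff.mpr hPm
  set pp := Measure.map Qv μ with hπ
  haveI hπP : IsProbabilityMeasure pp := Measure.isProbabilityMeasure_map hQvm.aemeasurable
  have hjoint : Measure.map (fun ω => (γ ω, Qv ω)) μ = (gammaMeasure θ 1).prod pp := by
    rw [hπ, ← hγlaw]
    exact (indepFun_iff_map_prod_eq_prod_map_map hγmeas.aemeasurable hQvm.aemeasurable).mp
      hγindep
  have hae_s : ∀ᵐ s ∂gammaMeasure θ 1, (0:ℝ) ≤ s :=
    gammaMeasure_ae_pos.mono fun t ht => ht.le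
  have hsummeas : Measurable fun y : Fin m → ℝ => ∑ i, x i * y i :=
    Finset.measurable_sum _ fun i _ => measurable_const.mul (measurable_pi_apply i)
  have hae_y : ∀ᵐ y ∂pp, 0 ≤ ∑ i, x i * y i := by
    rw [hπ, ae_map_iff hQvm.aemeasurable (measurableSet_le measurable_const hsummeas)]
    filter_upwards [haeΩ] with ω hω
    have hS : 0 < ∑ k, γs k ω := Finset.sum_pos (fun k _ => hω k) Finset.univ_nonempty
    refine Finset.sum_nonneg fun i _ => mul_nonneg (hx i) ?_
    simp only [hQv]
    rw [hP i ω]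
    exact div_nonneg (hω i).le hS.le
  have hprod_ae : ∀ᵐ p ∂((gammaMeasure θ 1).prod pp), 0 ≤ p.1 ∧ 0 ≤ ∑ i, x i * p.2 i := by
    rw [ae_iff]
    have hsub : {p : ℝ × (Fin m → ℝ) | ¬ (0 ≤ p.1 ∧ 0 ≤ ∑ i, x i * p.2 i)}
        ⊆ ({s : ℝ | ¬ (0:ℝ) ≤ s} ×ˢ (Set.univ : Set (Fin m → ℝ)))
          ∪ ((Set.univ : Set ℝ) ×ˢ {y : Fin m → ℝ | ¬ 0 ≤ ∑ i, x i * y i}) := by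
      intro p hp
      simp only [Set.mem_setOf_eq, not_and_or] at hp
      simp only [Set.mem_union, Set.mem_prod, Set.mem_univ, and_true, true_and,
        Set.mem_setOf_eq]
      tauto
    have hs0 := ae_iff.mp hae_s
    have hy0 := ae_iff.mp hae_y
    refine measure_mono_null hsub (measure_union_null ?_ ?_)
    · rw [Measure.prod_prod, hs0, zero_mul]
    · rw [Measure.prod_prod, hy0, mul_zero]
  have hFm2 : Measurable fun p : ℝ × (Fin m → ℝ) =>
      Real.exp (-(l * p.1 * ∑ i, x i * p.2 i)) := by
    refine Measurable.exp (Measurable.neg ?_)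
    exact (measurable_fst.const_mul l).mul
      (Finset.measurable_sum _ fun i _ =>
        measurable_const.mul ((measurable_pi_apply i).comp measurable_snd))
  have hFint : Integrable (fun p : ℝ × (Fin m → ℝ) =>
      Real.exp (-(l * p.1 * ∑ i, x i * p.2 i))) ((gammaMeasure θ 1).prod pp) := by
    refine Integrable.mono' (integrable_const 1) hFm2.aestronglyMeasurable ?_
    filter_upwards [hprod_ae] with p hp
    rw [Real.norm_eq_abs, abs_of_pos (Real.exp_pos _)]
    exact Real.exp_le_one_iff.mpr (neg_nonpos.mpr (mul_nonneg (mul_nonneg hl hp.1) hp.2))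
  have hIym : Measurable fun y : Fin m → ℝ => (1 + l * ∑ i, x i * y i) ^ (-θ) :=
    (measurable_const.add (hsummeas.const_mul l)).pow measurable_const
  calc ∫ ω, Real.exp (-(l * γ ω * ∑ i, x i * P i ω)) ∂μ
      = ∫ ω, Real.exp (-(l * (γ ω, Qv ω).1 * ∑ i, x i * (γ ω, Qv ω).2 i)) ∂μ := by
        refine integral_congr_ae (ae_of_all _ fun ω => ?_)
        simp only [hQv]
    _ = ∫ p, Real.exp (-(l * p.1 * ∑ i, x i * p.2 i))
          ∂(Measure.map (fun ω => (γ ω, Qv ω)) μ) :=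
        (integral_map (hγmeas.aemeasurable.prodMk hQvm.aemeasurable)
          hFm2.aestronglyMeasurable).symm
    _ = ∫ p, Real.exp (-(l * p.1 * ∑ i, x i * p.2 i)) ∂((gammaMeasure θ 1).prod pp) := by
        rw [hjoint]
    _ = ∫ y, ∫ s, Real.exp (-(l * s * ∑ i, x i * y i)) ∂gammaMeasure θ 1 ∂pp :=
        integral_prod_symm _ hFint
    _ = ∫ y, (1 + l * ∑ i, x i * y i) ^ (-θ) ∂pp := by
        refine integral_congr_ae ?_
        filter_upwards [hae_y] with y hy
        have harg : (fun s => Real.exp (-(l * s * ∑ i, x i * y i)))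
            = fun s => Real.exp (-((l * ∑ i, x i * y i) * s)) := by
          funext s; ring_nf
        rw [harg, gamma_integral_exp hθpos (mul_nonneg hl hy)]
    _ = ∫ ω, (1 + l * ∑ i, x i * Qv ω i) ^ (-θ) ∂μ := by
        rw [hπ]
        exact integral_map hQvm.aemeasurable hIym.aestronglyMeasurable
    _ = ∏ i, (1 + l * x i) ^ (-(θs i)) := by
        rw [← hpart1]
end
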